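/- arXiv:1510.00129 — 12 statements merged into one kernel-verified Lean document; each statement's English description precedes it below -/
import Mathlib

section
/- Let G be a finite group whose order is neither 1 nor a prime, and let k be the number of distinct prime divisors of |G|. Then the clique number of 𝒫(G) equals k and the chromatic number of 𝒫(G) equals k; in particular 𝒫(G) is weakly χ-perfect (its clique number equals its chromatic number). -/
open SimpleGraph

/-- The coprime graph of subgroups of a group `G`: vertices are the proper nontrivial
subgroups of `G`, and two distinct vertices are adjacent iff their orders are coprime. -/
def coprimeGraph (G : Type*) [Group G] :
    SimpleGraph {H : Subgroup G // H ≠ ⊥ ∧ H ≠ ⊤} where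
  Adj H K := H ≠ K ∧ Nat.Coprime (Nat.card H.1) (Nat.card K.1)
  symm := ⟨fun _ _ h => ⟨h.1.symm, h.2.symm⟩⟩
  loopless := ⟨fun _ h => h.1 rfl⟩

theorem cliqueNum_and_chromaticNumber_coprimeGraph {G : Type*} [Group G] [Finite G]
    (h1 : Nat.card G ≠ 1) (hp : ¬ (Nat.card G).Prime) :
    (coprimeGraph G).cliqueNum = (Nat.card G).primeFactors.card ∧
      (coprimeGraph G).chromaticNumber = ((Nat.card G).primeFactors.card : ℕ∞) := by
  haveI : Fintype {H : Subgroup G // H ≠ ⊥ ∧ H ≠ ⊤} := Fintype.ofFinite _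
  set k := (Nat.card G).primeFactors.card with hk
  have hG0 : Nat.card G ≠ 0 := Nat.card_pos.ne'
  -- each vertex has order ≠ 1, so minFac of its order is a prime factor of |G|
  have hcard1 : ∀ H : {H : Subgroup G // H ≠ ⊥ ∧ H ≠ ⊤}, Nat.card H.1 ≠ 1 := by
    intro H hH
    exact H.2.1 (Subgroup.card_eq_one.mp hH)
  have hmem : ∀ H : {H : Subgroup G // H ≠ ⊥ ∧ H ≠ ⊤},
      (Nat.card H.1).minFac ∈ (Nat.card G).primeFactors := by
    intro H
    rw [Nat.mem_primeFactors]
    exact ⟨Nat.minFac_prime (hcard1 H),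
      (Nat.minFac_dvd _).trans (Subgroup.card_subgroup_dvd_card _), hG0⟩
  -- adjacent vertices have distinct minFacs
  have hadj : ∀ {H K}, (coprimeGraph G).Adj H K →
      (Nat.card H.1).minFac ≠ (Nat.card K.1).minFac := by
    intro H K hHK heq
    have h1' : (Nat.card H.1).minFac ∣ Nat.gcd (Nat.card H.1) (Nat.card K.1) :=
      Nat.dvd_gcd (Nat.minFac_dvd _) (heq ▸ Nat.minFac_dvd _)
    rw [hHK.2] at h1'
    exact (Nat.minFac_prime (hcard1 H)).one_lt.ne' (Nat.eq_one_of_dvd_one h1')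
  -- every clique has card ≤ k
  have hclique_le : ∀ s : Finset {H : Subgroup G // H ≠ ⊥ ∧ H ≠ ⊤},
      (coprimeGraph G).IsClique s → s.card ≤ k := by
    intro s hs
    apply Finset.card_le_card_of_injOn (fun H => (Nat.card H.1).minFac)
      (fun H _ => hmem H)
    intro H hH K hK heq
    by_contra hne
    exact hadj (hs hH hK hne) heq
  -- construct a clique of size k
  have key : ∀ p ∈ (Nat.card G).primeFactors,
      ∃ H : {H : Subgroup G // H ≠ ⊥ ∧ H ≠ ⊤}, Nat.card H.1 = p := by
    intro p hpmem
    have hpp := Nat.prime_of_mem_primeFactors hpmem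
    haveI := Fact.mk hpp
    obtain ⟨g, hg⟩ := exists_prime_orderOf_dvd_card' p (Nat.dvd_of_mem_primeFactors hpmem)
    have hcard : Nat.card (Subgroup.zpowers g) = p := (Nat.card_zpowers g).trans hg
    refine ⟨⟨Subgroup.zpowers g, ?_, ?_⟩, hcard⟩
    · intro hbot
      rw [hbot, Subgroup.card_eq_one.mpr rfl] at hcard
      exact hpp.one_lt.ne hcard
    · intro htop
      rw [htop, Subgroup.card_top] at hcard
      exact hp (hcard ▸ hpp)
  classical
  set f : (Nat.card G).primeFactors → {H : Subgroup G // H ≠ ⊥ ∧ H ≠ ⊤} :=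
    fun p => (key p.1 p.2).choose with hf
  have hfcard : ∀ p, Nat.card (f p).1 = p.1 := fun p => (key p.1 p.2).choose_spec
  have hfinj : Function.Injective f := by
    intro p q hpq
    have := hfcard p
    rw [hpq, hfcard q] at this
    exact Subtype.ext this.symm
  set s : Finset {H : Subgroup G // H ≠ ⊥ ∧ H ≠ ⊤} :=
    (Nat.card G).primeFactors.attach.image f with hsdef
  have hscard : s.card = k := by
    rw [hsdef, Finset.card_image_of_injective _ hfinj, Finset.card_attach]
  have hsclique : (coprimeGraph G).IsClique s := by
    intro a ha b hb hab
    rw [Finset.mem_coe, Finset.mem_image] at ha hb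
    obtain ⟨p, _, hpa⟩ := ha
    obtain ⟨q, _, hqb⟩ := hb
    subst hpa; subst hqb
    have hpq : p ≠ q := fun h => hab (by rw [h])
    refine ⟨hab, ?_⟩
    rw [hfcard p, hfcard q]
    exact (Nat.coprime_primes (Nat.prime_of_mem_primeFactors p.2)
      (Nat.prime_of_mem_primeFactors q.2)).mpr (fun h => hpq (Subtype.ext h))
  -- cliqueNum = k
  have hclique_ge : k ≤ (coprimeGraph G).cliqueNum :=
    hscard ▸ IsClique.card_le_cliqueNum (tc := hsclique)
  have hclnum : (coprimeGraph G).cliqueNum = k := by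
    obtain ⟨t, htc⟩ := (coprimeGraph G).exists_isNClique_cliqueNum
    exact le_antisymm (htc.card_eq ▸ hclique_le t htc.isClique) hclique_ge
  -- coloring with k colors
  have C : (coprimeGraph G).Coloring ((Nat.card G).primeFactors : Finset ℕ) :=
    Coloring.mk (fun H => ⟨(Nat.card H.1).minFac, hmem H⟩)
      (fun h => fun heq => hadj h (congrArg Subtype.val heq))
  have hcolorable : (coprimeGraph G).Colorable k := by
    have := C.colorable
    rwa [Fintype.card_coe] at this
  have hchrom_le : (coprimeGraph G).chromaticNumber ≤ (k : ℕ∞) :=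
    hcolorable.chromaticNumber_le
  have hchrom_ge : (k : ℕ∞) ≤ (coprimeGraph G).chromaticNumber := by
    have := hsclique.card_le_chromaticNumber
    rwa [hscard] at this
  exact ⟨hclnum, le_antisymm hchrom_le hchrom_ge⟩
end

section
/- Let G be a finite group with |G| > 1. Then 𝒫(G) is K_{2,3}-free (contains no copy of the complete bipartite graph K_{2,3}) if and only if one of the following holds: (i) G is a p-group for some prime p; (ii) |G| = p^α · q for distinct primes p, q and some α ≥ 1, and the Sylow q-subgroup of G is normal (equivalently, G has a unique subgroup of order q); (iii) G is cyclic of order p²q² for distinct primes p, q; (iv) G is cyclic of order pqr for pairwise distinct primes p, q, r. -/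
open SimpleGraph

namespace CG
set_option linter.unusedSectionVars false
set_option linter.unusedVariables false
variable {G : Type*} [Group G] [Finite G]

lemma one_lt_card {H : Subgroup G} (h : H ≠ ⊥) : 1 < Nat.card H :=
  (Subgroup.one_lt_card_iff_ne_bot H).mpr h

lemma ne_of_coprime {H K : Subgroup G} (hH : H ≠ ⊥)
    (hc : (Nat.card H).Coprime (Nat.card K)) : H ≠ K := by
  intro hh; subst hh
  have h1 : Nat.card H = 1 := by simpa [Nat.Coprime, Nat.gcd_self] using hc
  exact absurd h1 (Nat.ne_of_gt (one_lt_card hH))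

def HasConfig (G : Type*) [Group G] : Prop :=
  ∃ A₁ A₂ B₁ B₂ B₃ : Subgroup G,
    ((A₁ ≠ ⊥ ∧ A₁ ≠ ⊤) ∧ (A₂ ≠ ⊥ ∧ A₂ ≠ ⊤) ∧ (B₁ ≠ ⊥ ∧ B₁ ≠ ⊤) ∧ (B₂ ≠ ⊥ ∧ B₂ ≠ ⊤) ∧
      (B₃ ≠ ⊥ ∧ B₃ ≠ ⊤)) ∧
    (A₁ ≠ A₂ ∧ B₁ ≠ B₂ ∧ B₁ ≠ B₃ ∧ B₂ ≠ B₃) ∧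
    ((Nat.card A₁).Coprime (Nat.card B₁) ∧ (Nat.card A₁).Coprime (Nat.card B₂) ∧
     (Nat.card A₁).Coprime (Nat.card B₃) ∧ (Nat.card A₂).Coprime (Nat.card B₁) ∧
     (Nat.card A₂).Coprime (Nat.card B₂) ∧ (Nat.card A₂).Coprime (Nat.card B₃))

lemma copy_iff :
    (∃ f : completeBipartiteGraph (Fin 2) (Fin 3) →g coprimeGraph G, Function.Injective f) ↔
      HasConfig G := by
  constructor
  · rintro ⟨f, hf⟩
    have hadj : ∀ (i : Fin 2) (j : Fin 3),
        (coprimeGraph G).Adj (f (Sum.inl i)) (f (Sum.inr j)) :=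
      fun i j => f.map_rel (by simp)
    refine ⟨(f (Sum.inl 0)).1, (f (Sum.inl 1)).1, (f (Sum.inr 0)).1, (f (Sum.inr 1)).1,
      (f (Sum.inr 2)).1, ⟨(f (Sum.inl 0)).2, (f (Sum.inl 1)).2, (f (Sum.inr 0)).2,
        (f (Sum.inr 1)).2, (f (Sum.inr 2)).2⟩, ⟨?_, ?_, ?_, ?_⟩,
      (hadj 0 0).2, (hadj 0 1).2, (hadj 0 2).2, (hadj 1 0).2, (hadj 1 1).2, (hadj 1 2).2⟩
    all_goals
      intro h
      exact absurd (hf (Subtype.ext h)) (by simp)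
  · rintro ⟨A₁, A₂, B₁, B₂, B₃, ⟨hA₁, hA₂, hB₁, hB₂, hB₃⟩, ⟨h12, hb12, hb13, hb23⟩,
      c11, c12, c13, c21, c22, c23⟩
    have x11 : A₁ ≠ B₁ := ne_of_coprime hA₁.1 c11
    have x12 : A₁ ≠ B₂ := ne_of_coprime hA₁.1 c12
    have x13 : A₁ ≠ B₃ := ne_of_coprime hA₁.1 c13
    have x21 : A₂ ≠ B₁ := ne_of_coprime hA₂.1 c21
    have x22 : A₂ ≠ B₂ := ne_of_coprime hA₂.1 c22
    have x23 : A₂ ≠ B₃ := ne_of_coprime hA₂.1 c23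
    have y11 := x11.symm
    have y12 := x12.symm
    have y13 := x13.symm
    have y21 := x21.symm
    have y22 := x22.symm
    have y23 := x23.symm
    have h21 := h12.symm
    have hb21 := hb12.symm
    have hb31 := hb13.symm
    have hb32 := hb23.symm
    let vA : Fin 2 → {H : Subgroup G // H ≠ ⊥ ∧ H ≠ ⊤} := ![⟨A₁, hA₁⟩, ⟨A₂, hA₂⟩]
    let vB : Fin 3 → {H : Subgroup G // H ≠ ⊥ ∧ H ≠ ⊤} := ![⟨B₁, hB₁⟩, ⟨B₂, hB₂⟩, ⟨B₃, hB₃⟩]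
    refine ⟨⟨Sum.elim vA vB, ?_⟩, ?_⟩
    · rintro (i | i) (j | j) h
      · simp at h
      · simp only [Sum.elim_inl, Sum.elim_inr]
        fin_cases i <;> fin_cases j <;>
          first
          | exact ⟨fun hh => x11 (congrArg Subtype.val hh), c11⟩
          | exact ⟨fun hh => x12 (congrArg Subtype.val hh), c12⟩
          | exact ⟨fun hh => x13 (congrArg Subtype.val hh), c13⟩
          | exact ⟨fun hh => x21 (congrArg Subtype.val hh), c21⟩
          | exact ⟨fun hh => x22 (congrArg Subtype.val hh), c22⟩
          | exact ⟨fun hh => x23 (congrArg Subtype.val hh), c23⟩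
      · simp only [Sum.elim_inl, Sum.elim_inr]
        fin_cases i <;> fin_cases j <;>
          first
          | exact ⟨fun hh => y11 (congrArg Subtype.val hh), c11.symm⟩
          | exact ⟨fun hh => y12 (congrArg Subtype.val hh), c12.symm⟩
          | exact ⟨fun hh => y13 (congrArg Subtype.val hh), c13.symm⟩
          | exact ⟨fun hh => y21 (congrArg Subtype.val hh), c21.symm⟩
          | exact ⟨fun hh => y22 (congrArg Subtype.val hh), c22.symm⟩
          | exact ⟨fun hh => y23 (congrArg Subtype.val hh), c23.symm⟩
      · simp at h
    · show Function.Injective (Sum.elim vA vB)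
      rintro (i | i) (j | j) h <;>
        fin_cases i <;> fin_cases j <;> simp [vA, vB, Subtype.ext_iff] at h ⊢ <;> simp_all only [ne_eq, not_true_eq_false]


lemma exists_card_pow {p a : ℕ} (hp : p.Prime) (h : p ^ a ∣ Nat.card G) :
    ∃ H : Subgroup G, Nat.card H = p ^ a := by
  haveI : Fact p.Prime := ⟨hp⟩
  exact Sylow.exists_subgroup_card_pow_prime p h

lemma exists_card_prime {p : ℕ} (hp : p.Prime) (h : p ∣ Nat.card G) :
    ∃ H : Subgroup G, Nat.card H = p := by
  have := exists_card_pow (a := 1) hp (by simpa using h)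
  simpa using this

lemma normal_of_unique {Q : Subgroup G}
    (h : ∀ K : Subgroup G, Nat.card K = Nat.card Q → K = Q) : Q.Normal := by
  constructor
  intro q hq g
  have hcard : Nat.card (Q.map (MulAut.conj g).toMonoidHom) = Nat.card Q :=
    (Nat.card_congr (Q.equivMapOfInjective _ (MulEquiv.injective _)).toEquiv).symm
  have heq := h _ hcard
  rw [← heq]
  exact ⟨q, hq, rfl⟩

lemma commute_mem {H K : Subgroup G} (hH : H.Normal) (hK : K.Normal)
    (hco : (Nat.card H).Coprime (Nat.card K)) {x y : G} (hx : x ∈ H) (hy : y ∈ K) :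
    Commute x y :=
  Subgroup.commute_of_normal_of_disjoint H K hH hK
    (disjoint_iff.mpr (Subgroup.inf_eq_bot_of_coprime hco)) x y hx hy

lemma exists_orderOf_eq {p : ℕ} (hp : p.Prime) (h : p ∣ Nat.card G) :
    ∃ x : G, orderOf x = p := by
  haveI : Fact p.Prime := ⟨hp⟩
  exact exists_prime_orderOf_dvd_card' p h

lemma subgroup_eq_of_card_eq [IsCyclic G] {H K : Subgroup G}
    (h : Nat.card H = Nat.card K) : H = K := by
  classical
  cases nonempty_fintype G
  have key : ∀ (H : Subgroup G), (H : Set G).toFinset =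
      Finset.univ.filter (fun x : G => x ^ (Nat.card H) = 1) := by
    intro H
    apply Finset.eq_of_subset_of_card_le
    · intro x hx
      rw [Set.mem_toFinset] at hx
      simp only [Finset.mem_filter, Finset.mem_univ, true_and]
      have hx1 : (⟨x, hx⟩ : H) ^ (Nat.card H) = 1 := pow_card_eq_one'
      calc x ^ (Nat.card H) = ((⟨x, hx⟩ : H) ^ (Nat.card H) : H) := by
            rw [SubmonoidClass.coe_pow]
        _ = 1 := by rw [hx1]; rfl
    · have h1 : (Finset.univ.filter (fun x : G => x ^ (Nat.card H) = 1)).card ≤ Nat.card H := by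
        have h0 : 0 < Nat.card H := Nat.card_pos
        have := IsCyclic.card_pow_eq_one_le (α := G) (n := Nat.card H) h0
        convert this using 2
      have h2 : (H : Set G).toFinset.card = Nat.card H := by
        rw [Set.toFinset_card, Nat.card_eq_fintype_card]
        rfl
      omega
  have := (key H).trans (h ▸ (key K).symm)
  apply SetLike.ext'
  rwa [← Set.toFinset_inj]


lemma ne_of_card_ne {H K : Subgroup G} (h : Nat.card H ≠ Nat.card K) : H ≠ K :=
  fun hh => h (by rw [hh])

lemma noConfig_pgroup {p : ℕ} (hp : p.Prime) (hG : IsPGroup p G) : ¬ HasConfig G := by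
  haveI : Fact p.Prime := ⟨hp⟩
  rintro ⟨A₁, A₂, B₁, B₂, B₃, ⟨hA₁, _, hB₁, _, _⟩, _, c11, -⟩
  obtain ⟨a, ha⟩ := (IsPGroup.iff_card (p := p)).mp (hG.to_subgroup A₁)
  obtain ⟨b, hb⟩ := (IsPGroup.iff_card (p := p)).mp (hG.to_subgroup B₁)
  have ha0 : a ≠ 0 := by
    rintro rfl
    have := one_lt_card hA₁.1
    rw [ha] at this; simp at this
  have hb0 : b ≠ 0 := by
    rintro rfl
    have := one_lt_card hB₁.1
    rw [hb] at this; simp at this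
  rw [ha, hb] at c11
  have : p ∣ Nat.gcd (p ^ a) (p ^ b) :=
    Nat.dvd_gcd (dvd_pow_self p ha0) (dvd_pow_self p hb0)
  rw [c11] at this
  exact hp.one_lt.ne' (Nat.dvd_one.mp this)

lemma not_dvd_of_coprime {s x y : ℕ} (hs : s.Prime) (hsx : s ∣ x) (hco : x.Coprime y) :
    ¬ s ∣ y := by
  intro hsy
  have h1 : s ∣ Nat.gcd x y := Nat.dvd_gcd hsx hsy
  rw [Nat.Coprime] at hco
  rw [hco] at h1
  exact hs.one_lt.ne' (Nat.dvd_one.mp h1)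

lemma noConfig_case2 {p q α : ℕ} (hp : p.Prime) (hq : q.Prime) (hpq : p ≠ q) (hα : 1 ≤ α)
    (hcard : Nat.card G = p ^ α * q) (huniq : ∃! H : Subgroup G, Nat.card H = q) :
    ¬ HasConfig G := by
  obtain ⟨H₀, hH₀, huni⟩ := huniq
  rintro ⟨A₁, A₂, B₁, B₂, B₃, ⟨hA₁, hA₂, hB₁, hB₂, hB₃⟩, ⟨h12, hb12, hb13, hb23⟩,
    c11, c12, c13, c21, c22, c23⟩
  have key : ∀ X Y : Subgroup G, X ≠ ⊥ → Y ≠ ⊥ →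
      (Nat.card X).Coprime (Nat.card Y) → X = H₀ ∨ Y = H₀ := by
    intro X Y hX hY hc
    have hdX : Nat.card X ∣ p ^ α * q := hcard ▸ Subgroup.card_subgroup_dvd_card X
    have hdY : Nat.card Y ∣ p ^ α * q := hcard ▸ Subgroup.card_subgroup_dvd_card Y
    have hstep : ∀ Z W : Subgroup G, Z ≠ ⊥ → W ≠ ⊥ → Nat.card Z ∣ p ^ α * q →
        Nat.card W ∣ p ^ α * q →
        (Nat.card Z).Coprime (Nat.card W) → q ∣ Nat.card Z → Z = H₀ := by
      intro Z W hZ hW hdZ hdW hcZW hqZ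
      -- q does not divide card W
      have hqW : ¬ q ∣ Nat.card W := not_dvd_of_coprime hq hqZ hcZW
      -- card W ∣ p ^ α
      have hWp : Nat.card W ∣ p ^ α :=
        Nat.Coprime.dvd_of_dvd_mul_right ((hq.coprime_iff_not_dvd.mpr hqW).symm) hdW
      -- p ∣ card W
      obtain ⟨k, hk, hWk⟩ := (Nat.dvd_prime_pow hp).mp hWp
      have hk0 : k ≠ 0 := by
        rintro rfl
        have := one_lt_card hW
        rw [hWk] at this; simp at this
      have hpW : p ∣ Nat.card W := hWk ▸ dvd_pow_self p hk0
      -- hence p does not divide card Z, so card Z ∣ q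
      have hpZ : ¬ p ∣ Nat.card Z := not_dvd_of_coprime hp hpW hcZW.symm
      have hZq : Nat.card Z ∣ q := by
        have hco : (Nat.card Z).Coprime (p ^ α) :=
          Nat.Coprime.pow_right _ ((hp.coprime_iff_not_dvd.mpr hpZ).symm)
        exact Nat.Coprime.dvd_of_dvd_mul_left hco hdZ
      rcases (Nat.dvd_prime hq).mp hZq with h | h
      · exact absurd h (Nat.ne_of_gt (one_lt_card hZ))
      · exact huni Z h
    by_cases hqX : q ∣ Nat.card X
    · exact Or.inl (hstep X Y hX hY hdX hdY hc hqX)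
    · -- card X ∣ p ^ α, so p ∣ card X, so q ∣ card Y
      have hXp : Nat.card X ∣ p ^ α :=
        Nat.Coprime.dvd_of_dvd_mul_right ((hq.coprime_iff_not_dvd.mpr hqX).symm) hdX
      obtain ⟨k, hk, hXk⟩ := (Nat.dvd_prime_pow hp).mp hXp
      have hk0 : k ≠ 0 := by
        rintro rfl
        have := one_lt_card hX
        rw [hXk] at this; simp at this
      have hpX : p ∣ Nat.card X := hXk ▸ dvd_pow_self p hk0
      have hpY : ¬ p ∣ Nat.card Y := not_dvd_of_coprime hp hpX hc
      have hYq : Nat.card Y ∣ q := by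
        have hco : (Nat.card Y).Coprime (p ^ α) :=
          Nat.Coprime.pow_right _ ((hp.coprime_iff_not_dvd.mpr hpY).symm)
        exact Nat.Coprime.dvd_of_dvd_mul_left hco hdY
      rcases (Nat.dvd_prime hq).mp hYq with h | h
      · exact absurd h (Nat.ne_of_gt (one_lt_card hY))
      · exact Or.inr (huni Y h)
  rcases key A₁ B₁ hA₁.1 hB₁.1 c11 with h1 | h1
  · rcases key A₂ B₁ hA₂.1 hB₁.1 c21 with h2 | h2
    · exact h12 (h1.trans h2.symm)
    · exact ne_of_coprime hA₁.1 c11 (h1.trans h2.symm)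
  · rcases key A₁ B₂ hA₁.1 hB₂.1 c12 with h2 | h2
    · exact ne_of_coprime hA₁.1 c11 (h2.trans h1.symm)
    · exact hb12 (h1.trans h2.symm)

lemma prime_dvd_mul_sq {s p q : ℕ} (hs : s.Prime) (hp : p.Prime) (hq : q.Prime)
    (h : s ∣ p ^ 2 * q ^ 2) : s = p ∨ s = q := by
  rcases hs.dvd_mul.mp h with h' | h'
  · exact Or.inl ((Nat.prime_dvd_prime_iff_eq hs hp).mp (hs.dvd_of_dvd_pow h'))
  · exact Or.inr ((Nat.prime_dvd_prime_iff_eq hs hq).mp (hs.dvd_of_dvd_pow h'))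

lemma noConfig_case3 {p q : ℕ} (hp : p.Prime) (hq : q.Prime) (hpq : p ≠ q) (hcy : IsCyclic G)
    (hcard : Nat.card G = p ^ 2 * q ^ 2) : ¬ HasConfig G := by
  rintro ⟨A₁, A₂, B₁, B₂, B₃, ⟨hA₁, hA₂, hB₁, hB₂, hB₃⟩, ⟨h12, hb12, hb13, hb23⟩,
    c11, c12, c13, c21, c22, c23⟩
  -- the main step, applied symmetrically in p and q
  have main : ∀ s t : ℕ, s.Prime → t.Prime → Nat.card G = s ^ 2 * t ^ 2 →
      s ∣ Nat.card A₁ → False := by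
    intro s t hs ht hn hsA
    have hB : ∀ X : Subgroup G, X ≠ ⊥ → (Nat.card A₁).Coprime (Nat.card X) →
        Nat.card X = t ∨ Nat.card X = t ^ 2 := by
      intro X hX hco
      have hsX : ¬ s ∣ Nat.card X := not_dvd_of_coprime hs hsA hco
      have hdX : Nat.card X ∣ s ^ 2 * t ^ 2 := hn ▸ Subgroup.card_subgroup_dvd_card X
      have hXt : Nat.card X ∣ t ^ 2 := by
        have hcoS : (Nat.card X).Coprime (s ^ 2) :=
          Nat.Coprime.pow_right _ ((hs.coprime_iff_not_dvd.mpr hsX).symm)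
        exact Nat.Coprime.dvd_of_dvd_mul_left hcoS hdX
      obtain ⟨k, hk, hXk⟩ := (Nat.dvd_prime_pow ht).mp hXt
      interval_cases k
      · exfalso; have := one_lt_card hX; rw [hXk] at this; simp at this
      · exact Or.inl (by simpa using hXk)
      · exact Or.inr hXk
    rcases hB B₁ hB₁.1 c11 with h1 | h1 <;> rcases hB B₂ hB₂.1 c12 with h2 | h2 <;>
      rcases hB B₃ hB₃.1 c13 with h3 | h3 <;>
      first
      | exact hb12 (subgroup_eq_of_card_eq (h1.trans h2.symm))
      | exact hb13 (subgroup_eq_of_card_eq (h1.trans h3.symm))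
      | exact hb23 (subgroup_eq_of_card_eq (h2.trans h3.symm))
  have h1A := one_lt_card hA₁.1
  have hsP : (Nat.card A₁).minFac.Prime := Nat.minFac_prime (Nat.ne_of_gt h1A)
  have hsdvd : (Nat.card A₁).minFac ∣ Nat.card G :=
    ((Nat.card A₁).minFac_dvd).trans (Subgroup.card_subgroup_dvd_card A₁)
  rcases prime_dvd_mul_sq hsP hp hq (hcard ▸ hsdvd) with h | h
  · exact main p q hp hq hcard (h ▸ (Nat.card A₁).minFac_dvd)
  · exact main q p hq hp (by rw [hcard]; ring) (h ▸ (Nat.card A₁).minFac_dvd)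

lemma eq_third_prime {a b c x : ℕ} (ha : a.Prime) (hb : b.Prime) (hc : c.Prime)
    (hx : x ∣ a * b * c) (h1 : 1 < x) (hna : ¬ a ∣ x) (hnb : ¬ b ∣ x) : x = c := by
  have ca : Nat.Coprime x a := (ha.coprime_iff_not_dvd.mpr hna).symm
  have cb : Nat.Coprime x b := (hb.coprime_iff_not_dvd.mpr hnb).symm
  have h2 : x ∣ a * (b * c) := by rwa [mul_assoc] at hx
  have h3 : x ∣ b * c := Nat.Coprime.dvd_of_dvd_mul_left ca h2
  have h4 : x ∣ c := Nat.Coprime.dvd_of_dvd_mul_left cb h3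
  rcases (Nat.dvd_prime hc).mp h4 with h | h
  · omega
  · exact h

lemma noConfig_case4 {p q r : ℕ} (hp : p.Prime) (hq : q.Prime) (hr : r.Prime)
    (hpq : p ≠ q) (hpr : p ≠ r) (hqr : q ≠ r) (hcy : IsCyclic G)
    (hcard : Nat.card G = p * q * r) : ¬ HasConfig G := by
  rintro ⟨A₁, A₂, B₁, B₂, B₃, ⟨hA₁, hA₂, hB₁, hB₂, hB₃⟩, ⟨h12, hb12, hb13, hb23⟩,
    c11, c12, c13, c21, c22, c23⟩
  have dv : ∀ X : Subgroup G, Nat.card X ∣ p * q * r :=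
    fun X => hcard ▸ Subgroup.card_subgroup_dvd_card X
  have lA1 := one_lt_card hA₁.1
  have lA2 := one_lt_card hA₂.1
  have lB1 := one_lt_card hB₁.1
  have lB2 := one_lt_card hB₂.1
  have lB3 := one_lt_card hB₃.1
  -- if a prime divides one of the A-side cards, it divides no B-side card
  have ndB : ∀ {s : ℕ}, s.Prime → (s ∣ Nat.card A₁ ∨ s ∣ Nat.card A₂) →
      (¬ s ∣ Nat.card B₁) ∧ (¬ s ∣ Nat.card B₂) ∧ (¬ s ∣ Nat.card B₃) := by
    rintro s hs (h | h)
    · exact ⟨not_dvd_of_coprime hs h c11, not_dvd_of_coprime hs h c12,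
        not_dvd_of_coprime hs h c13⟩
    · exact ⟨not_dvd_of_coprime hs h c21, not_dvd_of_coprime hs h c22,
        not_dvd_of_coprime hs h c23⟩
  by_cases hPp : p ∣ Nat.card A₁ ∨ p ∣ Nat.card A₂
  · by_cases hPq : q ∣ Nat.card A₁ ∨ q ∣ Nat.card A₂
    · -- all B's have card r
      obtain ⟨np1, np2, np3⟩ := ndB hp hPp
      obtain ⟨nq1, nq2, nq3⟩ := ndB hq hPq
      have e1 := eq_third_prime hp hq hr (dv B₁) lB1 np1 nq1
      have e2 := eq_third_prime hp hq hr (dv B₂) lB2 np2 nq2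
      exact hb12 (subgroup_eq_of_card_eq (e1.trans e2.symm))
    · by_cases hPr : r ∣ Nat.card A₁ ∨ r ∣ Nat.card A₂
      · -- all B's have card q
        obtain ⟨np1, np2, np3⟩ := ndB hp hPp
        obtain ⟨nr1, nr2, nr3⟩ := ndB hr hPr
        have dv' : ∀ X : Subgroup G, Nat.card X ∣ p * r * q :=
          fun X => by rw [show p * r * q = p * q * r by ring]; exact dv X
        have e1 := eq_third_prime hp hr hq (dv' B₁) lB1 np1 nr1
        have e2 := eq_third_prime hp hr hq (dv' B₂) lB2 np2 nr2
        exact hb12 (subgroup_eq_of_card_eq (e1.trans e2.symm))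
      · -- q and r divide neither A-card, hence both A's have card p
        push_neg at hPq hPr
        have dv' : ∀ X : Subgroup G, Nat.card X ∣ q * r * p :=
          fun X => by rw [show q * r * p = p * q * r by ring]; exact dv X
        have e1 := eq_third_prime hq hr hp (dv' A₁) lA1 hPq.1 hPr.1
        have e2 := eq_third_prime hq hr hp (dv' A₂) lA2 hPq.2 hPr.2
        exact h12 (subgroup_eq_of_card_eq (e1.trans e2.symm))
  · by_cases hPq : q ∣ Nat.card A₁ ∨ q ∣ Nat.card A₂
    · by_cases hPr : r ∣ Nat.card A₁ ∨ r ∣ Nat.card A₂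
      · -- all B's have card p
        obtain ⟨nq1, nq2, nq3⟩ := ndB hq hPq
        obtain ⟨nr1, nr2, nr3⟩ := ndB hr hPr
        have dv' : ∀ X : Subgroup G, Nat.card X ∣ q * r * p :=
          fun X => by rw [show q * r * p = p * q * r by ring]; exact dv X
        have e1 := eq_third_prime hq hr hp (dv' B₁) lB1 nq1 nr1
        have e2 := eq_third_prime hq hr hp (dv' B₂) lB2 nq2 nr2
        exact hb12 (subgroup_eq_of_card_eq (e1.trans e2.symm))
      · -- p and r divide neither A-card: both A's have card q
        push_neg at hPp hPr
        have dv' : ∀ X : Subgroup G, Nat.card X ∣ p * r * q :=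
          fun X => by rw [show p * r * q = p * q * r by ring]; exact dv X
        have e1 := eq_third_prime hp hr hq (dv' A₁) lA1 hPp.1 hPr.1
        have e2 := eq_third_prime hp hr hq (dv' A₂) lA2 hPp.2 hPr.2
        exact h12 (subgroup_eq_of_card_eq (e1.trans e2.symm))
    · -- p and q divide neither A-card: both A's have card r
      push_neg at hPp hPq
      have e1 := eq_third_prime hp hq hr (dv A₁) lA1 hPp.1 hPq.1
      have e2 := eq_third_prime hp hq hr (dv A₂) lA2 hPp.2 hPq.2
      exact h12 (subgroup_eq_of_card_eq (e1.trans e2.symm))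

lemma ne_bot_of_one_lt {H : Subgroup G} (h : 1 < Nat.card H) : H ≠ ⊥ :=
  (Subgroup.one_lt_card_iff_ne_bot H).mp h

lemma ne_top_of_card_ne {H : Subgroup G} (h : Nat.card H ≠ Nat.card G) : H ≠ ⊤ := by
  intro hh; subst hh; exact h Subgroup.card_top

lemma hasConfig_mk {A₁ A₂ B₁ B₂ B₃ : Subgroup G}
    (n1 : 1 < Nat.card A₁) (n2 : 1 < Nat.card A₂) (n3 : 1 < Nat.card B₁)
    (n4 : 1 < Nat.card B₂) (n5 : 1 < Nat.card B₃)
    (t1 : Nat.card A₁ ≠ Nat.card G) (t2 : Nat.card A₂ ≠ Nat.card G)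
    (t3 : Nat.card B₁ ≠ Nat.card G) (t4 : Nat.card B₂ ≠ Nat.card G)
    (t5 : Nat.card B₃ ≠ Nat.card G)
    (hA : A₁ ≠ A₂) (h12 : B₁ ≠ B₂) (h13 : B₁ ≠ B₃) (h23 : B₂ ≠ B₃)
    (c11 : (Nat.card A₁).Coprime (Nat.card B₁)) (c12 : (Nat.card A₁).Coprime (Nat.card B₂))
    (c13 : (Nat.card A₁).Coprime (Nat.card B₃)) (c21 : (Nat.card A₂).Coprime (Nat.card B₁))
    (c22 : (Nat.card A₂).Coprime (Nat.card B₂)) (c23 : (Nat.card A₂).Coprime (Nat.card B₃)) :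
    HasConfig G :=
  ⟨A₁, A₂, B₁, B₂, B₃,
    ⟨⟨ne_bot_of_one_lt n1, ne_top_of_card_ne t1⟩, ⟨ne_bot_of_one_lt n2, ne_top_of_card_ne t2⟩,
     ⟨ne_bot_of_one_lt n3, ne_top_of_card_ne t3⟩, ⟨ne_bot_of_one_lt n4, ne_top_of_card_ne t4⟩,
     ⟨ne_bot_of_one_lt n5, ne_top_of_card_ne t5⟩⟩,
    ⟨hA, h12, h13, h23⟩, c11, c12, c13, c21, c22, c23⟩

lemma card_pow_ne_card {s t : ℕ} (hs : s.Prime) (ht : t.Prime) (hts : t ≠ s)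
    (htd : t ∣ Nat.card G) {H : Subgroup G} {a : ℕ} (hH : Nat.card H = s ^ a) :
    Nat.card H ≠ Nat.card G := by
  intro h
  have h2 : t ∣ s ^ a := by rw [← hH, h]; exact htd
  exact hts ((Nat.prime_dvd_prime_iff_eq ht hs).mp (ht.dvd_of_dvd_pow h2))

lemma mul_prime_ne_card {u v t : ℕ} (hu : u.Prime) (hv : v.Prime) (ht : t.Prime)
    (htu : t ≠ u) (htv : t ≠ v) (htd : t ∣ Nat.card G) {H : Subgroup G}
    (hH : Nat.card H = u * v) : Nat.card H ≠ Nat.card G := by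
  intro h
  have h2 : t ∣ u * v := by rw [← hH, h]; exact htd
  rcases ht.dvd_mul.mp h2 with h' | h'
  · exact htu ((Nat.prime_dvd_prime_iff_eq ht hu).mp h')
  · exact htv ((Nat.prime_dvd_prime_iff_eq ht hv).mp h')

lemma two_distinct_of_notW {s : ℕ} (hs : s.Prime) (hsn : s ∣ Nat.card G)
    (h : ¬ (¬ s ^ 2 ∣ Nat.card G ∧ ∃! H : Subgroup G, Nat.card H = s)) :
    ∃ (H K : Subgroup G) (a b : ℕ), H ≠ K ∧ Nat.card H = s ^ a ∧ Nat.card K = s ^ b ∧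
      1 ≤ a ∧ 1 ≤ b := by
  by_cases h2 : s ^ 2 ∣ Nat.card G
  · obtain ⟨H, hH⟩ := exists_card_prime hs hsn
    obtain ⟨K, hK⟩ := exists_card_pow hs h2
    refine ⟨H, K, 1, 2, ?_, by simpa using hH, hK, le_refl _, by norm_num⟩
    apply ne_of_card_ne
    rw [hH, hK]
    have h3 : s < s ^ 2 := by nlinarith [hs.two_le]
    omega
  · have h3 : ¬ ∃! H : Subgroup G, Nat.card H = s := fun hex => h ⟨h2, hex⟩
    obtain ⟨H, hH⟩ := exists_card_prime hs hsn
    have h4 : ∃ K : Subgroup G, Nat.card K = s ∧ K ≠ H := by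
      by_contra hc
      push_neg at hc
      exact h3 ⟨H, hH, fun K hK => hc K hK⟩
    obtain ⟨K, hK, hKH⟩ := h4
    exact ⟨H, K, 1, 1, hKH.symm, by simpa using hH, by simpa using hK, le_refl _, le_refl _⟩

lemma coprime_pp {s t : ℕ} (hs : s.Prime) (ht : t.Prime) (hst : s ≠ t) : Nat.Coprime s t :=
  (Nat.coprime_primes hs ht).mpr hst

lemma W_of_three_primes (hnc : ¬ HasConfig G) {p q r : ℕ}
    (hp : p.Prime) (hq : q.Prime) (hr : r.Prime)
    (hpq : p ≠ q) (hpr : p ≠ r) (hqr : q ≠ r)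
    (hpd : p ∣ Nat.card G) (hqd : q ∣ Nat.card G) (hrd : r ∣ Nat.card G)
    {s : ℕ} (hs : s.Prime) (hsd : s ∣ Nat.card G) :
    ¬ s ^ 2 ∣ Nat.card G ∧ ∃! H : Subgroup G, Nat.card H = s := by
  obtain ⟨u, v, hu, hv, hud, hvd, huv, hus, hvs⟩ :
      ∃ u v : ℕ, u.Prime ∧ v.Prime ∧ u ∣ Nat.card G ∧ v ∣ Nat.card G ∧ u ≠ v ∧ u ≠ s ∧ v ≠ s := by
    by_cases h1 : s = p
    · subst h1; exact ⟨q, r, hq, hr, hqd, hrd, hqr, Ne.symm hpq, Ne.symm hpr⟩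
    · by_cases h2 : s = q
      · subst h2; exact ⟨p, r, hp, hr, hpd, hrd, hpr, hpq, Ne.symm hqr⟩
      · exact ⟨p, q, hp, hq, hpd, hqd, hpq, fun h => h1 h.symm, fun h => h2 h.symm⟩
  by_contra hw
  obtain ⟨A₁, A₂, a, b, hne, hA1, hA2, ha, hb⟩ := two_distinct_of_notW hs hsd hw
  have hA1lt : 1 < Nat.card A₁ := by rw [hA1]; exact Nat.one_lt_pow (by omega) hs.one_lt
  have hA2lt : 1 < Nat.card A₂ := by rw [hA2]; exact Nat.one_lt_pow (by omega) hs.one_lt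
  have hA1ne := card_pow_ne_card hs hu hus hud hA1
  have hA2ne := card_pow_ne_card hs hu hus hud hA2
  -- coprime helper: s-powers vs numbers not divisible by s
  have copA : ∀ {m : ℕ}, Nat.Coprime s m → (Nat.card A₁).Coprime m ∧ (Nat.card A₂).Coprime m := by
    intro m hm
    constructor
    · rw [hA1]; exact Nat.Coprime.pow_left _ hm
    · rw [hA2]; exact Nat.Coprime.pow_left _ hm
  -- now build the B side
  by_cases hWu : ¬ u ^ 2 ∣ Nat.card G ∧ ∃! H : Subgroup G, Nat.card H = u
  · by_cases hWv : ¬ v ^ 2 ∣ Nat.card G ∧ ∃! H : Subgroup G, Nat.card H = v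
    · -- both unique: concoct subgroup of order u * v
      obtain ⟨hu2, Q, hQ, hQu⟩ := hWu
      obtain ⟨hv2, R, hR, hRu⟩ := hWv
      have hQn : Q.Normal := normal_of_unique (fun K hK => hQu K
        (show Nat.card K = u by rw [hK, hQ]))
      have hRn : R.Normal := normal_of_unique (fun K hK => hRu K
        (show Nat.card K = v by rw [hK, hR]))
      obtain ⟨x, hx⟩ := exists_orderOf_eq hu hud
      obtain ⟨y, hy⟩ := exists_orderOf_eq hv hvd
      have hxQ : x ∈ Q := by
        have h5 : Subgroup.zpowers x = Q := hQu _
          (show Nat.card (Subgroup.zpowers x) = u by rw [Nat.card_zpowers, hx])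
        rw [← h5]; exact Subgroup.mem_zpowers x
      have hyR : y ∈ R := by
        have h5 : Subgroup.zpowers y = R := hRu _
          (show Nat.card (Subgroup.zpowers y) = v by rw [Nat.card_zpowers, hy])
        rw [← h5]; exact Subgroup.mem_zpowers y
      have hcomm : Commute x y :=
        commute_mem hQn hRn (by rw [hQ, hR]; exact coprime_pp hu hv huv) hxQ hyR
      have hxy : orderOf (x * y) = u * v := by
        rw [Commute.orderOf_mul_eq_mul_orderOf_of_coprime hcomm
          (by rw [hx, hy]; exact coprime_pp hu hv huv), hx, hy]
      have hB3 : Nat.card (Subgroup.zpowers (x * y)) = u * v := by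
        rw [Nat.card_zpowers, hxy]
      have huv1 : 1 < u * v := by nlinarith [hu.two_le, hv.two_le]
      refine hnc (hasConfig_mk hA1lt hA2lt (by rw [hQ]; exact hu.one_lt)
        (by rw [hR]; exact hv.one_lt) (by rw [hB3]; exact huv1)
        hA1ne hA2ne
        (card_pow_ne_card hu hs (fun h => hus h.symm) hsd (by rw [hQ, pow_one]))
        (card_pow_ne_card hv hs (fun h => hvs h.symm) hsd (by rw [hR, pow_one]))
        (mul_prime_ne_card hu hv hs (fun h => hus h.symm) (fun h => hvs h.symm) hsd hB3)
        hne
        (ne_of_card_ne (by rw [hQ, hR]; exact fun h => huv h))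
        (ne_of_card_ne (by rw [hQ, hB3]; intro h; nlinarith [hu.two_le, hv.two_le]))
        (ne_of_card_ne (by rw [hR, hB3]; intro h; nlinarith [hu.two_le, hv.two_le]))
        ((copA (by rw [hQ]; exact coprime_pp hs hu (fun h => hus h.symm))).1)
        ((copA (by rw [hR]; exact coprime_pp hs hv (fun h => hvs h.symm))).1)
        ((copA (by rw [hB3]; exact Nat.Coprime.mul_right (coprime_pp hs hu (fun h => hus h.symm)) (coprime_pp hs hv (fun h => hvs h.symm)))).1)
        ((copA (by rw [hQ]; exact coprime_pp hs hu (fun h => hus h.symm))).2)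
        ((copA (by rw [hR]; exact coprime_pp hs hv (fun h => hvs h.symm))).2)
        ((copA (by rw [hB3]; exact Nat.Coprime.mul_right (coprime_pp hs hu (fun h => hus h.symm)) (coprime_pp hs hv (fun h => hvs h.symm)))).2))
    · -- two distinct v-subgroups, plus one u-subgroup
      obtain ⟨B₁, B₂, c, d, hBne, hB1, hB2, hc, hd⟩ := two_distinct_of_notW hv hvd hWv
      obtain ⟨B₃, hB3⟩ := exists_card_prime hu hud
      have co_vA : ∀ {e : ℕ}, 1 ≤ e → Nat.Coprime s (v ^ e) :=
        fun he => Nat.Coprime.pow_right _ (coprime_pp hs hv (fun h => hvs h.symm))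
      refine hnc (hasConfig_mk hA1lt hA2lt
        (by rw [hB1]; exact Nat.one_lt_pow (by omega) hv.one_lt)
        (by rw [hB2]; exact Nat.one_lt_pow (by omega) hv.one_lt)
        (by rw [hB3]; exact hu.one_lt)
        hA1ne hA2ne
        (card_pow_ne_card hv hu huv hud hB1)
        (card_pow_ne_card hv hu huv hud hB2)
        (card_pow_ne_card hu hv (Ne.symm huv) hvd (by rw [hB3, pow_one]))
        hne hBne
        (ne_of_card_ne (by
          rw [hB1, hB3]; intro h
          have hvd2 : v ∣ u := by rw [← h]; exact dvd_pow_self v (by omega)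
          exact huv ((Nat.prime_dvd_prime_iff_eq hv hu).mp hvd2).symm))
        (ne_of_card_ne (by
          rw [hB2, hB3]; intro h
          have hvd2 : v ∣ u := by rw [← h]; exact dvd_pow_self v (by omega)
          exact huv ((Nat.prime_dvd_prime_iff_eq hv hu).mp hvd2).symm))
        ((copA (hB1 ▸ co_vA hc)).1) ((copA (hB2 ▸ co_vA hd)).1)
        ((copA (by rw [hB3]; exact coprime_pp hs hu (fun h => hus h.symm))).1)
        ((copA (hB1 ▸ co_vA hc)).2) ((copA (hB2 ▸ co_vA hd)).2)
        ((copA (by rw [hB3]; exact coprime_pp hs hu (fun h => hus h.symm))).2))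
  · -- two distinct u-subgroups, plus one v-subgroup
    obtain ⟨B₁, B₂, c, d, hBne, hB1, hB2, hc, hd⟩ := two_distinct_of_notW hu hud hWu
    obtain ⟨B₃, hB3⟩ := exists_card_prime hv hvd
    have co_uA : ∀ {e : ℕ}, 1 ≤ e → Nat.Coprime s (u ^ e) :=
      fun he => Nat.Coprime.pow_right _ (coprime_pp hs hu (fun h => hus h.symm))
    refine hnc (hasConfig_mk hA1lt hA2lt
      (by rw [hB1]; exact Nat.one_lt_pow (by omega) hu.one_lt)
      (by rw [hB2]; exact Nat.one_lt_pow (by omega) hu.one_lt)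
      (by rw [hB3]; exact hv.one_lt)
      hA1ne hA2ne
      (card_pow_ne_card hu hv (Ne.symm huv) hvd hB1)
      (card_pow_ne_card hu hv (Ne.symm huv) hvd hB2)
      (card_pow_ne_card hv hu huv hud (by rw [hB3, pow_one]))
      hne hBne
      (ne_of_card_ne (by
        rw [hB1, hB3]; intro h
        have hud2 : u ∣ v := by rw [← h]; exact dvd_pow_self u (by omega)
        exact huv ((Nat.prime_dvd_prime_iff_eq hu hv).mp hud2)))
      (ne_of_card_ne (by
        rw [hB2, hB3]; intro h
        have hud2 : u ∣ v := by rw [← h]; exact dvd_pow_self u (by omega)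
        exact huv ((Nat.prime_dvd_prime_iff_eq hu hv).mp hud2)))
      ((copA (hB1 ▸ co_uA hc)).1) ((copA (hB2 ▸ co_uA hd)).1)
      ((copA (by rw [hB3]; exact coprime_pp hs hv (fun h => hvs h.symm))).1)
      ((copA (hB1 ▸ co_uA hc)).2) ((copA (hB2 ▸ co_uA hd)).2)
      ((copA (by rw [hB3]; exact coprime_pp hs hv (fun h => hvs h.symm))).2)) 

lemma gen_of_W {s : ℕ} (hs : s.Prime) (hsd : s ∣ Nat.card G)
    (hWs : ¬ s ^ 2 ∣ Nat.card G ∧ ∃! H : Subgroup G, Nat.card H = s) :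
    ∃ x : G, orderOf x = s ∧ (Subgroup.zpowers x).Normal ∧
      ∀ K : Subgroup G, Nat.card K = s → K = Subgroup.zpowers x := by
  obtain ⟨-, H, hH, hHu⟩ := hWs
  obtain ⟨x, hx⟩ := exists_orderOf_eq hs hsd
  have hzx : Nat.card (Subgroup.zpowers x) = s := by rw [Nat.card_zpowers, hx]
  have hxH : Subgroup.zpowers x = H := hHu _ hzx
  have huniq : ∀ K : Subgroup G, Nat.card K = s → K = Subgroup.zpowers x :=
    fun K hK => (hHu K hK).trans hxH.symm
  exact ⟨x, hx, normal_of_unique (fun K hK => huniq K (by rw [hK, hzx])), huniq⟩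

lemma commute_gen {x y : G} {s t : ℕ} (hs : s.Prime) (ht : t.Prime) (hst : s ≠ t)
    (hx : orderOf x = s) (hy : orderOf y = t)
    (hnx : (Subgroup.zpowers x).Normal) (hny : (Subgroup.zpowers y).Normal) : Commute x y :=
  commute_mem hnx hny
    (by rw [Nat.card_zpowers, Nat.card_zpowers, hx, hy]; exact coprime_pp hs ht hst)
    (Subgroup.mem_zpowers x) (Subgroup.mem_zpowers y)

lemma no_four_primes (hnc : ¬ HasConfig G)
    (hW : ∀ s : ℕ, s.Prime → s ∣ Nat.card G →
      ¬ s ^ 2 ∣ Nat.card G ∧ ∃! H : Subgroup G, Nat.card H = s)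
    {p q r t : ℕ} (hp : p.Prime) (hq : q.Prime) (hr : r.Prime) (ht : t.Prime)
    (hpq : p ≠ q) (hpr : p ≠ r) (hpt : p ≠ t) (hqr : q ≠ r) (hqt : q ≠ t) (hrt : r ≠ t)
    (hpd : p ∣ Nat.card G) (hqd : q ∣ Nat.card G) (hrd : r ∣ Nat.card G)
    (htd : t ∣ Nat.card G) : False := by
  obtain ⟨x, hx, hxn, hxu⟩ := gen_of_W hp hpd (hW p hp hpd)
  obtain ⟨y, hy, hyn, hyu⟩ := gen_of_W hq hqd (hW q hq hqd)
  obtain ⟨z, hz, hzn, hzu⟩ := gen_of_W hr hrd (hW r hr hrd)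
  obtain ⟨w, hw, hwn, hwu⟩ := gen_of_W ht htd (hW t ht htd)
  have cxy := commute_gen hp hq hpq hx hy hxn hyn
  have czw := commute_gen hr ht hrt hz hw hzn hwn
  have hA1 : Nat.card (Subgroup.zpowers x) = p := by rw [Nat.card_zpowers, hx]
  have hB1 : Nat.card (Subgroup.zpowers z) = r := by rw [Nat.card_zpowers, hz]
  have hB2 : Nat.card (Subgroup.zpowers w) = t := by rw [Nat.card_zpowers, hw]
  have hA2 : Nat.card (Subgroup.zpowers (x * y)) = p * q := by
    rw [Nat.card_zpowers, Commute.orderOf_mul_eq_mul_orderOf_of_coprime cxy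
      (by rw [hx, hy]; exact coprime_pp hp hq hpq), hx, hy]
  have hB3 : Nat.card (Subgroup.zpowers (z * w)) = r * t := by
    rw [Nat.card_zpowers, Commute.orderOf_mul_eq_mul_orderOf_of_coprime czw
      (by rw [hz, hw]; exact coprime_pp hr ht hrt), hz, hw]
  exact hnc (hasConfig_mk
    (by rw [hA1]; exact hp.one_lt)
    (by rw [hA2]; nlinarith [hp.two_le, hq.two_le])
    (by rw [hB1]; exact hr.one_lt)
    (by rw [hB2]; exact ht.one_lt)
    (by rw [hB3]; nlinarith [hr.two_le, ht.two_le])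
    (card_pow_ne_card hp hr (Ne.symm hpr) hrd (by rw [hA1, pow_one]))
    (mul_prime_ne_card hp hq hr (Ne.symm hpr) (Ne.symm hqr) hrd hA2)
    (card_pow_ne_card hr hp hpr hpd (by rw [hB1, pow_one]))
    (card_pow_ne_card ht hp hpt hpd (by rw [hB2, pow_one]))
    (mul_prime_ne_card hr ht hp hpr hpt hpd hB3)
    (ne_of_card_ne (by rw [hA1, hA2]; intro h; nlinarith [hp.two_le, hq.two_le]))
    (ne_of_card_ne (by rw [hB1, hB2]; exact hrt))
    (ne_of_card_ne (by rw [hB1, hB3]; intro h; nlinarith [hr.two_le, ht.two_le]))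
    (ne_of_card_ne (by rw [hB2, hB3]; intro h; nlinarith [hr.two_le, ht.two_le]))
    (by rw [hA1, hB1]; exact coprime_pp hp hr hpr)
    (by rw [hA1, hB2]; exact coprime_pp hp ht hpt)
    (by rw [hA1, hB3]; exact Nat.Coprime.mul_right (coprime_pp hp hr hpr) (coprime_pp hp ht hpt))
    (by rw [hA2, hB1]; exact Nat.Coprime.mul (coprime_pp hp hr hpr) (coprime_pp hq hr hqr))
    (by rw [hA2, hB2]; exact Nat.Coprime.mul (coprime_pp hp ht hpt) (coprime_pp hq ht hqt))
    (by rw [hA2, hB3]; exact Nat.Coprime.mul (Nat.Coprime.mul_right (coprime_pp hp hr hpr) (coprime_pp hp ht hpt)) (Nat.Coprime.mul_right (coprime_pp hq hr hqr) (coprime_pp hq ht hqt))))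

lemma three_primes_result (hnc : ¬ HasConfig G) {p q r : ℕ}
    (hp : p.Prime) (hq : q.Prime) (hr : r.Prime) (hpq : p ≠ q) (hpr : p ≠ r) (hqr : q ≠ r)
    (hpm : p ∈ (Nat.card G).primeFactors) (hqm : q ∈ (Nat.card G).primeFactors)
    (hrm : r ∈ (Nat.card G).primeFactors) :
    IsCyclic G ∧ Nat.card G = p * q * r := by
  have hpd := Nat.dvd_of_mem_primeFactors hpm
  have hqd := Nat.dvd_of_mem_primeFactors hqm
  have hrd := Nat.dvd_of_mem_primeFactors hrm
  have hW : ∀ s : ℕ, s.Prime → s ∣ Nat.card G →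
      ¬ s ^ 2 ∣ Nat.card G ∧ ∃! H : Subgroup G, Nat.card H = s :=
    fun s hs hsd => W_of_three_primes hnc hp hq hr hpq hpr hqr hpd hqd hrd hs hsd
  have hsf : Squarefree (Nat.card G) := by
    rw [Nat.squarefree_iff_prime_squarefree]
    intro x hx hxx
    have hx' : x.Prime := hx
    have hxd : x ∣ Nat.card G := dvd_trans (dvd_mul_right x x) hxx
    exact (hW x hx' hxd).1 (by rwa [pow_two])
  have heq : (Nat.card G).primeFactors = {p, q, r} := by
    have hsub : ({p, q, r} : Finset ℕ) ⊆ (Nat.card G).primeFactors := by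
      intro a ha
      simp only [Finset.mem_insert, Finset.mem_singleton] at ha
      rcases ha with rfl | rfl | rfl
      · exact hpm
      · exact hqm
      · exact hrm
    by_contra hne
    have hss : ({p, q, r} : Finset ℕ) ⊂ (Nat.card G).primeFactors :=
      hsub.ssubset_of_ne (fun h => hne h.symm)
    obtain ⟨t, htm, htn⟩ := Finset.exists_of_ssubset hss
    have ht : t.Prime := Nat.prime_of_mem_primeFactors htm
    have htd := Nat.dvd_of_mem_primeFactors htm
    simp only [Finset.mem_insert, Finset.mem_singleton] at htn
    push_neg at htn
    exact no_four_primes hnc hW hp hq hr ht hpq hpr (Ne.symm htn.1) hqr (Ne.symm htn.2.1)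
      (Ne.symm htn.2.2) hpd hqd hrd htd
  have hprod : Nat.card G = p * q * r := by
    have h1 := Nat.prod_primeFactors_of_squarefree hsf
    rw [heq] at h1
    have hpn : p ∉ ({q, r} : Finset ℕ) := by simp [hpq, hpr]
    have hqn : q ∉ ({r} : Finset ℕ) := by simp [hqr]
    rw [Finset.prod_insert hpn, Finset.prod_insert hqn, Finset.prod_singleton,
      ← mul_assoc] at h1
    exact h1.symm
  obtain ⟨x, hx, hxn, -⟩ := gen_of_W hp hpd (hW p hp hpd)
  obtain ⟨y, hy, hyn, -⟩ := gen_of_W hq hqd (hW q hq hqd)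
  obtain ⟨z, hz, hzn, -⟩ := gen_of_W hr hrd (hW r hr hrd)
  have cxy := commute_gen hp hq hpq hx hy hxn hyn
  have cxz := commute_gen hp hr hpr hx hz hxn hzn
  have cyz := commute_gen hq hr hqr hy hz hyn hzn
  have hyz : orderOf (y * z) = q * r := by
    rw [Commute.orderOf_mul_eq_mul_orderOf_of_coprime cyz
      (by rw [hy, hz]; exact coprime_pp hq hr hqr), hy, hz]
  have hgen : orderOf (x * (y * z)) = p * (q * r) := by
    rw [Commute.orderOf_mul_eq_mul_orderOf_of_coprime (cxy.mul_right cxz)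
      (by rw [hx, hyz]; exact Nat.Coprime.mul_right (coprime_pp hp hq hpq) (coprime_pp hp hr hpr)), hx, hyz]
  exact ⟨isCyclic_of_orderOf_eq_card _ (by rw [hgen, hprod]; ring), hprod⟩

lemma qside_analysis {q : ℕ} (hq : q.Prime) (hqd : q ∣ Nat.card G)
    (hex : ∃ H K : Subgroup G, H ≠ K ∧ (∃ a, 0 < a ∧ Nat.card H = q ^ a) ∧
      (∃ b, 0 < b ∧ Nat.card K = q ^ b))
    (noThree : ∀ X Y Z : Subgroup G, (∃ a, 0 < a ∧ Nat.card X = q ^ a) →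
      (∃ a, 0 < a ∧ Nat.card Y = q ^ a) → (∃ a, 0 < a ∧ Nat.card Z = q ^ a) →
      X ≠ Y → X ≠ Z → Y ≠ Z → False) :
    (Nat.card G).factorization q = 2 ∧ ∃ g : G, orderOf g = q ^ 2 ∧
      ∀ K : Subgroup G, Nat.card K = q ^ 2 → K = Subgroup.zpowers g := by
  classical
  haveI : Fact q.Prime := ⟨hq⟩
  have hn0 : Nat.card G ≠ 0 := Nat.card_pos.ne'
  have hβ1 : 0 < (Nat.card G).factorization q := hq.factorization_pos_of_dvd hn0 hqd
  have hq2 := hq.two_le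
  have hβle : (Nat.card G).factorization q ≤ 2 := by
    by_contra hβ3
    push_neg at hβ3
    obtain ⟨X, hX⟩ := exists_card_pow hq (Nat.pow_dvd_of_le_of_pow_dvd
      (show 1 ≤ (Nat.card G).factorization q by omega) (Nat.ordProj_dvd _ q))
    obtain ⟨Y, hY⟩ := exists_card_pow hq (Nat.pow_dvd_of_le_of_pow_dvd
      (show 2 ≤ (Nat.card G).factorization q by omega) (Nat.ordProj_dvd _ q))
    obtain ⟨Z, hZ⟩ := exists_card_pow hq (Nat.pow_dvd_of_le_of_pow_dvd
      (show 3 ≤ (Nat.card G).factorization q by omega) (Nat.ordProj_dvd _ q))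
    have hlt1 : q ^ 1 < q ^ 2 := Nat.pow_lt_pow_right hq.one_lt (by omega)
    have hlt2 : q ^ 2 < q ^ 3 := Nat.pow_lt_pow_right hq.one_lt (by omega)
    exact noThree X Y Z ⟨1, by omega, hX⟩ ⟨2, by omega, hY⟩ ⟨3, by omega, hZ⟩
      (ne_of_card_ne (by rw [hX, hY]; omega)) (ne_of_card_ne (by rw [hX, hZ]; omega))
      (ne_of_card_ne (by rw [hY, hZ]; omega))
  have hβ2 : (Nat.card G).factorization q = 2 := by
    rcases Nat.lt_or_ge ((Nat.card G).factorization q) 2 with hlt | hge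
    · exfalso
      have hβeq : (Nat.card G).factorization q = 1 := by omega
      obtain ⟨H, K, hHK, ⟨a, ha, hH⟩, ⟨b, hb, hK⟩⟩ := hex
      have haa : a = 1 := by
        have h1 := (Nat.Prime.pow_dvd_iff_le_factorization hq hn0).mp
          (hH ▸ Subgroup.card_subgroup_dvd_card H)
        omega
      have hbb : b = 1 := by
        have h1 := (Nat.Prime.pow_dvd_iff_le_factorization hq hn0).mp
          (hK ▸ Subgroup.card_subgroup_dvd_card K)
        omega
      subst haa; subst hbb
      set PH := Sylow.ofCard H (by rw [hH, hβeq]) with hPHdef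
      set PK := Sylow.ofCard K (by rw [hK, hβeq]) with hPKdef
      have hPHK : PH ≠ PK := by
        intro h
        apply hHK
        have h1 : (PH : Subgroup G) = H := Sylow.coe_ofCard H _
        have h2 : (PK : Subgroup G) = K := Sylow.coe_ofCard K _
        rw [← h1, ← h2, h]
      have hmod := card_sylow_modEq_one q G
      have hge2 : 1 < Nat.card (Sylow q G) :=
        Finite.one_lt_card_iff_nontrivial.mpr ⟨⟨PH, PK, hPHK⟩⟩
      have hne2 : Nat.card (Sylow q G) ≠ 2 := by
        intro h2c
        rw [h2c] at hmod
        unfold Nat.ModEq at hmod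
        rcases eq_or_lt_of_le hq.two_le with hq2' | hq2'
        · rw [← hq2'] at hmod; omega
        · rw [Nat.mod_eq_of_lt hq2', Nat.mod_eq_of_lt (by omega)] at hmod
          omega
      have hge3 : 3 ≤ Nat.card (Sylow q G) := by omega
      haveI := Fintype.ofFinite (Sylow q G)
      rw [Nat.card_eq_fintype_card] at hge3
      obtain ⟨s3, hsub3, hc3⟩ := Finset.exists_subset_card_eq
        (s := (Finset.univ : Finset (Sylow q G))) (n := 3) (by simpa using hge3)
      obtain ⟨P₁, P₂, P₃, h12, h13, h23, -⟩ := Finset.card_eq_three.mp hc3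
      have cardP : ∀ P : Sylow q G, Nat.card (P : Subgroup G) = q ^ 1 := by
        intro P
        rw [P.card_eq_multiplicity, hβeq]
      exact noThree (P₁ : Subgroup G) (P₂ : Subgroup G) (P₃ : Subgroup G)
        ⟨1, one_pos, cardP P₁⟩ ⟨1, one_pos, cardP P₂⟩ ⟨1, one_pos, cardP P₃⟩
        (fun h => h12 (Sylow.ext h)) (fun h => h13 (Sylow.ext h)) (fun h => h23 (Sylow.ext h))
    · omega
  have hq2d : q ^ 2 ∣ Nat.card G := by
    rw [← hβ2]; exact Nat.ordProj_dvd _ q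
  obtain ⟨Q, hQ⟩ := exists_card_pow hq hq2d
  obtain ⟨H1, hH1⟩ := exists_card_prime hq hqd
  have hltq : q < q ^ 2 := by nlinarith
  have hQuniq : ∀ K : Subgroup G, Nat.card K = q ^ 2 → K = Q := by
    intro K hK
    by_contra hKQ
    exact noThree H1 K Q ⟨1, one_pos, by simpa using hH1⟩ ⟨2, by omega, hK⟩ ⟨2, by omega, hQ⟩
      (ne_of_card_ne (by rw [hH1, hK]; omega)) (ne_of_card_ne (by rw [hH1, hQ]; omega)) hKQ
  obtain ⟨g, hg⟩ : ∃ g : G, orderOf g = q ^ 2 := by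
    have hqQ : q ∣ Nat.card Q := by rw [hQ]; exact dvd_pow_self q (by omega)
    obtain ⟨y₁, hy₁⟩ := exists_prime_orderOf_dvd_card' (G := Q) q hqQ
    have hy₁G : orderOf (y₁ : G) = q := (Subgroup.orderOf_coe y₁).trans hy₁
    have hcard_z : Nat.card (Subgroup.zpowers (y₁ : G)) = q := by
      rw [Nat.card_zpowers, hy₁G]
    have hzQ : ¬ (∀ y : G, y ∈ Q → y ∈ Subgroup.zpowers (y₁ : G)) := by
      intro hall
      have hle : Q ≤ Subgroup.zpowers (y₁ : G) := hall
      have hcc := Subgroup.card_le_of_le hle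
      rw [hQ, hcard_z] at hcc
      omega
    push_neg at hzQ
    obtain ⟨y₂, hy₂Q, hy₂z⟩ := hzQ
    have hdy₂ : orderOf y₂ ∣ q ^ 2 := by
      have h1 : orderOf y₂ ∣ Nat.card Q := Subgroup.orderOf_dvd_natCard Q hy₂Q
      rwa [hQ] at h1
    obtain ⟨k, hk, hky⟩ := (Nat.dvd_prime_pow hq).mp hdy₂
    interval_cases k
    · exfalso
      apply hy₂z
      have hy1 : y₂ = 1 := orderOf_eq_one_iff.mp (by simpa using hky)
      rw [hy1]; exact Subgroup.one_mem _
    · exfalso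
      have hz2 : Nat.card (Subgroup.zpowers y₂) = q := by rw [Nat.card_zpowers, hky, pow_one]
      refine noThree (Subgroup.zpowers (y₁ : G)) (Subgroup.zpowers y₂) Q
        ⟨1, one_pos, by simpa using hcard_z⟩ ⟨1, one_pos, by simpa using hz2⟩
        ⟨2, by omega, hQ⟩
        ?_ (ne_of_card_ne (by rw [hcard_z, hQ]; omega))
        (ne_of_card_ne (by rw [hz2, hQ]; omega))
      intro h
      exact hy₂z (h ▸ Subgroup.mem_zpowers y₂)
    · exact ⟨y₂, hky⟩
  refine ⟨hβ2, g, hg, ?_⟩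
  intro K hK
  have hzg : Nat.card (Subgroup.zpowers g) = q ^ 2 := by rw [Nat.card_zpowers, hg]
  rw [hQuniq K hK, hQuniq _ hzg]

lemma config_two_primes {p q : ℕ} (hp : p.Prime) (hq : q.Prime) (hpq : p ≠ q)
    (hpd : p ∣ Nat.card G) (hqd : q ∣ Nat.card G)
    {A₁ A₂ X Y Z : Subgroup G}
    (hA1 : ∃ a, 0 < a ∧ Nat.card A₁ = p ^ a) (hA2 : ∃ a, 0 < a ∧ Nat.card A₂ = p ^ a)
    (hX : ∃ a, 0 < a ∧ Nat.card X = q ^ a) (hY : ∃ a, 0 < a ∧ Nat.card Y = q ^ a)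
    (hZ : ∃ a, 0 < a ∧ Nat.card Z = q ^ a)
    (hA : A₁ ≠ A₂) (hXY : X ≠ Y) (hXZ : X ≠ Z) (hYZ : Y ≠ Z) : HasConfig G := by
  obtain ⟨a1, ha1, hc1⟩ := hA1
  obtain ⟨a2, ha2, hc2⟩ := hA2
  obtain ⟨b1, hb1, hd1⟩ := hX
  obtain ⟨b2, hb2, hd2⟩ := hY
  obtain ⟨b3, hb3, hd3⟩ := hZ
  have cop : ∀ {i j : ℕ}, Nat.Coprime (p ^ i) (q ^ j) :=
    fun {i j} => Nat.Coprime.pow i j (coprime_pp hp hq hpq)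
  exact hasConfig_mk
    (by rw [hc1]; exact Nat.one_lt_pow (by omega) hp.one_lt)
    (by rw [hc2]; exact Nat.one_lt_pow (by omega) hp.one_lt)
    (by rw [hd1]; exact Nat.one_lt_pow (by omega) hq.one_lt)
    (by rw [hd2]; exact Nat.one_lt_pow (by omega) hq.one_lt)
    (by rw [hd3]; exact Nat.one_lt_pow (by omega) hq.one_lt)
    (card_pow_ne_card hp hq (Ne.symm hpq) hqd hc1)
    (card_pow_ne_card hp hq (Ne.symm hpq) hqd hc2)
    (card_pow_ne_card hq hp hpq hpd hd1)
    (card_pow_ne_card hq hp hpq hpd hd2)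
    (card_pow_ne_card hq hp hpq hpd hd3)
    hA hXY hXZ hYZ
    (by rw [hc1, hd1]; exact cop) (by rw [hc1, hd2]; exact cop) (by rw [hc1, hd3]; exact cop)
    (by rw [hc2, hd1]; exact cop) (by rw [hc2, hd2]; exact cop) (by rw [hc2, hd3]; exact cop)

lemma two_primes_result (hnc : ¬ HasConfig G) {p q : ℕ} (hp : p.Prime) (hq : q.Prime)
    (hpq : p ≠ q)
    (hpm : p ∈ (Nat.card G).primeFactors) (hqm : q ∈ (Nat.card G).primeFactors)
    (heq : (Nat.card G).primeFactors = {p, q}) :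
    (∃ p' q' α : ℕ, p'.Prime ∧ q'.Prime ∧ p' ≠ q' ∧ 1 ≤ α ∧ Nat.card G = p' ^ α * q' ∧
       ∃! H : Subgroup G, Nat.card H = q') ∨
    (∃ p' q' : ℕ, p'.Prime ∧ q'.Prime ∧ p' ≠ q' ∧ IsCyclic G ∧
       Nat.card G = p' ^ 2 * q' ^ 2) := by
  have hn0 : Nat.card G ≠ 0 := Nat.card_pos.ne'
  have hpd := Nat.dvd_of_mem_primeFactors hpm
  have hqd := Nat.dvd_of_mem_primeFactors hqm
  have hfact : Nat.card G =
      p ^ (Nat.card G).factorization p * q ^ (Nat.card G).factorization q := by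
    conv_lhs => rw [← Nat.factorization_prod_pow_eq_self hn0]
    rw [Finsupp.prod, Nat.support_factorization, heq,
      Finset.prod_insert (by simp [hpq]), Finset.prod_singleton]
  have hα1 : 0 < (Nat.card G).factorization p := hp.factorization_pos_of_dvd hn0 hpd
  have hβ1 : 0 < (Nat.card G).factorization q := hq.factorization_pos_of_dvd hn0 hqd
  by_cases hq1 : ∀ H K : Subgroup G, (∃ a, 0 < a ∧ Nat.card H = q ^ a) →
      (∃ b, 0 < b ∧ Nat.card K = q ^ b) → H = K
  · left
    have hβe : (Nat.card G).factorization q = 1 := by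
      by_contra hβ2
      have hq2 : q ^ 2 ∣ Nat.card G :=
        Nat.pow_dvd_of_le_of_pow_dvd (by omega) (Nat.ordProj_dvd _ q)
      obtain ⟨X, hX⟩ := exists_card_prime hq hqd
      obtain ⟨Y, hY⟩ := exists_card_pow hq hq2
      have hXY := hq1 X Y ⟨1, one_pos, by simpa using hX⟩ ⟨2, by omega, hY⟩
      rw [hXY, hY] at hX
      nlinarith [hq.two_le]
    obtain ⟨X, hX⟩ := exists_card_prime hq hqd
    exact ⟨p, q, (Nat.card G).factorization p, hp, hq, hpq, hα1,
      by conv_lhs => rw [hfact, hβe, pow_one]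
      ,
      ⟨X, hX, fun K hK => hq1 K X ⟨1, one_pos, by simpa using hK⟩
        ⟨1, one_pos, by simpa using hX⟩⟩⟩
  · by_cases hp1 : ∀ H K : Subgroup G, (∃ a, 0 < a ∧ Nat.card H = p ^ a) →
        (∃ b, 0 < b ∧ Nat.card K = p ^ b) → H = K
    · left
      have hαe : (Nat.card G).factorization p = 1 := by
        by_contra hα2
        have hp2 : p ^ 2 ∣ Nat.card G :=
          Nat.pow_dvd_of_le_of_pow_dvd (by omega) (Nat.ordProj_dvd _ p)
        obtain ⟨X, hX⟩ := exists_card_prime hp hpd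
        obtain ⟨Y, hY⟩ := exists_card_pow hp hp2
        have hXY := hp1 X Y ⟨1, one_pos, by simpa using hX⟩ ⟨2, by omega, hY⟩
        rw [hXY, hY] at hX
        nlinarith [hp.two_le]
      obtain ⟨X, hX⟩ := exists_card_prime hp hpd
      exact ⟨q, p, (Nat.card G).factorization q, hq, hp, Ne.symm hpq, hβ1,
        by conv_lhs => rw [hfact, hαe, pow_one, mul_comm]
        ,
        ⟨X, hX, fun K hK => hp1 K X ⟨1, one_pos, by simpa using hK⟩
          ⟨1, one_pos, by simpa using hX⟩⟩⟩
    · right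
      push_neg at hq1 hp1
      obtain ⟨Hq, Kq, hq_ex1, hq_ex2, hqne⟩ := hq1
      obtain ⟨Hp, Kp, hp_ex1, hp_ex2, hpne⟩ := hp1
      have noThreeQ : ∀ X Y Z : Subgroup G, (∃ a, 0 < a ∧ Nat.card X = q ^ a) →
          (∃ a, 0 < a ∧ Nat.card Y = q ^ a) → (∃ a, 0 < a ∧ Nat.card Z = q ^ a) →
          X ≠ Y → X ≠ Z → Y ≠ Z → False :=
        fun X Y Z hX hY hZ hXY hXZ hYZ => hnc
          (config_two_primes hp hq hpq hpd hqd hp_ex1 hp_ex2 hX hY hZ hpne hXY hXZ hYZ)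
      have noThreeP : ∀ X Y Z : Subgroup G, (∃ a, 0 < a ∧ Nat.card X = p ^ a) →
          (∃ a, 0 < a ∧ Nat.card Y = p ^ a) → (∃ a, 0 < a ∧ Nat.card Z = p ^ a) →
          X ≠ Y → X ≠ Z → Y ≠ Z → False :=
        fun X Y Z hX hY hZ hXY hXZ hYZ => hnc
          (config_two_primes hq hp (Ne.symm hpq) hqd hpd hq_ex1 hq_ex2 hX hY hZ hqne hXY hXZ hYZ)
      obtain ⟨hβ2, gq, hgq, hgq_uniq⟩ :=
        qside_analysis hq hqd ⟨Hq, Kq, hqne, hq_ex1, hq_ex2⟩ noThreeQ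
      obtain ⟨hα2, gp, hgp, hgp_uniq⟩ :=
        qside_analysis hp hpd ⟨Hp, Kp, hpne, hp_ex1, hp_ex2⟩ noThreeP
      have hPn : (Subgroup.zpowers gp).Normal :=
        normal_of_unique (fun K hK => hgp_uniq K
          (hK.trans (by rw [Nat.card_zpowers, hgp])))
      have hQn : (Subgroup.zpowers gq).Normal :=
        normal_of_unique (fun K hK => hgq_uniq K
          (hK.trans (by rw [Nat.card_zpowers, hgq])))
      have hcomm : Commute gp gq :=
        commute_mem hPn hQn
          (by rw [Nat.card_zpowers, Nat.card_zpowers, hgp, hgq]; exact Nat.Coprime.pow _ _ (coprime_pp hp hq hpq))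
          (Subgroup.mem_zpowers gp) (Subgroup.mem_zpowers gq)
      have hord : orderOf (gp * gq) = p ^ 2 * q ^ 2 := by
        rw [Commute.orderOf_mul_eq_mul_orderOf_of_coprime hcomm
          (by rw [hgp, hgq]; exact Nat.Coprime.pow _ _ (coprime_pp hp hq hpq)), hgp, hgq]
      have hcyc : IsCyclic G := isCyclic_of_orderOf_eq_card _
        (by rw [hord, hfact, hα2, hβ2])
      exact ⟨p, q, hp, hq, hpq, hcyc, by rw [hfact, hα2, hβ2]⟩

end CG

theorem coprimeGraph_K23_free_iff {G : Type*} [Group G] [Finite G]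
    (hG : 1 < Nat.card G) :
    (¬ ∃ f : completeBipartiteGraph (Fin 2) (Fin 3) →g coprimeGraph G,
        Function.Injective f) ↔
      ((∃ p : ℕ, p.Prime ∧ IsPGroup p G) ∨
       (∃ p q α : ℕ, p.Prime ∧ q.Prime ∧ p ≠ q ∧ 1 ≤ α ∧ Nat.card G = p ^ α * q ∧
          ∃! H : Subgroup G, Nat.card H = q) ∨
       (∃ p q : ℕ, p.Prime ∧ q.Prime ∧ p ≠ q ∧ IsCyclic G ∧
          Nat.card G = p ^ 2 * q ^ 2) ∨
       (∃ p q r : ℕ, p.Prime ∧ q.Prime ∧ r.Prime ∧ p ≠ q ∧ p ≠ r ∧ q ≠ r ∧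
          IsCyclic G ∧ Nat.card G = p * q * r)) := by
  rw [CG.copy_iff]
  constructor
  · intro hnc
    rcases lt_or_ge ((Nat.card G).primeFactors.card) 2 with hk | hk
    · left
      have hne : (Nat.card G).primeFactors.Nonempty := by
        rw [Nat.nonempty_primeFactors]; exact hG
      have h1 : (Nat.card G).primeFactors.card = 1 := by
        have := Finset.card_pos.mpr hne; omega
      obtain ⟨p, hp⟩ := Finset.card_eq_one.mp h1
      have hpm : p ∈ (Nat.card G).primeFactors := by rw [hp]; simp
      have hpp := Nat.prime_of_mem_primeFactors hpm
      have hn0 : Nat.card G ≠ 0 := by omega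
      refine ⟨p, hpp, IsPGroup.of_card (n := (Nat.card G).factorization p) ?_⟩
      conv_lhs => rw [← Nat.factorization_prod_pow_eq_self hn0]
      rw [Finsupp.prod, Nat.support_factorization, hp, Finset.prod_singleton]
    · rcases eq_or_lt_of_le hk with hk2 | hk3
      · obtain ⟨p, q, hpq, hpf⟩ := Finset.card_eq_two.mp hk2.symm
        have hpm : p ∈ (Nat.card G).primeFactors := by rw [hpf]; simp
        have hqm : q ∈ (Nat.card G).primeFactors := by rw [hpf]; simp
        have hpp := Nat.prime_of_mem_primeFactors hpm
        have hqq := Nat.prime_of_mem_primeFactors hqm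
        rcases CG.two_primes_result hnc hpp hqq hpq hpm hqm hpf with h | h
        · exact Or.inr (Or.inl h)
        · exact Or.inr (Or.inr (Or.inl h))
      · obtain ⟨s3, hsub3, hc3⟩ := Finset.exists_subset_card_eq
          (s := (Nat.card G).primeFactors) (n := 3) (by omega)
        obtain ⟨p, q, r, hpq, hpr, hqr, hs3⟩ := Finset.card_eq_three.mp hc3
        have hpm : p ∈ (Nat.card G).primeFactors := hsub3 (by rw [hs3]; simp)
        have hqm : q ∈ (Nat.card G).primeFactors := hsub3 (by rw [hs3]; simp)
        have hrm : r ∈ (Nat.card G).primeFactors := hsub3 (by rw [hs3]; simp)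
        have hpp := Nat.prime_of_mem_primeFactors hpm
        have hqq := Nat.prime_of_mem_primeFactors hqm
        have hrr := Nat.prime_of_mem_primeFactors hrm
        obtain ⟨hcyc, hcard⟩ := CG.three_primes_result hnc hpp hqq hrr hpq hpr hqr hpm hqm hrm
        exact Or.inr (Or.inr (Or.inr ⟨p, q, r, hpp, hqq, hrr, hpq, hpr, hqr, hcyc, hcard⟩))
  · rintro (⟨p, hp, hpg⟩ | ⟨p, q, α, hp, hq, hpq, hα, hcard, huniq⟩ |
      ⟨p, q, hp, hq, hpq, hcy, hcard⟩ | ⟨p, q, r, hp, hq, hr, hpq, hpr, hqr, hcy, hcard⟩)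
    · exact CG.noConfig_pgroup hp hpg
    · exact CG.noConfig_case2 hp hq hpq hα hcard huniq
    · exact CG.noConfig_case3 hp hq hpq hcy hcard
    · exact CG.noConfig_case4 hp hq hr hpq hpr hqr hcy hcard
end

section
/- Let G be a finite group with |G| > 1. The coprime graph 𝒫(G) is bipartite (i.e. 2-colorable) if and only if |G| has at most two distinct prime divisors. -/
open SimpleGraph

lemma sylow_vertex_aux {G : Type*} [Group G] [Finite G] (p q : ℕ) (hp : p.Prime)
    (hq : q.Prime) (hpq : p ≠ q) (hpn : p ∣ Nat.card G) (hqn : q ∣ Nat.card G) :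
    ∃ H : Subgroup G, H ≠ ⊥ ∧ H ≠ ⊤ ∧
      Nat.card H = p ^ ((Nat.card G).factorization p) := by
  haveI : Fact p.Prime := ⟨hp⟩
  obtain ⟨P⟩ := (inferInstance : Nonempty (Sylow p G))
  have hn0 : Nat.card G ≠ 0 := Nat.card_pos.ne'
  have hk : 0 < (Nat.card G).factorization p := hp.factorization_pos_of_dvd hn0 hpn
  have hcard : Nat.card P = p ^ ((Nat.card G).factorization p) := P.card_eq_multiplicity
  have h1 : 1 < Nat.card (P : Subgroup G) := by
    rw [hcard]; exact Nat.one_lt_pow hk.ne' hp.one_lt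
  refine ⟨P.1, ((P.1).one_lt_card_iff_ne_bot).mp h1, ?_, hcard⟩
  intro h
  have hPn : Nat.card (P : Subgroup G) = Nat.card G := by
    rw [h, Subgroup.card_top]
  have hq' : q ∣ p ^ ((Nat.card G).factorization p) := by
    rw [← hcard, hPn]; exact hqn
  have := hq.dvd_of_dvd_pow hq'
  exact hpq ((Nat.prime_dvd_prime_iff_eq hq hp).mp this).symm

theorem coprimeGraph_bipartite_iff {G : Type*} [Group G] [Finite G]
    (hG : 1 < Nat.card G) :
    (coprimeGraph G).Colorable 2 ↔ (Nat.card G).primeFactors.card ≤ 2 := by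
  have hn0 : Nat.card G ≠ 0 := Nat.card_pos.ne'
  constructor
  · intro hcol
    classical
    by_contra hle
    push_neg at hle
    rw [Finset.two_lt_card_iff] at hle
    obtain ⟨p, q, r, hpm, hqm, hrm, hpq, hpr, hqr⟩ := hle
    obtain ⟨hp, hpn, -⟩ := Nat.mem_primeFactors.mp hpm
    obtain ⟨hq, hqn, -⟩ := Nat.mem_primeFactors.mp hqm
    obtain ⟨hr, hrn, -⟩ := Nat.mem_primeFactors.mp hrm
    obtain ⟨H1, hb1, ht1, hc1⟩ := sylow_vertex_aux p q hp hq hpq hpn hqn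
    obtain ⟨H2, hb2, ht2, hc2⟩ := sylow_vertex_aux q r hq hr hqr hqn hrn
    obtain ⟨H3, hb3, ht3, hc3⟩ := sylow_vertex_aux r p hr hp (Ne.symm hpr) hrn hpn
    set v1 : {H : Subgroup G // H ≠ ⊥ ∧ H ≠ ⊤} := ⟨H1, hb1, ht1⟩
    set v2 : {H : Subgroup G // H ≠ ⊥ ∧ H ≠ ⊤} := ⟨H2, hb2, ht2⟩
    set v3 : {H : Subgroup G // H ≠ ⊥ ∧ H ≠ ⊤} := ⟨H3, hb3, ht3⟩
    have key : ∀ (a b : {H : Subgroup G // H ≠ ⊥ ∧ H ≠ ⊤}),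
        Nat.card a.1 ≠ 1 → Nat.Coprime (Nat.card a.1) (Nat.card b.1) →
        (coprimeGraph G).Adj a b := by
      intro a b h1 hcop
      refine ⟨fun h => ?_, hcop⟩
      subst h
      exact h1 (by simpa [Nat.Coprime, Nat.gcd_self] using hcop)
    have hone : ∀ (s : ℕ), s.Prime → s ∣ Nat.card G →
        s ^ ((Nat.card G).factorization s) ≠ 1 := fun s hs hsn => by
      have := hs.factorization_pos_of_dvd hn0 hsn
      exact (Nat.one_lt_pow this.ne' hs.one_lt).ne'
    have h12 : (coprimeGraph G).Adj v1 v2 := by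
      refine key _ _ (hc1 ▸ hone p hp hpn) ?_
      rw [hc1, hc2]
      apply Nat.Coprime.pow _ _ ((Nat.coprime_primes hp hq).mpr hpq)
    have h13 : (coprimeGraph G).Adj v1 v3 := by
      refine key _ _ (hc1 ▸ hone p hp hpn) ?_
      rw [hc1, hc3]
      apply Nat.Coprime.pow _ _ ((Nat.coprime_primes hp hr).mpr hpr)
    have h23 : (coprimeGraph G).Adj v2 v3 := by
      refine key _ _ (hc2 ▸ hone q hq hqn) ?_
      rw [hc2, hc3]
      apply Nat.Coprime.pow _ _ ((Nat.coprime_primes hq hr).mpr hqr)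
    exact hcol.cliqueFree (by norm_num) {v1, v2, v3}
      (is3Clique_triple_iff.mpr ⟨h12, h13, h23⟩)
  · intro hle
    obtain ⟨p, hp, hpn⟩ := Nat.exists_prime_and_dvd (by omega : Nat.card G ≠ 1)
    refine ⟨SimpleGraph.Coloring.mk
      (fun H => if p ∣ Nat.card H.1.1 then (0 : Fin 2) else 1) ?_⟩
    rintro H K ⟨hne, hcop⟩ hc
    by_cases h1 : p ∣ Nat.card H.1 <;> by_cases h2 : p ∣ Nat.card K.1 <;>
      simp [h1, h2] at hc
    · have hd := Nat.dvd_gcd h1 h2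
      rw [Nat.Coprime] at hcop
      rw [hcop] at hd
      exact hp.ne_one (Nat.dvd_one.mp hd)
    · have hH1 : Nat.card H.1 ≠ 1 := fun h => H.2.1 (Subgroup.card_eq_one.mp h)
      have hK1 : Nat.card K.1 ≠ 1 := fun h => K.2.1 (Subgroup.card_eq_one.mp h)
      obtain ⟨a, ha, haH⟩ := Nat.exists_prime_and_dvd hH1
      obtain ⟨b, hb, hbK⟩ := Nat.exists_prime_and_dvd hK1
      have hamem : a ∈ (Nat.card G).primeFactors := by
        rw [Nat.mem_primeFactors]
        exact ⟨ha, haH.trans (Subgroup.card_subgroup_dvd_card H.1), hn0⟩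
      have hbmem : b ∈ (Nat.card G).primeFactors := by
        rw [Nat.mem_primeFactors]
        exact ⟨hb, hbK.trans (Subgroup.card_subgroup_dvd_card K.1), hn0⟩
      have hpmem : p ∈ (Nat.card G).primeFactors := by
        rw [Nat.mem_primeFactors]; exact ⟨hp, hpn, hn0⟩
      have hap : a ≠ p := fun h => h1 (h ▸ haH)
      have hbp : b ≠ p := fun h => h2 (h ▸ hbK)
      have herase : ((Nat.card G).primeFactors.erase p).card ≤ 1 := by
        rw [Finset.card_erase_of_mem hpmem]; omega
      have hab : a = b := Finset.card_le_one.mp herase a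
        (Finset.mem_erase.mpr ⟨hap, hamem⟩) b (Finset.mem_erase.mpr ⟨hbp, hbmem⟩)
      have hd := Nat.dvd_gcd haH (hab ▸ hbK)
      rw [Nat.Coprime] at hcop
      rw [hcop] at hd
      exact ha.ne_one (Nat.dvd_one.mp hd)
end

section
/- Let G be a finite group. If either (i) |G| = p·q for two distinct primes p, q, or (ii) |G| = p²·q for two distinct primes p, q and G has no subgroup of order p·q, then 𝒫(G) is a complete bipartite graph, i.e. 𝒫(G) is isomorphic to the complete bipartite graph K_{m,n} for some m, n ≥ 1. (This covers the groups ℤ_{pq}, ℤ_q⋊ℤ_p, (ℤ_p×ℤ_p)⋊ℤ_q and A₄ of the paper's classification.) -/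
open SimpleGraph

private lemma div_cases {p q d : ℕ} (hp : p.Prime) (hq : q.Prime) (hpq : p ≠ q)
    (hd : d ∣ p ^ 2 * q) (hd1 : d ≠ 1) (hdn : d ≠ p * q) (hdt : d ≠ p ^ 2 * q) :
    d = q ∨ d = p ∨ d = p ^ 2 := by
  have hcop : Nat.Coprime p q := (Nat.coprime_primes hp hq).mpr hpq
  by_cases hqd : q ∣ d
  · by_cases hpd : p ∣ d
    · exfalso
      have hpqd : p * q ∣ d := Nat.Coprime.mul_dvd_of_dvd_of_dvd hcop hpd hqd
      obtain ⟨e, he⟩ := hpqd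
      have h2 : p * q * e ∣ p * q * p := by
        rw [← he]; convert hd using 1; ring
      have he' : e ∣ p := (mul_dvd_mul_iff_left (Nat.mul_ne_zero hp.pos.ne' hq.pos.ne')).mp h2
      rcases (Nat.dvd_prime hp).mp he' with rfl | rfl
      · simp at he; exact hdn he
      · exact hdt (by rw [he]; ring)
    · left
      have hc : Nat.Coprime d (p ^ 2) :=
        Nat.Coprime.pow_right 2 ((hp.coprime_iff_not_dvd).mpr hpd).symm
      have hdq : d ∣ q := hc.dvd_of_dvd_mul_left hd
      rcases (Nat.dvd_prime hq).mp hdq with h | h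
      · exact absurd h hd1
      · exact h
  · right
    have hc : Nat.Coprime d q := ((hq.coprime_iff_not_dvd).mpr hqd).symm
    have hdp : d ∣ p ^ 2 := hc.dvd_of_dvd_mul_right hd
    obtain ⟨i, hi, rfl⟩ := (Nat.dvd_prime_pow hp).mp hdp
    interval_cases i
    · simp at hd1
    · left; simp
    · right; rfl

private lemma exists_subgroup_prime {G : Type*} [Group G] [Finite G] {r : ℕ}
    (hr : r.Prime) (hdvd : r ∣ Nat.card G) (hlt : r < Nat.card G) :
    ∃ H : Subgroup G, (H ≠ ⊥ ∧ H ≠ ⊤) ∧ Nat.card H = r := by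
  have : Fact r.Prime := ⟨hr⟩
  cases nonempty_fintype G
  have hdvd' : r ∣ Fintype.card G := by rwa [Nat.card_eq_fintype_card] at hdvd
  obtain ⟨x, hx⟩ := exists_prime_orderOf_dvd_card r hdvd'
  refine ⟨Subgroup.zpowers x, ⟨?_, ?_⟩, ?_⟩
  · intro hbot
    have h1 : Nat.card (Subgroup.zpowers x) = 1 := by rw [hbot]; simp
    rw [Nat.card_zpowers, hx] at h1
    exact hr.ne_one h1
  · intro htop
    have h1 : Nat.card (Subgroup.zpowers x) = Nat.card G := by
      rw [htop]; exact Subgroup.card_top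
    rw [Nat.card_zpowers, hx] at h1
    exact absurd h1 hlt.ne
  · rw [Nat.card_zpowers, hx]

theorem coprimeGraph_completeBipartite {G : Type*} [Group G] [Finite G]
    (h : (∃ p q : ℕ, p.Prime ∧ q.Prime ∧ p ≠ q ∧ Nat.card G = p * q) ∨
      (∃ p q : ℕ, p.Prime ∧ q.Prime ∧ p ≠ q ∧ Nat.card G = p ^ 2 * q ∧
        ¬ ∃ H : Subgroup G, Nat.card H = p * q)) :
    ∃ m n : ℕ, 1 ≤ m ∧ 1 ≤ n ∧
      Nonempty (coprimeGraph G ≃g completeBipartiteGraph (Fin m) (Fin n)) := by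
  classical
  obtain ⟨p, q, hp, hq, hpq, hkey, hexq, hexp⟩ :
      ∃ p q : ℕ, p.Prime ∧ q.Prime ∧ p ≠ q ∧
        (∀ H : Subgroup G, H ≠ ⊥ → H ≠ ⊤ →
          Nat.card H = q ∨ Nat.card H = p ∨ Nat.card H = p ^ 2) ∧
        (∃ H : Subgroup G, (H ≠ ⊥ ∧ H ≠ ⊤) ∧ Nat.card H = q) ∧
        (∃ H : Subgroup G, (H ≠ ⊥ ∧ H ≠ ⊤) ∧ Nat.card H ≠ q) := by
    rcases h with ⟨p, q, hp, hq, hpq, hG⟩ | ⟨p, q, hp, hq, hpq, hG, hno⟩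
    · refine ⟨p, q, hp, hq, hpq, ?_, ?_, ?_⟩
      · intro H hbot htop
        have hd : Nat.card H ∣ p * q := hG ▸ Subgroup.card_subgroup_dvd_card H
        refine div_cases hp hq hpq (hd.trans ⟨p, by ring⟩) ?_ ?_ ?_
        · intro h1; exact hbot ((Subgroup.card_eq_one).mp h1)
        · intro h1
          exact htop (Subgroup.eq_top_of_card_eq H (by rw [h1, hG]))
        · intro h1
          have := Nat.le_of_dvd (Nat.mul_pos hp.pos hq.pos) (h1 ▸ hd)
          nlinarith [hp.two_le, hq.two_le]
      · refine exists_subgroup_prime hq ⟨p, by rw [hG]; ring⟩ ?_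
        rw [hG]; nlinarith [hp.two_le, hq.two_le]
      · obtain ⟨H, hH, hc⟩ := exists_subgroup_prime hp ⟨q, hG⟩
          (by rw [hG]; nlinarith [hp.two_le, hq.two_le])
        exact ⟨H, hH, by rw [hc]; exact hpq⟩
    · refine ⟨p, q, hp, hq, hpq, ?_, ?_, ?_⟩
      · intro H hbot htop
        have hd : Nat.card H ∣ p ^ 2 * q := hG ▸ Subgroup.card_subgroup_dvd_card H
        refine div_cases hp hq hpq hd ?_ ?_ ?_
        · intro h1; exact hbot ((Subgroup.card_eq_one).mp h1)
        · intro h1; exact hno ⟨H, h1⟩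
        · intro h1
          exact htop (Subgroup.eq_top_of_card_eq H (by rw [h1, hG]))
      · refine exists_subgroup_prime hq ⟨p ^ 2, by rw [hG]; ring⟩ ?_
        rw [hG, pow_two]
        nlinarith [Nat.mul_le_mul hp.two_le hp.two_le, hq.pos]
      · obtain ⟨H, hH, hc⟩ := exists_subgroup_prime hp ⟨p * q, by rw [hG]; ring⟩
          (by rw [hG, pow_two]
              nlinarith [Nat.mul_le_mul hp.two_le hq.two_le, hp.pos])
        exact ⟨H, hH, by rw [hc]; exact hpq⟩
  set V := {H : Subgroup G // H ≠ ⊥ ∧ H ≠ ⊤} with hV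
  let Pq : V → Prop := fun v => Nat.card v.1 = q
  have hadj : ∀ v w : V, (coprimeGraph G).Adj v w ↔ (Pq v ∧ ¬ Pq w ∨ ¬ Pq v ∧ Pq w) := by
    intro v w
    constructor
    · rintro ⟨hne, hcop⟩
      by_cases hv : Pq v <;> by_cases hw : Pq w
      · exfalso
        rw [show Nat.card v.1 = q from hv, show Nat.card w.1 = q from hw] at hcop
        exact hq.ne_one (by simpa [Nat.Coprime, Nat.gcd_self] using hcop)
      · exact Or.inl ⟨hv, hw⟩
      · exact Or.inr ⟨hv, hw⟩
      · exfalso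
        have hpv : p ∣ Nat.card v.1 := by
          rcases hkey v.1 v.2.1 v.2.2 with h1 | h1 | h1
          · exact absurd h1 hv
          · exact h1 ▸ dvd_rfl
          · exact h1 ▸ dvd_pow_self p two_ne_zero
        have hpw : p ∣ Nat.card w.1 := by
          rcases hkey w.1 w.2.1 w.2.2 with h1 | h1 | h1
          · exact absurd h1 hw
          · exact h1 ▸ dvd_rfl
          · exact h1 ▸ dvd_pow_self p two_ne_zero
        have : p ∣ 1 := hcop ▸ Nat.dvd_gcd hpv hpw
        exact hp.ne_one (Nat.dvd_one.mp this)
    · have base : ∀ v w : V, Pq v → ¬ Pq w →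
          Nat.Coprime (Nat.card v.1) (Nat.card w.1) := by
        intro v w hv hw
        rw [show Nat.card v.1 = q from hv]
        rcases hkey w.1 w.2.1 w.2.2 with h1 | h1 | h1
        · exact absurd h1 hw
        · rw [h1]; exact (Nat.coprime_primes hq hp).mpr hpq.symm
        · rw [h1]; exact ((Nat.coprime_primes hq hp).mpr hpq.symm).pow_right 2
      rintro (⟨hv, hw⟩ | ⟨hv, hw⟩)
      · exact ⟨fun h1 => hw (h1 ▸ hv), base v w hv hw⟩
      · exact ⟨fun h1 => hv (h1 ▸ hw), (base w v hw hv).symm⟩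
  obtain ⟨m, ⟨em⟩⟩ := Finite.exists_equiv_fin {v : V // Pq v}
  obtain ⟨n, ⟨en⟩⟩ := Finite.exists_equiv_fin {v : V // ¬ Pq v}
  have hmem : Nonempty {v : V // Pq v} := by
    obtain ⟨H, hH, hc⟩ := hexq
    exact ⟨⟨⟨H, hH⟩, hc⟩⟩
  have hnem : Nonempty {v : V // ¬ Pq v} := by
    obtain ⟨H, hH, hc⟩ := hexp
    exact ⟨⟨⟨H, hH⟩, hc⟩⟩
  refine ⟨m, n, ?_, ?_, ⟨?_⟩⟩
  · have : Nonempty (Fin m) := ⟨em hmem.some⟩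
    exact Fin.pos_iff_nonempty.mpr this
  · have : Nonempty (Fin n) := ⟨en hnem.some⟩
    exact Fin.pos_iff_nonempty.mpr this
  · refine Iso.symm ⟨(Equiv.sumCongr em en).symm.trans (Equiv.sumCompl Pq), ?_⟩
    have hPm : ∀ a : Fin m, Pq ((em.symm a : {v : V // Pq v}) : V) := fun a => (em.symm a).2
    have hPn : ∀ a : Fin n, ¬ Pq ((en.symm a : {v : V // ¬ Pq v}) : V) := fun a => (en.symm a).2
    rintro (a | a) (b | b) <;> simp [hadj, hPm, hPn]
end

section
/- Let G be a finite group. Then 𝒫(G) is a complete graph on at least two vertices if and only if G is cyclic of order p·q for two distinct primes p, q. -/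
open SimpleGraph Pointwise

section Aux

variable {G : Type*} [Group G] [Finite G]

/-- In a complete coprime graph, every vertex has prime order. -/
lemma aux_prime
    (hc : ∀ H K : {H : Subgroup G // H ≠ ⊥ ∧ H ≠ ⊤}, H ≠ K → (coprimeGraph G).Adj H K)
    (H : Subgroup G) (hb : H ≠ ⊥) (ht : H ≠ ⊤) : (Nat.card H).Prime := by
  have h1 : 1 < Nat.card H := (Subgroup.one_lt_card_iff_ne_bot H).mpr hb
  set m := Nat.card H with hm
  have hp : m.minFac.Prime := Nat.minFac_prime (by omega)
  haveI : Fact m.minFac.Prime := ⟨hp⟩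
  obtain ⟨x, hx⟩ := exists_prime_orderOf_dvd_card' (G := H) m.minFac (Nat.minFac_dvd m)
  have hord : orderOf (x : G) = m.minFac := by rw [Subgroup.orderOf_coe, hx]
  set K := Subgroup.zpowers (x : G) with hK
  have hKcard : Nat.card K = m.minFac := by rw [hK, Nat.card_zpowers, hord]
  have hKle : K ≤ H := (Subgroup.zpowers_le).mpr x.2
  have hKb : K ≠ ⊥ := by
    intro h
    rw [h, Subgroup.card_bot] at hKcard
    exact hp.ne_one hKcard.symm
  have hKt : K ≠ ⊤ := fun h => ht (top_le_iff.mp (h ▸ hKle))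
  by_contra hnp
  have hne : K ≠ H := by
    intro h
    rw [h] at hKcard
    exact hnp (by rw [hm, hKcard]; exact hp)
  have hadj := (hc ⟨K, hKb, hKt⟩ ⟨H, hb, ht⟩ (by simpa [Subtype.ext_iff] using hne)).2
  simp only [hKcard] at hadj
  exact hp.ne_one (Nat.eq_one_of_dvd_coprimes hadj dvd_rfl (Nat.minFac_dvd m))

/-- In a complete coprime graph, every vertex is normal. -/
lemma aux_normal
    (hc : ∀ H K : {H : Subgroup G // H ≠ ⊥ ∧ H ≠ ⊤}, H ≠ K → (coprimeGraph G).Adj H K)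
    (H : Subgroup G) (hb : H ≠ ⊥) (ht : H ≠ ⊤) : H.Normal := by
  constructor
  intro n hn g
  set f := MulAut.conj g with hf
  set H' := H.map f.toMonoidHom with hH'
  have hinj : Function.Injective f.toMonoidHom := f.injective
  have hcard : Nat.card H' = Nat.card H :=
    (Nat.card_congr (Subgroup.equivMapOfInjective H _ hinj).toEquiv).symm
  have hb' : H' ≠ ⊥ := by
    intro hbot
    exact hb ((Subgroup.map_eq_bot_iff_of_injective H hinj).mp (hH' ▸ hbot))
  have ht' : H' ≠ ⊤ := by
    intro h
    apply ht
    rw [← Subgroup.card_eq_iff_eq_top] at h ⊢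
    rw [← hcard, h]
  have heq : H' = H := by
    by_contra hne
    have hadj := (hc ⟨H', hb', ht'⟩ ⟨H, hb, ht⟩ (by simpa [Subtype.ext_iff] using hne)).2
    rw [hcard] at hadj
    have h1 : 1 < Nat.card H := (Subgroup.one_lt_card_iff_ne_bot H).mpr hb
    have := Nat.eq_one_of_dvd_coprimes hadj dvd_rfl dvd_rfl
    omega
  have : g * n * g⁻¹ ∈ H' := ⟨n, hn, rfl⟩
  rwa [heq] at this

end Aux

theorem coprimeGraph_complete_iff {G : Type*} [Group G] [Finite G] :
    ((∀ H K : {H : Subgroup G // H ≠ ⊥ ∧ H ≠ ⊤}, H ≠ K → (coprimeGraph G).Adj H K) ∧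
        1 < Nat.card {H : Subgroup G // H ≠ ⊥ ∧ H ≠ ⊤}) ↔
      (IsCyclic G ∧ ∃ p q : ℕ, p.Prime ∧ q.Prime ∧ p ≠ q ∧ Nat.card G = p * q) := by
  constructor
  · rintro ⟨hc, hcard⟩
    haveI : Finite (Subgroup G) :=
      Finite.of_injective (fun H => (H : Set G)) SetLike.coe_injective
    haveI : Nontrivial {H : Subgroup G // H ≠ ⊥ ∧ H ≠ ⊤} :=
      Finite.one_lt_card_iff_nontrivial.mp hcard
    obtain ⟨A, B, hAB⟩ := exists_pair_ne {H : Subgroup G // H ≠ ⊥ ∧ H ≠ ⊤}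
    set P := A.1 with hP
    set Q := B.1 with hQ
    set p := Nat.card P with hp
    set q := Nat.card Q with hq
    have hpprime : p.Prime := aux_prime hc P A.2.1 A.2.2
    have hqprime : q.Prime := aux_prime hc Q B.2.1 B.2.2
    have hcop : Nat.Coprime p q := (hc A B hAB).2
    have hpq : p ≠ q := by
      intro h
      rw [h] at hcop
      exact hqprime.ne_one (Nat.eq_one_of_dvd_coprimes hcop dvd_rfl dvd_rfl)
    haveI hPn : P.Normal := aux_normal hc P A.2.1 A.2.2
    haveI hQn : Q.Normal := aux_normal hc Q B.2.1 B.2.2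
    -- sup is top
    have hsup : P ⊔ Q = ⊤ := by
      by_contra hT
      have hTb : P ⊔ Q ≠ ⊥ := by
        intro h
        exact A.2.1 (le_bot_iff.mp (le_trans le_sup_left (le_of_eq h)))
      have hr : (Nat.card (P ⊔ Q : Subgroup G)).Prime := aux_prime hc _ hTb hT
      have hdp : p ∣ Nat.card (P ⊔ Q : Subgroup G) := Subgroup.card_dvd_of_le le_sup_left
      have hdq : q ∣ Nat.card (P ⊔ Q : Subgroup G) := Subgroup.card_dvd_of_le le_sup_right
      have hep : p = Nat.card (P ⊔ Q : Subgroup G) :=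
        (Nat.prime_dvd_prime_iff_eq hpprime hr).mp hdp
      have heq : q = Nat.card (P ⊔ Q : Subgroup G) :=
        (Nat.prime_dvd_prime_iff_eq hqprime hr).mp hdq
      exact hpq (hep.trans heq.symm)
    have hle : Nat.card G ≤ p * q := by
      have h1 : (↑(P ⊔ Q) : Set G) = (P : Set G) * (Q : Set G) := Subgroup.mul_normal P Q
      calc Nat.card G = Nat.card (P ⊔ Q : Subgroup G) :=
            ((Subgroup.card_eq_iff_eq_top _).mpr hsup).symm
        _ = Nat.card (↑(P ⊔ Q) : Set G) := rfl
        _ = Nat.card ((P : Set G) * (Q : Set G)) := by rw [h1]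
        _ ≤ Nat.card (P : Set G) * Nat.card (Q : Set G) := Set.natCard_mul_le
        _ = p * q := rfl
    have hdvd : p * q ∣ Nat.card G :=
      Nat.Coprime.mul_dvd_of_dvd_of_dvd hcop
        (Subgroup.card_subgroup_dvd_card P) (Subgroup.card_subgroup_dvd_card Q)
    have hn : Nat.card G = p * q := le_antisymm hle (Nat.le_of_dvd Nat.card_pos hdvd)
    refine ⟨?_, p, q, hpprime, hqprime, hpq, hn⟩
    -- disjoint
    have hdisj : Disjoint P Q := by
      rw [disjoint_iff, Subgroup.eq_bot_iff_card]
      have h1 : Nat.card (P ⊓ Q : Subgroup G) ∣ p := Subgroup.card_dvd_of_le inf_le_left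
      have h2 : Nat.card (P ⊓ Q : Subgroup G) ∣ q := Subgroup.card_dvd_of_le inf_le_right
      exact Nat.dvd_one.mp (hcop ▸ Nat.dvd_gcd h1 h2)
    have hcomm := Subgroup.commute_of_normal_of_disjoint P Q hPn hQn hdisj
    haveI : Fact p.Prime := ⟨hpprime⟩
    haveI : Fact q.Prime := ⟨hqprime⟩
    obtain ⟨x, hx⟩ := exists_prime_orderOf_dvd_card' (G := P) p (dvd_of_eq hp)
    obtain ⟨y, hy⟩ := exists_prime_orderOf_dvd_card' (G := Q) q (dvd_of_eq hq)
    have hxo : orderOf (x : G) = p := by rw [Subgroup.orderOf_coe, hx]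
    have hyo : orderOf (y : G) = q := by rw [Subgroup.orderOf_coe, hy]
    have hxy : Commute (x : G) (y : G) := hcomm _ _ x.2 y.2
    have horder : orderOf ((x : G) * y) = p * q := by
      rw [hxy.orderOf_mul_eq_mul_orderOf_of_coprime (by rw [hxo, hyo]; exact hcop), hxo, hyo]
    exact isCyclic_of_orderOf_eq_card _ (by rw [horder, hn])
  · rintro ⟨hcyc, p, q, hpprime, hqprime, hpq, hn⟩
    haveI : Fact p.Prime := ⟨hpprime⟩
    haveI : Fact q.Prime := ⟨hqprime⟩
    have hcop : Nat.Coprime p q := (Nat.coprime_primes hpprime hqprime).mpr hpq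
    -- classify orders of proper nontrivial subgroups
    have horders : ∀ H : Subgroup G, H ≠ ⊥ → H ≠ ⊤ → Nat.card H = p ∨ Nat.card H = q := by
      intro H hb ht
      set d := Nat.card H with hd
      have hdvd : d ∣ p * q := hn ▸ Subgroup.card_subgroup_dvd_card H
      have hd1 : d ≠ 1 := fun h => hb ((Subgroup.eq_bot_iff_card _).mpr h)
      have hdpq : d ≠ p * q := by
        intro h
        exact ht ((Subgroup.card_eq_iff_eq_top _).mp (by rw [← hd, h, hn]))
      by_cases hpd : p ∣ d
      · by_cases hqd : q ∣ d
        · exact absurd (Nat.dvd_antisymm hdvd (hcop.mul_dvd_of_dvd_of_dvd hpd hqd)) hdpq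
        · left
          have hcq : Nat.Coprime d q := Nat.Coprime.symm (hqprime.coprime_iff_not_dvd.mpr hqd)
          exact Nat.dvd_antisymm (hcq.dvd_of_dvd_mul_right hdvd) hpd
      · by_cases hqd : q ∣ d
        · right
          have hcp : Nat.Coprime d p := Nat.Coprime.symm (hpprime.coprime_iff_not_dvd.mpr hpd)
          exact Nat.dvd_antisymm (hcp.dvd_of_dvd_mul_left hdvd) hqd
        · exfalso
          have hcp : Nat.Coprime p d := hpprime.coprime_iff_not_dvd.mpr hpd
          have hcq : Nat.Coprime q d := hqprime.coprime_iff_not_dvd.mpr hqd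
          have hco : Nat.Coprime (p * q) d := Nat.coprime_mul_iff_left.mpr ⟨hcp, hcq⟩
          exact hd1 (Nat.dvd_one.mp (hco ▸ Nat.dvd_gcd hdvd dvd_rfl))
    -- uniqueness of subgroups of given prime order in a cyclic group
    have huniq : ∀ (r : ℕ), r.Prime → ∀ (H K : Subgroup G),
        Nat.card H = r → Nat.card K = r → H = K := by
      intro r hr H K hH hK
      have key : ∀ L : Subgroup G, Nat.card L = r → (L : Set G) = {x : G | x ^ r = 1} := by
        intro L hL
        haveI := Fintype.ofFinite G
        classical
        apply Set.eq_of_subset_of_ncard_le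
        · intro x hx
          have h1 : (⟨x, hx⟩ : L) ^ Nat.card L = 1 := pow_card_eq_one'
          rw [hL] at h1
          have : x ^ r = 1 := by
            have := congrArg (Subgroup.subtype L) h1
            simpa using this
          exact this
        · rw [← Nat.card_coe_set_eq, ← Nat.card_coe_set_eq]
          have h2 : Nat.card (L : Set G) = r := hL
          rw [h2]
          have h3 : Nat.card {x : G | x ^ r = 1} =
              (Finset.univ.filter (fun a : G => a ^ r = 1)).card := by
            rw [Nat.card_eq_fintype_card]
            simp [Fintype.card_subtype]
          rw [h3]
          simpa using IsCyclic.card_pow_eq_one_le (α := G) hr.pos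
        · exact Set.toFinite _
      exact SetLike.coe_injective ((key H hH).trans (key K hK).symm)
    constructor
    · intro H K hne
      refine ⟨hne, ?_⟩
      rcases horders H.1 H.2.1 H.2.2 with h1 | h1 <;>
        rcases horders K.1 K.2.1 K.2.2 with h2 | h2
      · exact absurd (Subtype.ext (huniq p hpprime _ _ h1 h2)) hne
      · rw [h1, h2]; exact hcop
      · rw [h1, h2]; exact hcop.symm
      · exact absurd (Subtype.ext (huniq q hqprime _ _ h1 h2)) hne
    · -- at least two vertices
      obtain ⟨x, hx⟩ := exists_prime_orderOf_dvd_card' (G := G) p (hn ▸ dvd_mul_right p q)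
      obtain ⟨y, hy⟩ := exists_prime_orderOf_dvd_card' (G := G) q (hn ▸ dvd_mul_left q p)
      set P := Subgroup.zpowers x with hPdef
      set Q := Subgroup.zpowers y with hQdef
      have hPcard : Nat.card P = p := by rw [hPdef, Nat.card_zpowers, hx]
      have hQcard : Nat.card Q = q := by rw [hQdef, Nat.card_zpowers, hy]
      have hq1 : 1 < q := hqprime.one_lt
      have hp1 : 1 < p := hpprime.one_lt
      have hPb : P ≠ ⊥ := fun h => by
        rw [h, Subgroup.card_bot] at hPcard; omega
      have hQb : Q ≠ ⊥ := fun h => by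
        rw [h, Subgroup.card_bot] at hQcard; omega
      have hPt : P ≠ ⊤ := by
        intro h
        have h2 := (Subgroup.card_eq_iff_eq_top P).mpr h
        rw [hPcard, hn] at h2
        nlinarith
      have hQt : Q ≠ ⊤ := by
        intro h
        have h2 := (Subgroup.card_eq_iff_eq_top Q).mpr h
        rw [hQcard, hn] at h2
        nlinarith
      have hnt : Nontrivial {H : Subgroup G // H ≠ ⊥ ∧ H ≠ ⊤} := by
        refine ⟨⟨P, hPb, hPt⟩, ⟨Q, hQb, hQt⟩, ?_⟩
        intro h
        rw [Subtype.ext_iff] at h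
        simp only at h
        rw [h] at hPcard
        rw [hPcard] at hQcard
        exact hpq hQcard
      haveI : Finite (Subgroup G) :=
        Finite.of_injective (fun H => (H : Set G)) SetLike.coe_injective
      exact Finite.one_lt_card_iff_nontrivial.mpr hnt
end

section
/- Let G be a finite group. There exists n ≥ 2 such that 𝒫(G) is isomorphic to the path graph on n vertices if and only if G is cyclic of order p·q for two distinct primes p, q. -/
open SimpleGraph

private lemma pg2_adj (i j : Fin 2) : (pathGraph 2).Adj i j ↔ i ≠ j := by
  rw [pathGraph_adj]
  have hi := i.isLt
  have hj := j.isLt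
  constructor
  · intro h hij
    rw [hij] at h
    omega
  · intro h
    have h2 : i.val ≠ j.val := fun hh => h (Fin.ext hh)
    omega

/-! ### Path graph facts -/

private lemma pg_deg {n : ℕ} {v a b c : Fin n} (ha : (pathGraph n).Adj v a)
    (hb : (pathGraph n).Adj v b) (hc : (pathGraph n).Adj v c)
    (hab : a ≠ b) (hac : a ≠ c) (hbc : b ≠ c) : False := by
  rw [pathGraph_adj] at ha hb hc
  have h1 : a.val ≠ b.val := fun h => hab (Fin.ext h)
  have h2 : a.val ≠ c.val := fun h => hac (Fin.ext h)
  have h3 : b.val ≠ c.val := fun h => hbc (Fin.ext h)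
  omega

private lemma pg_tri {n : ℕ} {a b c : Fin n} (h1 : (pathGraph n).Adj a b)
    (h2 : (pathGraph n).Adj a c) (h3 : (pathGraph n).Adj b c) : False := by
  rw [pathGraph_adj] at h1 h2 h3
  omega

private lemma pg_c4 {n : ℕ} {a b c d : Fin n} (h1 : (pathGraph n).Adj a c)
    (h2 : (pathGraph n).Adj a d) (h3 : (pathGraph n).Adj b c)
    (h4 : (pathGraph n).Adj b d) (hab : a ≠ b) (hcd : c ≠ d) : False := by
  rw [pathGraph_adj] at h1 h2 h3 h4
  have h5 : a.val ≠ b.val := fun h => hab (Fin.ext h)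
  have h6 : c.val ≠ d.val := fun h => hcd (Fin.ext h)
  omega

private lemma pg_iso {n : ℕ} (hn : 2 ≤ n) (v : Fin n) : ∃ w, (pathGraph n).Adj v w := by
  by_cases h : v.val + 1 < n
  · exact ⟨⟨v.val + 1, h⟩, pathGraph_adj.mpr (Or.inl rfl)⟩
  · have hv := v.isLt
    exact ⟨⟨v.val - 1, by omega⟩, pathGraph_adj.mpr (Or.inr (by simp; omega))⟩

/-! ### Auxiliary number-theory facts -/

private lemma eq_one_of_no_prime {k : ℕ} (h : ∀ r : ℕ, r.Prime → r ∣ k → False) : k = 1 := by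
  by_contra hk
  obtain ⟨r, hr, hrd⟩ := Nat.exists_prime_and_dvd hk
  exact h r hr hrd

private lemma dvd_prime_mul {p q d : ℕ} (hp : p.Prime) (hq : q.Prime) (hpq : p ≠ q)
    (hd : d ∣ p * q) (h1 : d ≠ 1) (h2 : d ≠ p * q) : d = p ∨ d = q := by
  by_cases hpd : p ∣ d
  · left
    obtain ⟨t, rfl⟩ := hpd
    have hp0 : 0 < p := hp.pos
    have ht : t ∣ q := (mul_dvd_mul_iff_left hp0.ne').mp hd
    rcases (Nat.dvd_prime hq).mp ht with rfl | rfl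
    · simp
    · exact absurd rfl h2
  · right
    have hcop : Nat.Coprime p d := (Nat.Prime.coprime_iff_not_dvd hp).mpr hpd
    have : d ∣ q := (Nat.Coprime.dvd_of_dvd_mul_left (Nat.Coprime.symm hcop) hd)
    exact ((Nat.dvd_prime hq).mp this).resolve_left h1

/-! ### Triple extraction -/

private lemma exists_triple_of_three_le_card {α : Type*} [Finite α] (h : 3 ≤ Nat.card α) :
    ∃ a b c : α, a ≠ b ∧ a ≠ c ∧ b ≠ c := by
  classical
  have := Fintype.ofFinite α
  rw [Nat.card_eq_fintype_card] at h
  have h1 : 1 < (Finset.univ : Finset α).card := by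
    rw [Finset.card_univ]; omega
  obtain ⟨a, -⟩ := Finset.card_pos.mp (by omega : 0 < (Finset.univ : Finset α).card)
  obtain ⟨b, -, hb⟩ := Finset.exists_mem_ne h1 a
  have h2 : 0 < ((Finset.univ : Finset α).erase a |>.erase b).card := by
    have := Finset.card_erase_le (a := b) (s := (Finset.univ : Finset α).erase a)
    have := Finset.card_erase_le (a := a) (s := (Finset.univ : Finset α))
    have h3 : ((Finset.univ : Finset α).erase a).card = Finset.univ.card - 1 :=
      Finset.card_erase_of_mem (Finset.mem_univ a)
    have h4 : (((Finset.univ : Finset α).erase a).erase b).card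
        = ((Finset.univ : Finset α).erase a).card - 1 :=
      Finset.card_erase_of_mem (Finset.mem_erase.mpr ⟨hb, Finset.mem_univ b⟩)
    rw [Finset.card_univ] at h3
    omega
  obtain ⟨c, hc⟩ := Finset.card_pos.mp h2
  rw [Finset.mem_erase, Finset.mem_erase] at hc
  exact ⟨a, b, c, hb.symm, (hc.2.1).symm, (hc.1).symm⟩

/-! ### Group-theory auxiliary lemmas -/

section Groups
variable {G : Type*} [Group G] [Finite G]

private lemma factorization_eq_one {p : ℕ} (hp : p.Prime) (h1 : p ∣ Nat.card G)
    (h2 : ¬ p * p ∣ Nat.card G) : (Nat.card G).factorization p = 1 := by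
  have hN : Nat.card G ≠ 0 := Nat.card_pos.ne'
  have hle : 1 ≤ (Nat.card G).factorization p := by
    rw [← hp.pow_dvd_iff_le_factorization hN, pow_one]; exact h1
  have hlt : ¬ 2 ≤ (Nat.card G).factorization p := by
    rw [← hp.pow_dvd_iff_le_factorization hN, pow_two]; exact h2
  omega

/-- In a group with commuting elements and `p`-multiplicity one, subgroups of order `p`
are unique. -/
private lemma unique_card_subgroup {p : ℕ} (hp : p.Prime)
    (hcomm : ∀ a b : G, a * b = b * a)
    (h1 : p ∣ Nat.card G) (h2 : ¬ p * p ∣ Nat.card G)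
    (H K : Subgroup G) (hH : Nat.card H = p) (hK : Nat.card K = p) : H = K := by
  haveI : Fact p.Prime := ⟨hp⟩
  have hfac : (Nat.card G).factorization p = 1 := factorization_eq_one hp h1 h2
  have hmul : ∀ L : Subgroup G, Nat.card L = p → ∀ S : Sylow p G, L = S := by
    intro L hL S0
    obtain ⟨S, hLS⟩ := (IsPGroup.of_card (by rw [hL, pow_one])).exists_le_sylow
    have hScard : Nat.card S = p := by
      rw [Sylow.card_eq_multiplicity, hfac, pow_one]
    have hLSeq : L = (S : Subgroup G) :=
      Subgroup.eq_of_le_of_card_ge hLS (by rw [hL, hScard])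
    have hnormal : ∀ T : Sylow p G, (T : Subgroup G).Normal := fun T =>
      ⟨fun n hn g => by rw [hcomm g n, mul_assoc, mul_inv_cancel, mul_one]; exact hn⟩
    haveI := hnormal S0
    obtain ⟨g, hg⟩ := MulAction.exists_smul_eq G S0 S
    rw [Sylow.smul_eq_of_normal] at hg
    rw [hLSeq, ← hg]
  obtain S0 : Sylow p G := default
  rw [hmul H hH S0, hmul K hK S0]

end Groups

open scoped commutatorElement

section Core
variable {G : Type*} [Group G] [Finite G]

private lemma normal_of_unique_card {H : Subgroup G}
    (huniq : ∀ K : Subgroup G, Nat.card K = Nat.card H → K = H) : H.Normal := by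
  constructor
  intro x hx g
  have hmap : Subgroup.map (MulAut.conj g).toMonoidHom H = H := by
    apply huniq
    exact Nat.card_congr
      (Subgroup.equivMapOfInjective H _ (MulAut.conj g).injective).symm.toEquiv
  rw [← hmap]
  exact Subgroup.mem_map.mpr ⟨x, hx, by simp [MulAut.conj_apply]⟩

private lemma forward_core {p q : ℕ}
    (hp : p.Prime) (hq : q.Prime) (hpq : p ≠ q)
    (hpd : p ∣ Nat.card G) (hqd : q ∣ Nat.card G)
    (hprimes : ∀ r : ℕ, r.Prime → r ∣ Nat.card G → r = p ∨ r = q)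
    (hnomix : ∀ H : Subgroup G, H ≠ ⊥ → H ≠ ⊤ → ¬(p ∣ Nat.card H ∧ q ∣ Nat.card H))
    (hU : ∀ H K : Subgroup G, H ≠ ⊥ → H ≠ ⊤ → K ≠ ⊥ → K ≠ ⊤ →
        q ∣ Nat.card H → q ∣ Nat.card K → H = K)
    (hdeg : ∀ v a b c : {H : Subgroup G // H ≠ ⊥ ∧ H ≠ ⊤},
        (coprimeGraph G).Adj v a → (coprimeGraph G).Adj v b → (coprimeGraph G).Adj v c →
        a ≠ b → a ≠ c → b ≠ c → False) :
    IsCyclic G ∧ Nat.card G = p * q := by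
  haveI : Fact p.Prime := ⟨hp⟩
  haveI : Fact q.Prime := ⟨hq⟩
  have hp2 := hp.two_le
  have hq2 := hq.two_le
  have hnebot : ∀ (H : Subgroup G) (m : ℕ), Nat.card H = m → m ≠ 1 → H ≠ ⊥ := by
    intro H m hc hm hb
    rw [hb, Subgroup.card_bot] at hc
    exact hm hc.symm
  have hnetop_q : ∀ (j : ℕ) (H : Subgroup G), Nat.card H = q ^ j → H ≠ ⊤ := by
    intro j H hc htop
    rw [htop, Subgroup.card_top] at hc
    have h1 : p ∣ q ^ j := hc ▸ hpd
    exact hpq ((Nat.prime_dvd_prime_iff_eq hp hq).mp (hp.dvd_of_dvd_pow h1))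
  have hnetop_p : ∀ (j : ℕ) (H : Subgroup G), Nat.card H = p ^ j → H ≠ ⊤ := by
    intro j H hc htop
    rw [htop, Subgroup.card_top] at hc
    have h1 : q ∣ p ^ j := hc ▸ hqd
    exact hpq ((Nat.prime_dvd_prime_iff_eq hq hp).mp (hq.dvd_of_dvd_pow h1)).symm
  -- the subgroup Q0 of order q
  obtain ⟨y, hy⟩ := exists_prime_orderOf_dvd_card' q hqd
  set Q0 : Subgroup G := Subgroup.zpowers y with hQ0def
  have hQ0 : Nat.card Q0 = q := by rw [hQ0def, Nat.card_zpowers, hy]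
  have hQ0bot : Q0 ≠ ⊥ := hnebot Q0 q hQ0 hq.ne_one
  have hQ0top : Q0 ≠ ⊤ := hnetop_q 1 Q0 (by rw [hQ0, pow_one])
  -- q has multiplicity one
  have hqq : ¬ q * q ∣ Nat.card G := by
    intro h
    obtain ⟨Q2, hQ2⟩ := Sylow.exists_subgroup_card_pow_prime q (n := 2)
      (by rw [pow_two]; exact h)
    have hne2 : q ^ 2 ≠ 1 := (Nat.one_lt_pow two_ne_zero hq.one_lt).ne'
    have h1 : Q0 = Q2 := hU Q0 Q2 hQ0bot hQ0top
      (hnebot Q2 (q ^ 2) hQ2 hne2)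
      (hnetop_q 2 Q2 hQ2)
      (by rw [hQ0]) (by rw [hQ2, pow_two]; exact Dvd.intro q rfl)
    rw [← h1, hQ0] at hQ2
    rw [pow_two] at hQ2
    nlinarith
  -- Q0 is normal
  have hQ0normal : Q0.Normal := by
    apply normal_of_unique_card
    intro K hK
    rw [hQ0] at hK
    exact hU K Q0 (hnebot K q hK hq.ne_one) (hnetop_q 1 K (by rw [hK, pow_one]))
      hQ0bot hQ0top (by rw [hK]) (by rw [hQ0])
  haveI := hQ0normal
  -- p has multiplicity one
  have hpp : ¬ p * p ∣ Nat.card G := by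
    intro hpp
    have hNq : Nat.card G = Nat.card (G ⧸ Q0) * q := by
      rw [Subgroup.card_eq_card_quotient_mul_card_subgroup Q0, hQ0]
    have hpGq : p ∣ Nat.card (G ⧸ Q0) := by
      have h1 : p ∣ Nat.card (G ⧸ Q0) * q := hNq ▸ (dvd_mul_right p p).trans hpp
      rcases (Nat.Prime.dvd_mul hp).mp h1 with h | h
      · exact h
      · exact absurd ((Nat.prime_dvd_prime_iff_eq hp hq).mp h) hpq
    obtain ⟨Sb, hSb⟩ := Sylow.exists_subgroup_card_pow_prime (G := G ⧸ Q0) p (n := 1)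
      (by rw [pow_one]; exact hpGq)
    rw [pow_one] at hSb
    set M := Sb.comap (QuotientGroup.mk' Q0) with hMdef
    have hQ0M : Q0 ≤ M := by
      intro z hz
      have hker : (QuotientGroup.mk' Q0) z = 1 := by
        rw [← MonoidHom.mem_ker, QuotientGroup.ker_mk']; exact hz
      exact Subgroup.mem_comap.mpr (by rw [hker]; exact Sb.one_mem)
    have hmapM : M.map (QuotientGroup.mk' Q0) = Sb :=
      Subgroup.map_comap_eq_self_of_surjective (QuotientGroup.mk'_surjective Q0) Sb
    have hMbot : M ≠ ⊥ := fun h => hQ0bot (le_bot_iff.mp (h ▸ hQ0M))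
    have hMtop : M ≠ ⊤ := by
      intro h
      rw [h, Subgroup.map_top_of_surjective _ (QuotientGroup.mk'_surjective Q0)] at hmapM
      have hc : Nat.card (G ⧸ Q0) = p := by rw [← hSb, ← hmapM, Subgroup.card_top]
      rw [hNq, hc] at hpp
      have : p ∣ q := (mul_dvd_mul_iff_left (by omega : p ≠ 0)).mp hpp
      exact hpq ((Nat.prime_dvd_prime_iff_eq hp hq).mp this)
    have hqM : q ∣ Nat.card M := hQ0 ▸ Subgroup.card_dvd_of_le hQ0M
    have hMneq : Nat.card M ≠ q := by
      intro h
      have h1 : Q0 = M := Subgroup.eq_of_le_of_card_ge hQ0M (by rw [h, hQ0])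
      rw [← h1] at hmapM
      have h2 : Sb = ⊥ := by
        rw [← hmapM, Subgroup.map_eq_bot_iff, QuotientGroup.ker_mk']
      rw [h2, Subgroup.card_bot] at hSb
      exact hp.ne_one hSb.symm
    have hpM : p ∣ Nat.card M := by
      by_contra hpM
      obtain ⟨t, ht⟩ := hqM
      have hMN : Nat.card M ∣ Nat.card G := Subgroup.card_subgroup_dvd_card M
      have ht1 : t = 1 := by
        apply eq_one_of_no_prime
        intro r hr hrt
        have hrM : r ∣ Nat.card M := ht ▸ (hrt.mul_left q)
        rcases hprimes r hr (hrM.trans hMN) with hr' | hr'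
        · exact hpM (hr' ▸ hrM)
        · refine hqq (dvd_trans ?_ hMN)
          rw [ht]
          exact mul_dvd_mul_left q (hr' ▸ hrt)
      rw [ht1, mul_one] at ht
      exact hMneq ht
    exact hnomix M hMbot hMtop ⟨hpM, hqM⟩
  -- the order of G is p * q
  have hNpq : Nat.card G = p * q := by
    have hcop : Nat.Coprime p q := (Nat.coprime_primes hp hq).mpr hpq
    obtain ⟨k, hk⟩ := hcop.mul_dvd_of_dvd_of_dvd hpd hqd
    have hk1 : k = 1 := by
      apply eq_one_of_no_prime
      intro r hr hrk
      have hrN : r ∣ Nat.card G := hk ▸ (hrk.mul_left (p * q))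
      obtain ⟨t, ht2⟩ := hrk
      rcases hprimes r hr hrN with hr' | hr'
      · exact hpp ⟨q * t, by rw [hk, ht2, hr']; ring⟩
      · exact hqq ⟨p * t, by rw [hk, ht2, hr']; ring⟩
    rw [hk1, mul_one] at hk
    exact hk
  -- all subgroups of order p coincide
  have hfacp : (Nat.card G).factorization p = 1 := factorization_eq_one hp hpd hpp
  have hsylcard : ∀ S : Sylow p G, Nat.card (S : Subgroup G) = p := fun S => by
    rw [Sylow.card_eq_multiplicity, hfacp, pow_one]
  have hPuniq : ∀ A B : Subgroup G, Nat.card A = p → Nat.card B = p → A = B := by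
    intro A B hA hB
    by_contra hAB
    have hA' : Nat.card A = p ^ (Nat.card G).factorization p := by
      rw [hfacp, pow_one]; exact hA
    have hB' : Nat.card B = p ^ (Nat.card G).factorization p := by
      rw [hfacp, pow_one]; exact hB
    have hSAB : Sylow.ofCard A hA' ≠ Sylow.ofCard B hB' := by
      intro h
      exact hAB (by rw [← Sylow.coe_ofCard A hA', h, Sylow.coe_ofCard])
    have h2le : 1 < Nat.card (Sylow p G) :=
      Finite.one_lt_card_iff_nontrivial.mpr ⟨_, _, hSAB⟩
    have h3le : 3 ≤ Nat.card (Sylow p G) := by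
      have hdvd : p ∣ Nat.card (Sylow p G) - 1 :=
        (Nat.modEq_iff_dvd' (by omega)).mp (card_sylow_modEq_one p G).symm
      have := Nat.le_of_dvd (by omega) hdvd
      omega
    obtain ⟨S1, S2, S3, h12, h13, h23⟩ := exists_triple_of_three_le_card h3le
    -- build the vertices and apply the degree bound
    have hSbot : ∀ S : Sylow p G, (S : Subgroup G) ≠ ⊥ :=
      fun S => hnebot S p (hsylcard S) hp.ne_one
    have hStop : ∀ S : Sylow p G, (S : Subgroup G) ≠ ⊤ :=
      fun S => hnetop_p 1 S (by rw [hsylcard S, pow_one])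
    have hadj : ∀ S : Sylow p G,
        (coprimeGraph G).Adj ⟨Q0, hQ0bot, hQ0top⟩ ⟨S, hSbot S, hStop S⟩ := by
      intro S
      refine ⟨?_, ?_⟩
      · intro h
        have h2 : Q0 = (S : Subgroup G) := congrArg Subtype.val h
        have h3 := hsylcard S
        rw [← h2, hQ0] at h3
        exact hpq h3.symm
      · show Nat.Coprime (Nat.card Q0) (Nat.card (S : Subgroup G))
        rw [hQ0, hsylcard S]
        exact (Nat.coprime_primes hq hp).mpr (Ne.symm hpq)
    have hne : ∀ S T : Sylow p G, S ≠ T →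
        (⟨S, hSbot S, hStop S⟩ : {H : Subgroup G // H ≠ ⊥ ∧ H ≠ ⊤}) ≠ ⟨T, hSbot T, hStop T⟩ := by
      intro S T hST h
      exact hST (Sylow.ext (congrArg Subtype.val h))
    exact hdeg _ _ _ _ (hadj S1) (hadj S2) (hadj S3) (hne _ _ h12) (hne _ _ h13) (hne _ _ h23)
  -- the subgroup P0 of order p, normal
  obtain ⟨x, hx⟩ := exists_prime_orderOf_dvd_card' p hpd
  set P0 : Subgroup G := Subgroup.zpowers x with hP0def
  have hP0 : Nat.card P0 = p := by rw [hP0def, Nat.card_zpowers, hx]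
  have hP0normal : P0.Normal := normal_of_unique_card (fun K hK => hPuniq K P0 (hK.trans hP0) hP0)
  -- trivial intersection
  have hinf : P0 ⊓ Q0 = ⊥ := by
    rw [← Subgroup.card_eq_one]
    have d1 : Nat.card (P0 ⊓ Q0 : Subgroup G) ∣ p := hP0 ▸ Subgroup.card_dvd_of_le inf_le_left
    have d2 : Nat.card (P0 ⊓ Q0 : Subgroup G) ∣ q := hQ0 ▸ Subgroup.card_dvd_of_le inf_le_right
    have hcop : Nat.gcd p q = 1 := (Nat.coprime_primes hp hq).mpr hpq
    exact Nat.dvd_one.mp (hcop ▸ Nat.dvd_gcd d1 d2)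
  -- x and y commute
  have hcomm : Commute x y := by
    rw [← commutatorElement_eq_one_iff_commute]
    have hmem : ⁅x, y⁆ ∈ P0 ⊓ Q0 := by
      refine Subgroup.mem_inf.mpr ⟨?_, ?_⟩
      · have h1 : y * x⁻¹ * y⁻¹ ∈ P0 :=
          hP0normal.conj_mem _ (P0.inv_mem (Subgroup.mem_zpowers x)) y
        have h2 := P0.mul_mem (Subgroup.mem_zpowers x) h1
        have heq : ⁅x, y⁆ = x * (y * x⁻¹ * y⁻¹) := by
          rw [commutatorElement_def]; group
        rw [heq]; exact h2
      · have h1 : x * y * x⁻¹ ∈ Q0 :=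
          hQ0normal.conj_mem _ (Subgroup.mem_zpowers y) x
        have h2 := Q0.mul_mem h1 (Q0.inv_mem (Subgroup.mem_zpowers y))
        have heq : ⁅x, y⁆ = (x * y * x⁻¹) * y⁻¹ := by
          exact commutatorElement_def x y
        rw [heq]; exact h2
    rw [hinf] at hmem
    exact Subgroup.mem_bot.mp hmem
  have hord : orderOf (x * y) = p * q := by
    rw [hcomm.orderOf_mul_eq_mul_orderOf_of_coprime
      (by rw [hx, hy]; exact (Nat.coprime_primes hp hq).mpr hpq), hx, hy]
  exact ⟨isCyclic_of_orderOf_eq_card (x * y) (by rw [hord, hNpq]), hNpq⟩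

end Core

theorem coprimeGraph_path_iff {G : Type*} [Group G] [Finite G] :
    (∃ n : ℕ, 2 ≤ n ∧ Nonempty (coprimeGraph G ≃g SimpleGraph.pathGraph n)) ↔
      (IsCyclic G ∧ ∃ p q : ℕ, p.Prime ∧ q.Prime ∧ p ≠ q ∧ Nat.card G = p * q) := by
  constructor
  · rintro ⟨n, hn, ⟨e⟩⟩
    have gmap : ∀ a b, (coprimeGraph G).Adj a b ↔ (pathGraph n).Adj (e a) (e b) :=
      fun a b => (e.map_adj_iff).symm
    have einj : Function.Injective e := e.toEquiv.injective
    have gdeg : ∀ v a b c : {H : Subgroup G // H ≠ ⊥ ∧ H ≠ ⊤},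
        (coprimeGraph G).Adj v a → (coprimeGraph G).Adj v b → (coprimeGraph G).Adj v c →
        a ≠ b → a ≠ c → b ≠ c → False := by
      intro v a b c ha hb hc hab hac hbc
      exact pg_deg ((gmap v a).mp ha) ((gmap v b).mp hb) ((gmap v c).mp hc)
        (fun h => hab (einj h)) (fun h => hac (einj h)) (fun h => hbc (einj h))
    have gtri : ∀ a b c : {H : Subgroup G // H ≠ ⊥ ∧ H ≠ ⊤},
        (coprimeGraph G).Adj a b → (coprimeGraph G).Adj a c → (coprimeGraph G).Adj b c →
        False := by
      intro a b c h1 h2 h3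
      exact pg_tri ((gmap a b).mp h1) ((gmap a c).mp h2) ((gmap b c).mp h3)
    have gc4 : ∀ a b c d : {H : Subgroup G // H ≠ ⊥ ∧ H ≠ ⊤},
        (coprimeGraph G).Adj a c → (coprimeGraph G).Adj a d → (coprimeGraph G).Adj b c →
        (coprimeGraph G).Adj b d → a ≠ b → c ≠ d → False := by
      intro a b c d h1 h2 h3 h4 hab hcd
      exact pg_c4 ((gmap a c).mp h1) ((gmap a d).mp h2) ((gmap b c).mp h3) ((gmap b d).mp h4)
        (fun h => hab (einj h)) (fun h => hcd (einj h))
    have giso : ∀ v, ∃ w, (coprimeGraph G).Adj v w := by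
      intro v
      obtain ⟨w, hw⟩ := pg_iso hn (e v)
      refine ⟨e.symm w, ?_⟩
      rw [gmap]
      have h2 : e (e.symm w) = w := e.toEquiv.apply_symm_apply w
      rw [h2]
      exact hw
    have hcard1 : ∀ H : Subgroup G, H ≠ ⊥ → 1 < Nat.card H := fun H h =>
      Finite.one_lt_card_iff_nontrivial.mpr ((Subgroup.nontrivial_iff_ne_bot H).mpr h)
    -- obtain the two primes from one edge
    set v0 : {H : Subgroup G // H ≠ ⊥ ∧ H ≠ ⊤} := e.symm ⟨0, by omega⟩ with hv0def
    obtain ⟨w0, hw0⟩ := giso v0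
    have hv0c := hcard1 v0.1 v0.2.1
    have hw0c := hcard1 w0.1 w0.2.1
    set p := (Nat.card v0.1).minFac with hpdef
    set q := (Nat.card w0.1).minFac with hqdef
    have hp : p.Prime := Nat.minFac_prime (by omega)
    have hq : q.Prime := Nat.minFac_prime (by omega)
    have hpv0 : p ∣ Nat.card v0.1 := Nat.minFac_dvd _
    have hqw0 : q ∣ Nat.card w0.1 := Nat.minFac_dvd _
    have hpd : p ∣ Nat.card G := hpv0.trans (Subgroup.card_subgroup_dvd_card _)
    have hqd : q ∣ Nat.card G := hqw0.trans (Subgroup.card_subgroup_dvd_card _)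
    have hcop := hw0.2
    have hpq : p ≠ q := by
      intro h
      have h1 : p ∣ Nat.gcd (Nat.card v0.1) (Nat.card w0.1) := Nat.dvd_gcd hpv0 (h ▸ hqw0)
      rw [Nat.Coprime] at hcop
      rw [hcop] at h1
      exact hp.ne_one (Nat.dvd_one.mp h1)
    -- helper : prime-order cyclic subgroups are proper nontrivial
    have mkvert : ∀ s t : ℕ, s.Prime → t.Prime → s ≠ t → t ∣ Nat.card G → ∀ x : G,
        orderOf x = s → Subgroup.zpowers x ≠ ⊥ ∧ Subgroup.zpowers x ≠ ⊤ := by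
      intro s t hs ht hst htN x hx
      constructor
      · intro hb
        have h1 : Nat.card (Subgroup.zpowers x) = 1 := by rw [hb, Subgroup.card_bot]
        rw [Nat.card_zpowers, hx] at h1
        exact hs.ne_one h1
      · intro htp
        have h1 : Nat.card (Subgroup.zpowers x) = Nat.card G := by
          rw [htp, Subgroup.card_top]
        rw [Nat.card_zpowers, hx] at h1
        have h2 : t ∣ s := by rw [h1]; exact htN
        exact hst ((Nat.prime_dvd_prime_iff_eq ht hs).mp h2).symm
    have adjofcards : ∀ (s t : ℕ), s.Prime → t.Prime → s ≠ t →
        ∀ A B : {H : Subgroup G // H ≠ ⊥ ∧ H ≠ ⊤}, Nat.card A.1 = s → Nat.card B.1 = t →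
        (coprimeGraph G).Adj A B := by
      intro s t hs ht hst A B hA hB
      refine ⟨?_, ?_⟩
      · intro h
        rw [h] at hA
        rw [hA] at hB
        exact hst hB
      · show Nat.Coprime (Nat.card A.1) (Nat.card B.1)
        rw [hA, hB]
        exact (Nat.coprime_primes hs ht).mpr hst
    -- every prime dividing the order of G is p or q
    have hprimes : ∀ r : ℕ, r.Prime → r ∣ Nat.card G → r = p ∨ r = q := by
      intro r hr hrN
      by_contra hcon
      push_neg at hcon
      obtain ⟨hrp, hrq⟩ := hcon
      haveI : Fact p.Prime := ⟨hp⟩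
      haveI : Fact q.Prime := ⟨hq⟩
      haveI : Fact r.Prime := ⟨hr⟩
      obtain ⟨xp, hxp⟩ := exists_prime_orderOf_dvd_card' p hpd
      obtain ⟨xq, hxq⟩ := exists_prime_orderOf_dvd_card' q hqd
      obtain ⟨xr, hxr⟩ := exists_prime_orderOf_dvd_card' r hrN
      obtain ⟨hb1, ht1⟩ := mkvert p q hp hq hpq hqd xp hxp
      obtain ⟨hb2, ht2⟩ := mkvert q p hq hp (Ne.symm hpq) hpd xq hxq
      obtain ⟨hb3, ht3⟩ := mkvert r p hr hp hrp hpd xr hxr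
      have c1 : Nat.card (Subgroup.zpowers xp) = p := by rw [Nat.card_zpowers, hxp]
      have c2 : Nat.card (Subgroup.zpowers xq) = q := by rw [Nat.card_zpowers, hxq]
      have c3 : Nat.card (Subgroup.zpowers xr) = r := by rw [Nat.card_zpowers, hxr]
      exact gtri ⟨_, hb1, ht1⟩ ⟨_, hb2, ht2⟩ ⟨_, hb3, ht3⟩
        (adjofcards p q hp hq hpq _ _ c1 c2)
        (adjofcards p r hp hr (Ne.symm hrp) _ _ c1 c3)
        (adjofcards q r hq hr (Ne.symm hrq) _ _ c2 c3)
    -- no vertex order is divisible by both p and q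
    have hnomix : ∀ H : Subgroup G, H ≠ ⊥ → H ≠ ⊤ → ¬(p ∣ Nat.card H ∧ q ∣ Nat.card H) := by
      rintro H hb ht ⟨hpH, hqH⟩
      obtain ⟨K, hK⟩ := giso ⟨H, hb, ht⟩
      have hKc := hcard1 K.1 K.2.1
      have hr : (Nat.card K.1).minFac.Prime := Nat.minFac_prime (by omega)
      have hrK : (Nat.card K.1).minFac ∣ Nat.card K.1 := Nat.minFac_dvd _
      have hrN : (Nat.card K.1).minFac ∣ Nat.card G :=
        hrK.trans (Subgroup.card_subgroup_dvd_card _)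
      have hcopHK := hK.2
      rw [Nat.Coprime] at hcopHK
      have hrH : (Nat.card K.1).minFac ∣ Nat.card H := by
        rcases hprimes _ hr hrN with h | h
        · rw [h]; exact hpH
        · rw [h]; exact hqH
      have h1 : (Nat.card K.1).minFac ∣ 1 := by
        rw [← hcopHK]
        exact Nat.dvd_gcd hrH hrK
      exact hr.ne_one (Nat.dvd_one.mp h1)
    -- coprimality between p-type and q-type vertices
    have hcop2 : ∀ A B : {H : Subgroup G // H ≠ ⊥ ∧ H ≠ ⊤},
        p ∣ Nat.card A.1 → q ∣ Nat.card B.1 →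
        Nat.Coprime (Nat.card A.1) (Nat.card B.1) := by
      intro A B hpA hqB
      by_contra hg
      have hg1 : Nat.gcd (Nat.card A.1) (Nat.card B.1) ≠ 1 := hg
      set r := (Nat.gcd (Nat.card A.1) (Nat.card B.1)).minFac with hrdef
      have hr : r.Prime := Nat.minFac_prime hg1
      have hrA : r ∣ Nat.card A.1 :=
        (Nat.minFac_dvd _).trans (Nat.gcd_dvd_left _ _)
      have hrB : r ∣ Nat.card B.1 :=
        (Nat.minFac_dvd _).trans (Nat.gcd_dvd_right _ _)
      have hrN : r ∣ Nat.card G := hrA.trans (Subgroup.card_subgroup_dvd_card _)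
      rcases hprimes r hr hrN with h | h
      · exact hnomix B.1 B.2.1 B.2.2 ⟨h ▸ hrB, hqB⟩
      · exact hnomix A.1 A.2.1 A.2.2 ⟨hpA, h ▸ hrA⟩
    -- one of the two sides has a unique vertex
    have hone : (∀ A B : {H : Subgroup G // H ≠ ⊥ ∧ H ≠ ⊤},
          q ∣ Nat.card A.1 → q ∣ Nat.card B.1 → A = B) ∨
        (∀ A B : {H : Subgroup G // H ≠ ⊥ ∧ H ≠ ⊤},
          p ∣ Nat.card A.1 → p ∣ Nat.card B.1 → A = B) := by
      by_contra hcon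
      push_neg at hcon
      obtain ⟨⟨A, B, hqA, hqB, hAB⟩, ⟨C, D, hpC, hpD, hCD⟩⟩ := hcon
      have hadjCA : (coprimeGraph G).Adj C A := by
        refine ⟨?_, hcop2 C A hpC hqA⟩
        intro h
        exact hnomix A.1 A.2.1 A.2.2 ⟨h ▸ hpC, hqA⟩
      have hadjCB : (coprimeGraph G).Adj C B := by
        refine ⟨?_, hcop2 C B hpC hqB⟩
        intro h
        exact hnomix B.1 B.2.1 B.2.2 ⟨h ▸ hpC, hqB⟩
      have hadjDA : (coprimeGraph G).Adj D A := by
        refine ⟨?_, hcop2 D A hpD hqA⟩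
        intro h
        exact hnomix A.1 A.2.1 A.2.2 ⟨h ▸ hpD, hqA⟩
      have hadjDB : (coprimeGraph G).Adj D B := by
        refine ⟨?_, hcop2 D B hpD hqB⟩
        intro h
        exact hnomix B.1 B.2.1 B.2.2 ⟨h ▸ hpD, hqB⟩
      exact gc4 C D A B hadjCA hadjCB hadjDA hadjDB hCD hAB
    rcases hone with hU | hU
    · have hU' : ∀ H K : Subgroup G, H ≠ ⊥ → H ≠ ⊤ → K ≠ ⊥ → K ≠ ⊤ →
          q ∣ Nat.card H → q ∣ Nat.card K → H = K := by
        intro H K hb ht kb kt h1 h2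
        exact congrArg Subtype.val (hU ⟨H, hb, ht⟩ ⟨K, kb, kt⟩ h1 h2)
      obtain ⟨hcyc, hN⟩ := forward_core hp hq hpq hpd hqd hprimes hnomix hU' gdeg
      exact ⟨hcyc, p, q, hp, hq, hpq, hN⟩
    · have hU' : ∀ H K : Subgroup G, H ≠ ⊥ → H ≠ ⊤ → K ≠ ⊥ → K ≠ ⊤ →
          p ∣ Nat.card H → p ∣ Nat.card K → H = K := by
        intro H K hb ht kb kt h1 h2
        exact congrArg Subtype.val (hU ⟨H, hb, ht⟩ ⟨K, kb, kt⟩ h1 h2)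
      have hprimes' : ∀ r : ℕ, r.Prime → r ∣ Nat.card G → r = q ∨ r = p :=
        fun r hr hrN => (hprimes r hr hrN).symm
      have hnomix' : ∀ H : Subgroup G, H ≠ ⊥ → H ≠ ⊤ →
          ¬(q ∣ Nat.card H ∧ p ∣ Nat.card H) :=
        fun H hb ht h => hnomix H hb ht ⟨h.2, h.1⟩
      obtain ⟨hcyc, hN⟩ := forward_core hq hp (Ne.symm hpq) hqd hpd hprimes' hnomix' hU' gdeg
      exact ⟨hcyc, p, q, hp, hq, hpq, by rw [hN, mul_comm]⟩
  · rintro ⟨hcyc, p, q, hp, hq, hpq, hN⟩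
    classical
    haveI : Fact p.Prime := ⟨hp⟩
    haveI : Fact q.Prime := ⟨hq⟩
    have hcomm : ∀ a b : G, a * b = b * a := by
      obtain ⟨g, hg⟩ := hcyc.exists_generator
      intro a b
      obtain ⟨i, hi⟩ := hg a
      obtain ⟨j, hj⟩ := hg b
      rw [← hi, ← hj, ← zpow_add, ← zpow_add, add_comm]
    have hpd : p ∣ Nat.card G := by rw [hN]; exact dvd_mul_right p q
    have hqd : q ∣ Nat.card G := by rw [hN]; exact dvd_mul_left q p
    have hppN : ¬ p * p ∣ Nat.card G := by
      intro h
      rw [hN] at h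
      have h1 : p ∣ q := (mul_dvd_mul_iff_left (hp.pos.ne' : p ≠ 0)).mp h
      exact hpq ((Nat.prime_dvd_prime_iff_eq hp hq).mp h1)
    have hqqN : ¬ q * q ∣ Nat.card G := by
      intro h
      rw [hN, mul_comm p q] at h
      have h1 : q ∣ p := (mul_dvd_mul_iff_left (hq.pos.ne' : q ≠ 0)).mp h
      exact hpq ((Nat.prime_dvd_prime_iff_eq hq hp).mp h1).symm
    obtain ⟨x, hx⟩ := exists_prime_orderOf_dvd_card' p hpd
    obtain ⟨y, hy⟩ := exists_prime_orderOf_dvd_card' q hqd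
    set P0 : Subgroup G := Subgroup.zpowers x with hP0def
    set Q0 : Subgroup G := Subgroup.zpowers y with hQ0def
    have hP0 : Nat.card P0 = p := by rw [hP0def, Nat.card_zpowers, hx]
    have hQ0 : Nat.card Q0 = q := by rw [hQ0def, Nat.card_zpowers, hy]
    have hP0bot : P0 ≠ ⊥ := by
      intro h
      rw [h, Subgroup.card_bot] at hP0
      exact hp.ne_one hP0.symm
    have hQ0bot : Q0 ≠ ⊥ := by
      intro h
      rw [h, Subgroup.card_bot] at hQ0
      exact hq.ne_one hQ0.symm
    have hP0top : P0 ≠ ⊤ := by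
      intro h
      rw [h, Subgroup.card_top, hN] at hP0
      have := hq.one_lt
      nlinarith [hp.one_lt]
    have hQ0top : Q0 ≠ ⊤ := by
      intro h
      rw [h, Subgroup.card_top, hN] at hQ0
      have := hq.one_lt
      nlinarith [hp.one_lt]
    have hPQ : P0 ≠ Q0 := by
      intro h
      rw [h, hQ0] at hP0
      exact hpq hP0.symm
    have hclass : ∀ H : Subgroup G, H ≠ ⊥ → H ≠ ⊤ → H = P0 ∨ H = Q0 := by
      intro H hb ht
      have hdvd : Nat.card H ∣ p * q := hN ▸ Subgroup.card_subgroup_dvd_card H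
      have h1 : Nat.card H ≠ 1 := fun h => hb (Subgroup.card_eq_one.mp h)
      have h2 : Nat.card H ≠ p * q := by
        intro h
        exact ht (Subgroup.eq_top_of_le_card (H := H) (le_of_eq (by rw [hN, h])))
      rcases dvd_prime_mul hp hq hpq hdvd h1 h2 with h | h
      · exact Or.inl (unique_card_subgroup hp hcomm hpd hppN H P0 h hP0)
      · exact Or.inr (unique_card_subgroup hq hcomm hqd hqqN H Q0 h hQ0)
    refine ⟨2, le_refl 2, ⟨?_⟩⟩
    set Pv : {H : Subgroup G // H ≠ ⊥ ∧ H ≠ ⊤} := ⟨P0, hP0bot, hP0top⟩ with hPvdef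
    set Qv : {H : Subgroup G // H ≠ ⊥ ∧ H ≠ ⊤} := ⟨Q0, hQ0bot, hQ0top⟩ with hQvdef
    have hclassV : ∀ A : {H : Subgroup G // H ≠ ⊥ ∧ H ≠ ⊤}, A = Pv ∨ A = Qv := by
      intro A
      rcases hclass A.1 A.2.1 A.2.2 with h | h
      · exact Or.inl (Subtype.ext h)
      · exact Or.inr (Subtype.ext h)
    have hPQv : Pv ≠ Qv := fun h => hPQ (congrArg Subtype.val h)
    have hadj2 : ∀ A B : {H : Subgroup G // H ≠ ⊥ ∧ H ≠ ⊤}, A ≠ B →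
        (coprimeGraph G).Adj A B := by
      intro A B hAB
      rcases hclassV A with rfl | rfl <;> rcases hclassV B with rfl | rfl
      · exact absurd rfl hAB
      · refine ⟨hAB, ?_⟩
        show Nat.Coprime (Nat.card P0) (Nat.card Q0)
        rw [hP0, hQ0]
        exact (Nat.coprime_primes hp hq).mpr hpq
      · refine ⟨hAB, ?_⟩
        show Nat.Coprime (Nat.card Q0) (Nat.card P0)
        rw [hP0, hQ0]
        exact ((Nat.coprime_primes hp hq).mpr hpq).symm
      · exact absurd rfl hAB
    have hfne : ∀ A B : {H : Subgroup G // H ≠ ⊥ ∧ H ≠ ⊤}, A ≠ B →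
        (if A = Pv then (0 : Fin 2) else 1) ≠ (if B = Pv then (0 : Fin 2) else 1) := by
      intro A B hAB
      rcases hclassV A with rfl | rfl <;> rcases hclassV B with rfl | rfl
      · exact absurd rfl hAB
      · rw [if_pos rfl, if_neg (Ne.symm hPQv)]
        decide
      · rw [if_pos rfl, if_neg (Ne.symm hPQv)]
        decide
      · exact absurd rfl hAB
    refine ⟨⟨fun A => if A = Pv then (0 : Fin 2) else 1,
        fun i => if i = 0 then Pv else Qv, ?_, ?_⟩, ?_⟩
    · intro A
      rcases hclassV A with rfl | rfl
      · show (if ((if Pv = Pv then (0 : Fin 2) else 1) = 0) then Pv else Qv) = Pv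
        rw [if_pos rfl, if_pos rfl]
      · show (if ((if Qv = Pv then (0 : Fin 2) else 1) = 0) then Pv else Qv) = Qv
        rw [if_neg (Ne.symm hPQv), if_neg (by decide : (1 : Fin 2) ≠ 0)]
    · intro i
      fin_cases i
      · show (if ((if (0 : Fin 2) = 0 then Pv else Qv) = Pv) then (0 : Fin 2) else 1) = 0
        rw [if_pos rfl, if_pos rfl]
      · show (if ((if (1 : Fin 2) = 0 then Pv else Qv) = Pv) then (0 : Fin 2) else 1) = 1
        rw [if_neg (by decide : (1 : Fin 2) ≠ 0), if_neg (Ne.symm hPQv)]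
    · intro A B
      constructor
      · intro h
        have hne : (if A = Pv then (0 : Fin 2) else 1) ≠ (if B = Pv then (0 : Fin 2) else 1) :=
          (pg2_adj _ _).mp h
        apply hadj2
        intro hAB
        rw [hAB] at hne
        exact hne rfl
      · intro h
        exact (pg2_adj _ _).mpr (hfne A B h.1)
end

section
/- For every finite group G and every natural number n ≥ 3, the coprime graph 𝒫(G) is not isomorphic to the cycle graph Cₙ on n vertices. -/
open SimpleGraph

/-- divisors of a product of two primes -/
lemma aux_dvd_pq {p q d : ℕ} (hp : p.Prime) (hq : q.Prime) (hd : d ∣ p * q)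
    (h1 : d ≠ 1) (hpq : d ≠ p * q) : d = p ∨ d = q := by
  by_cases hpd : p ∣ d
  · obtain ⟨e, rfl⟩ := hpd
    have he : e ∣ q := (mul_dvd_mul_iff_left hp.pos.ne').mp hd
    rcases (Nat.dvd_prime hq).mp he with rfl | rfl
    · exact Or.inl (mul_one p)
    · exact absurd rfl hpq
  · have hco : Nat.Coprime d p := ((Nat.Prime.coprime_iff_not_dvd hp).mpr hpd).symm
    have : d ∣ q := hco.dvd_of_dvd_mul_left hd
    rcases (Nat.dvd_prime hq).mp this with rfl | rfl
    · exact absurd rfl h1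
    · exact Or.inr rfl

theorem coprimeGraph_not_cycle {G : Type*} [Group G] [Finite G] (n : ℕ) (hn : 3 ≤ n) :
    IsEmpty (coprimeGraph G ≃g SimpleGraph.cycleGraph n) := by
  constructor
  intro f
  obtain ⟨m, rfl⟩ : ∃ m, n = m + 3 := ⟨n - 3, by omega⟩
  clear hn
  set V := {H : Subgroup G // H ≠ ⊥ ∧ H ≠ ⊤} with hV
  -- every vertex has exactly two neighbors
  have deg2 : ∀ v : V, Nat.card ((coprimeGraph G).neighborSet v) = 2 := by
    intro v
    have h1 : (cycleGraph (m+3)).degree (f v) = 2 := cycleGraph_degree_three_le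
    have h2 : Nat.card ((coprimeGraph G).neighborSet v)
        = Nat.card ((cycleGraph (m+3)).neighborSet (f v)) :=
      Nat.card_congr (f.mapNeighborSet v)
    rw [h2, Nat.card_eq_fintype_card, card_neighborSet_eq_degree, h1]
  have adj_iff : ∀ v w : V, (coprimeGraph G).Adj v w ↔
      (v ≠ w ∧ Nat.Coprime (Nat.card v.1) (Nat.card w.1)) := fun _ _ => Iff.rfl
  -- cards of vertices
  have card_pos : ∀ v : V, 1 < Nat.card v.1 := fun v =>
    (Subgroup.one_lt_card_iff_ne_bot v.1).mpr v.2.1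
  have card_dvd : ∀ v : V, Nat.card v.1 ∣ Nat.card G := fun v =>
    Subgroup.card_subgroup_dvd_card v.1
  have card_ne_top : ∀ v : V, Nat.card v.1 ≠ Nat.card G := by
    intro v h
    exact v.2.2 (Subgroup.eq_top_of_card_eq v.1 h)
  -- an edge exists: two coprime vertices
  have hadj : (coprimeGraph G).Adj (f.symm 0) (f.symm 1) := by
    apply f.symm.map_rel_iff.mpr
    rw [cycleGraph_adj']
    right; simp
  obtain ⟨-, hcop⟩ := (adj_iff _ _).mp hadj
  set H₀ := f.symm 0 with hH0
  set K₀ := f.symm 1 with hK0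
  -- two distinct primes dividing |G|
  obtain ⟨p, hp, hpH⟩ : ∃ p, p.Prime ∧ p ∣ Nat.card H₀.1 :=
    ⟨_, Nat.minFac_prime (by have := card_pos H₀; omega), Nat.minFac_dvd _⟩
  obtain ⟨q, hq, hqK⟩ : ∃ q, q.Prime ∧ q ∣ Nat.card K₀.1 :=
    ⟨_, Nat.minFac_prime (by have := card_pos K₀; omega), Nat.minFac_dvd _⟩
  have hpd : p ∣ Nat.card G := hpH.trans (card_dvd H₀)
  have hqd : q ∣ Nat.card G := hqK.trans (card_dvd K₀)
  have hpq : p ≠ q := by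
    rintro rfl
    have h1 : p ∣ Nat.gcd (Nat.card H₀.1) (Nat.card K₀.1) := Nat.dvd_gcd hpH hqK
    rw [hcop] at h1
    exact hp.one_lt.ne' (Nat.eq_one_of_dvd_one h1)
  -- Cauchy-type vertex construction
  have mkX : ∀ r : ℕ, r.Prime → r ∣ Nat.card G →
      ∃ x : G, orderOf x = r ∧ Subgroup.zpowers x ≠ ⊥ ∧ Subgroup.zpowers x ≠ ⊤ := by
    intro r hr hrd
    obtain ⟨s, hs, hsd, hsr⟩ : ∃ s, Nat.Prime s ∧ s ∣ Nat.card G ∧ s ≠ r := by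
      rcases eq_or_ne r p with rfl | h
      · exact ⟨q, hq, hqd, fun h => hpq h.symm⟩
      · exact ⟨p, hp, hpd, fun h' => h h'.symm⟩
    haveI : Fact r.Prime := ⟨hr⟩
    obtain ⟨x, hx⟩ := exists_prime_orderOf_dvd_card' r hrd
    have hcard : Nat.card (Subgroup.zpowers x) = r := by rw [Nat.card_zpowers, hx]
    refine ⟨x, hx, ?_, ?_⟩
    · intro hbot
      rw [hbot, Subgroup.card_bot] at hcard
      exact hr.one_lt.ne' hcard.symm
    · intro htop
      rw [htop, Subgroup.card_top] at hcard
      rw [hcard] at hsd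
      exact hsr ((Nat.prime_dvd_prime_iff_eq hs hr).mp hsd)
  -- the neighbors of a vertex of prime order r are exactly the vertices of order
  -- not divisible by r, and there are exactly two of them
  have two_nbrs : ∀ (r : ℕ), r.Prime → ∀ (X : V), Nat.card X.1 = r →
      ∃ a b : V, a ≠ b ∧ ¬ r ∣ Nat.card a.1 ∧ ¬ r ∣ Nat.card b.1 ∧
        ∀ x : V, ¬ r ∣ Nat.card x.1 → (x = a ∨ x = b) := by
    intro r hr X hX
    have hmem : ∀ x : V, x ∈ (coprimeGraph G).neighborSet X ↔ ¬ r ∣ Nat.card x.1 := by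
      intro x
      rw [mem_neighborSet, adj_iff]
      constructor
      · rintro ⟨-, hc⟩ hdvd
        have : r ∣ Nat.gcd (Nat.card X.1) (Nat.card x.1) :=
          Nat.dvd_gcd (hX ▸ dvd_rfl) hdvd
        rw [hc] at this
        exact hr.one_lt.ne' (Nat.eq_one_of_dvd_one this)
      · intro hnd
        refine ⟨?_, ?_⟩
        · rintro rfl
          exact hnd (hX ▸ dvd_rfl)
        · rw [hX]
          exact (Nat.Prime.coprime_iff_not_dvd hr).mpr hnd
    have hcard2 : Nat.card ((coprimeGraph G).neighborSet X) = 2 := deg2 X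
    obtain ⟨a, b, hab, huniv⟩ := Nat.card_eq_two_iff.mp hcard2
    refine ⟨a.1, b.1, ?_, (hmem a.1).mp a.2, (hmem b.1).mp b.2, ?_⟩
    · intro h; exact hab (Subtype.ext h)
    · intro x hx
      have : (⟨x, (hmem x).mpr hx⟩ : (coprimeGraph G).neighborSet X) ∈
          ({a, b} : Set ((coprimeGraph G).neighborSet X)) := by rw [huniv]; trivial
      rcases this with h | h
      · exact Or.inl (congrArg Subtype.val h)
      · exact Or.inr (congrArg Subtype.val h)
  -- every vertex has a prime not dividing its order
  have avoid : ∀ v : V, ∃ s : ℕ, s.Prime ∧ s ∣ Nat.card G ∧ ¬ s ∣ Nat.card v.1 := by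
    intro v
    have : Nonempty ((coprimeGraph G).neighborSet v) := by
      have h1 := deg2 v
      have h2 : 0 < Nat.card ((coprimeGraph G).neighborSet v) := by omega
      exact (Nat.card_pos_iff.mp h2).1
    obtain ⟨⟨w, hw⟩⟩ := this
    obtain ⟨-, hc⟩ := (adj_iff _ _).mp ((mem_neighborSet _ _ _).mp hw)
    set s := (Nat.card w.1).minFac with hs
    have hsp : s.Prime := Nat.minFac_prime (by have := card_pos w; omega)
    refine ⟨s, hsp, (Nat.minFac_dvd _).trans (card_dvd w), ?_⟩
    intro hdvd
    have : s ∣ Nat.gcd (Nat.card v.1) (Nat.card w.1) :=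
      Nat.dvd_gcd hdvd (Nat.minFac_dvd _)
    rw [hc] at this
    exact hsp.one_lt.ne' (Nat.eq_one_of_dvd_one this)
  -- a prime does not divide a different prime
  have npd : ∀ t s : ℕ, t.Prime → s.Prime → t ≠ s → ¬ t ∣ s := fun t s ht hs hne hd =>
    hne ((Nat.prime_dvd_prime_iff_eq ht hs).mp hd)
  -- pigeonhole into the two neighbors of a prime-order vertex
  have pair : ∀ (t : ℕ), t.Prime → ∀ (X A B : V), Nat.card X.1 = t →
      ¬ t ∣ Nat.card A.1 → ¬ t ∣ Nat.card B.1 → A ≠ B →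
      ∀ v : V, ¬ t ∣ Nat.card v.1 → v = A ∨ v = B := by
    intro t ht X A B hX hA hB hAB v hv
    obtain ⟨a, b, hab, -, -, hmem⟩ := two_nbrs t ht X hX
    have m1 := hmem A hA
    have m2 := hmem B hB
    have mv := hmem v hv
    rcases m1 with h1 | h1 <;> rcases m2 with h2 | h2
    · exact absurd (h1.trans h2.symm) hAB
    · rcases mv with hv' | hv'
      · exact Or.inl (hv'.trans h1.symm)
      · exact Or.inr (hv'.trans h2.symm)
    · rcases mv with hv' | hv'
      · exact Or.inr (hv'.trans h2.symm)
      · exact Or.inl (hv'.trans h1.symm)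
    · exact absurd (h1.trans h2.symm) hAB
  -- a subgroup which is the unique one of its cardinality is normal
  have normal_of_uniq : ∀ (X : Subgroup G) (t : ℕ), Nat.card X = t →
      (∀ W : Subgroup G, Nat.card W = t → W = X) → X.Normal := by
    intro X t hX huniq
    constructor
    intro x hx g
    have hcardW : Nat.card (Subgroup.map (MulAut.conj g).toMonoidHom X) = t := by
      rw [← hX]
      exact (Nat.card_congr
        (Subgroup.equivMapOfInjective X _ (MulAut.conj g).injective).toEquiv).symm
    have h := huniq _ hcardW
    have hmem : (MulAut.conj g) x ∈ Subgroup.map (MulAut.conj g).toMonoidHom X :=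
      Subgroup.mem_map_of_mem _ hx
    rw [h] at hmem
    simpa using hmem
  by_cases hthird : ∃ r : ℕ, r.Prime ∧ r ∣ Nat.card G ∧ r ≠ p ∧ r ≠ q
  · -- Case I : three distinct primes divide |G|
    obtain ⟨r, hr, hrd, hrp, hrq⟩ := hthird
    obtain ⟨xp, hxp, hxpb, hxpt⟩ := mkX p hp hpd
    obtain ⟨xq, hxq, hxqb, hxqt⟩ := mkX q hq hqd
    obtain ⟨xr, hxr, hxrb, hxrt⟩ := mkX r hr hrd
    set Xp : V := ⟨Subgroup.zpowers xp, hxpb, hxpt⟩ with hXpdef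
    set Xq : V := ⟨Subgroup.zpowers xq, hxqb, hxqt⟩ with hXqdef
    set Xr : V := ⟨Subgroup.zpowers xr, hxrb, hxrt⟩ with hXrdef
    have cXp : Nat.card Xp.1 = p := by rw [hXpdef, Nat.card_zpowers, hxp]
    have cXq : Nat.card Xq.1 = q := by rw [hXqdef, Nat.card_zpowers, hxq]
    have cXr : Nat.card Xr.1 = r := by rw [hXrdef, Nat.card_zpowers, hxr]
    have hQR : Xq ≠ Xr := fun h => hrq (by rw [← cXq, h, cXr])
    have hPQ : Xp ≠ Xq := fun h => hpq (by rw [← cXp, h, cXq])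
    have hPR : Xp ≠ Xr := fun h => hrp (by rw [← cXp, h, cXr])
    -- no fourth prime divides |G|
    have allprimes : ∀ s : ℕ, s.Prime → s ∣ Nat.card G → s = p ∨ s = q ∨ s = r := by
      intro s hs hsd
      by_contra hcon
      push_neg at hcon
      obtain ⟨hsp, hsq, hsr⟩ := hcon
      obtain ⟨xs, hxs, hxsb, hxst⟩ := mkX s hs hsd
      have cXs : Nat.card (⟨Subgroup.zpowers xs, hxsb, hxst⟩ : V).1 = s := by
        rw [Nat.card_zpowers, hxs]
      rcases pair p hp Xp Xq Xr cXp (cXq ▸ npd p q hp hq hpq)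
          (cXr ▸ npd p r hp hr (fun h => hrp h.symm)) hQR
          ⟨Subgroup.zpowers xs, hxsb, hxst⟩ (cXs ▸ npd p s hp hs (fun h => hsp h.symm))
          with h | h
      · exact hsq (by rw [← cXs, h, cXq])
      · exact hsr (by rw [← cXs, h, cXr])
    -- every vertex is one of the three prime-order ones
    have hvert : ∀ v : V, v = Xp ∨ v = Xq ∨ v = Xr := by
      intro v
      obtain ⟨s, hs, hsd, hnd⟩ := avoid v
      rcases allprimes s hs hsd with rfl | rfl | rfl
      · exact Or.inr (pair s hs Xp Xq Xr cXp (cXq ▸ npd s q hs hq hpq)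
          (cXr ▸ npd s r hs hr (fun h => hrp h.symm)) hQR v hnd)
      · rcases pair s hs Xq Xp Xr cXq (cXp ▸ npd s p hs hp (fun h => hpq h.symm))
            (cXr ▸ npd s r hs hr (fun h => hrq h.symm)) hPR v hnd with h | h
        · exact Or.inl h
        · exact Or.inr (Or.inr h)
      · rcases pair s hs Xr Xp Xq cXr (cXp ▸ npd s p hs hp (fun h => hrp h))
            (cXq ▸ npd s q hs hq (fun h => hrq h)) hPQ v hnd with h | h
        · exact Or.inl h
        · exact Or.inr (Or.inl h)
    -- subgroup-level uniqueness for orders p and q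
    have uqsub : ∀ (t : ℕ), t.Prime → ∀ (Xt : V), Nat.card Xt.1 = t →
        (∀ v : V, Nat.card v.1 = t → v = Xt) →
        ∀ W : Subgroup G, Nat.card W = t → W = Xt.1 := by
      intro t ht Xt hXt huq W hW
      have hWb : W ≠ ⊥ := by
        intro h; rw [h, Subgroup.card_bot] at hW; exact ht.one_lt.ne' hW.symm
      have hWt : W ≠ ⊤ := by
        intro h
        rw [h, Subgroup.card_top] at hW
        have h1 : p ∣ t := hW ▸ hpd
        have h2 : q ∣ t := hW ▸ hqd
        exact hpq (((Nat.prime_dvd_prime_iff_eq hp ht).mp h1).trans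
          ((Nat.prime_dvd_prime_iff_eq hq ht).mp h2).symm)
      exact congrArg Subtype.val (huq ⟨W, hWb, hWt⟩ hW)
    have uvp : ∀ v : V, Nat.card v.1 = p → v = Xp := by
      intro v hv
      rcases hvert v with rfl | rfl | rfl
      · rfl
      · exact absurd (cXq ▸ hv : q = p) (fun h => hpq h.symm)
      · exact absurd (cXr ▸ hv : r = p) hrp
    have uvq : ∀ v : V, Nat.card v.1 = q → v = Xq := by
      intro v hv
      rcases hvert v with rfl | rfl | rfl
      · exact absurd (cXp ▸ hv : p = q) hpq
      · rfl
      · exact absurd (cXr ▸ hv : r = q) hrq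
    have np : Xp.1.Normal := normal_of_uniq Xp.1 p cXp (uqsub p hp Xp cXp uvp)
    have nq : Xq.1.Normal := normal_of_uniq Xq.1 q cXq (uqsub q hq Xq cXq uvq)
    have hdisj : Disjoint Xp.1 Xq.1 := by
      rw [disjoint_iff]
      have hd1 : Nat.card (Xp.1 ⊓ Xq.1 : Subgroup G) ∣ p :=
        cXp ▸ Subgroup.card_dvd_of_le inf_le_left
      have hd2 : Nat.card (Xp.1 ⊓ Xq.1 : Subgroup G) ∣ q :=
        cXq ▸ Subgroup.card_dvd_of_le inf_le_right
      have hd : Nat.card (Xp.1 ⊓ Xq.1 : Subgroup G) ∣ Nat.gcd p q := Nat.dvd_gcd hd1 hd2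
      rw [(Nat.coprime_primes hp hq).mpr hpq] at hd
      exact Subgroup.card_eq_one.mp (Nat.eq_one_of_dvd_one hd)
    have hcomm : Commute xp xq :=
      Subgroup.commute_of_normal_of_disjoint _ _ np nq hdisj xp xq
        (Subgroup.mem_zpowers xp) (Subgroup.mem_zpowers xq)
    have hord : orderOf (xp * xq) = p * q := by
      rw [hcomm.orderOf_mul_eq_mul_orderOf_of_coprime
        (by rw [hxp, hxq]; exact (Nat.coprime_primes hp hq).mpr hpq), hxp, hxq]
    have hZcard : Nat.card (Subgroup.zpowers (xp * xq)) = p * q := by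
      rw [Nat.card_zpowers, hord]
    have hZb : Subgroup.zpowers (xp * xq) ≠ ⊥ := by
      intro h; rw [h, Subgroup.card_bot] at hZcard
      have := hp.one_lt; have := hq.one_lt; nlinarith [hZcard.symm]
    have hZt : Subgroup.zpowers (xp * xq) ≠ ⊤ := by
      intro h; rw [h, Subgroup.card_top] at hZcard
      have : r ∣ p * q := hZcard ▸ hrd
      rcases (Nat.Prime.dvd_mul hr).mp this with h' | h'
      · exact hrp ((Nat.prime_dvd_prime_iff_eq hr hp).mp h')
      · exact hrq ((Nat.prime_dvd_prime_iff_eq hr hq).mp h')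
    have cZ : Nat.card ((⟨Subgroup.zpowers (xp * xq), hZb, hZt⟩ : V)).1 = p * q := hZcard
    rcases hvert ⟨Subgroup.zpowers (xp * xq), hZb, hZt⟩ with h | h | h
    · have : p * q = p := by rw [← cZ, h, cXp]
      have := Nat.eq_of_mul_eq_mul_left hp.pos (this.trans (mul_one p).symm)
      exact hq.one_lt.ne' this
    · have hpq' : p * q = q := by rw [← cZ, h, cXq]
      rw [mul_comm] at hpq'
      have := Nat.eq_of_mul_eq_mul_left hq.pos (hpq'.trans (mul_one q).symm)
      exact hp.one_lt.ne' this
    · have hpqr : p * q = r := by rw [← cZ, h, cXr]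
      exact hrp (((Nat.prime_dvd_prime_iff_eq hp hr).mp (hpqr ▸ dvd_mul_right p q))).symm
  · -- Case II : only the primes p and q divide |G|
    push_neg at hthird
    have hall : ∀ s : ℕ, s.Prime → s ∣ Nat.card G → s = p ∨ s = q := by
      intro s hs hsd
      by_cases h : s = p
      · exact Or.inl h
      · exact Or.inr (hthird s hs hsd h)
    obtain ⟨xp, hxp, hxpb, hxpt⟩ := mkX p hp hpd
    obtain ⟨xq, hxq, hxqb, hxqt⟩ := mkX q hq hqd
    set Xp : V := ⟨Subgroup.zpowers xp, hxpb, hxpt⟩ with hXpdef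
    set Xq : V := ⟨Subgroup.zpowers xq, hxqb, hxqt⟩ with hXqdef
    have cXp : Nat.card Xp.1 = p := by rw [hXpdef, Nat.card_zpowers, hxp]
    have cXq : Nat.card Xq.1 = q := by rw [hXqdef, Nat.card_zpowers, hxq]
    -- the key one-sided uniqueness statement, proved via Sylow counting
    have side : ∀ (t t' : ℕ), t.Prime → t'.Prime → t ≠ t' →
        t ∣ Nat.card G → t' ∣ Nat.card G →
        ∀ (X X' : V), Nat.card X.1 = t → Nat.card X'.1 = t' →
        ∀ W : Subgroup G, Nat.card W = t → W = X.1 := by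
      intro t t' ht ht' htt' htd ht'd X X' hX hX' W hW
      haveI : Fact t.Prime := ⟨ht⟩
      have hnd : ∀ (U : Subgroup G) (k : ℕ), Nat.card U = t ^ k → ¬ t' ∣ Nat.card U := by
        intro U k hU hd
        rw [hU] at hd
        exact htt' ((Nat.prime_dvd_prime_iff_eq ht' ht).mp (ht'.dvd_of_dvd_pow hd)).symm
      have hWb : W ≠ ⊥ := by
        intro h; rw [h, Subgroup.card_bot] at hW; exact ht.one_lt.ne' hW.symm
      have hWt : W ≠ ⊤ := by
        intro h
        have hdv : t' ∣ Nat.card W := by rw [h, Subgroup.card_top]; exact ht'd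
        exact hnd W 1 (by rw [hW, pow_one]) hdv
      by_contra hne
      have hWvX : (⟨W, hWb, hWt⟩ : V) ≠ X := fun h => hne (congrArg Subtype.val h)
      have hfact : (Nat.card G).factorization t ≠ 0 :=
        (Nat.Prime.factorization_pos_of_dvd ht Nat.card_pos.ne' htd).ne'
      obtain ⟨S⟩ : Nonempty (Sylow t G) := inferInstance
      have hScard : Nat.card S = t ^ (Nat.card G).factorization t := S.card_eq_multiplicity
      have hSb : (S : Subgroup G) ≠ ⊥ := by
        intro h; rw [h, Subgroup.card_bot] at hScard
        have hdvd : t ∣ 1 := by rw [hScard]; exact dvd_pow_self t hfact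
        exact ht.one_lt.ne' (Nat.eq_one_of_dvd_one hdvd)
      have hSt : (S : Subgroup G) ≠ ⊤ := by
        intro h
        have hdv : t' ∣ Nat.card (S : Subgroup G) := by
          rw [h, Subgroup.card_top]; exact ht'd
        exact hnd S.1 _ hScard hdv
      have hkey := pair t' ht' X' ⟨W, hWb, hWt⟩ X hX'
        (hnd W 1 (by rw [hW, pow_one])) (hnd X.1 1 (by rw [hX, pow_one])) hWvX
      have hSv := hkey ⟨S, hSb, hSt⟩ (hnd S.1 _ hScard)
      have hScard_t : Nat.card (S : Subgroup G) = t := by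
        rcases hSv with h | h
        · have h' : (S : Subgroup G) = W := congrArg Subtype.val h
          rw [h', hW]
        · have h' : (S : Subgroup G) = X.1 := congrArg Subtype.val h
          rw [h', hX]
      have hk1 : (Nat.card G).factorization t = 1 := by
        have hh : t ^ (Nat.card G).factorization t = t ^ 1 := by
          rw [← hScard, hScard_t, pow_one]
        exact Nat.pow_right_injective ht.two_le hh
      have hWS : Nat.card W = t ^ (Nat.card G).factorization t := by rw [hk1, pow_one, hW]
      have hXS : Nat.card X.1 = t ^ (Nat.card G).factorization t := by rw [hk1, pow_one, hX]
      have htwo : Nat.card (Sylow t G) = 2 := by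
        rw [Nat.card_eq_two_iff]
        refine ⟨Sylow.ofCard W hWS, Sylow.ofCard X.1 hXS, ?_, ?_⟩
        · intro h
          apply hne
          have h' := congrArg (fun P : Sylow t G => (P : Subgroup G)) h
          simpa using h'
        · apply Set.eq_univ_of_forall
          intro T
          have hTcard : Nat.card (T : Subgroup G) = t := by
            rw [T.card_eq_multiplicity, hk1, pow_one]
          have hTb : (T : Subgroup G) ≠ ⊥ := by
            intro h; rw [h, Subgroup.card_bot] at hTcard; exact ht.one_lt.ne' hTcard.symm
          have hTt : (T : Subgroup G) ≠ ⊤ := by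
            intro h
            have hdv : t' ∣ Nat.card (T : Subgroup G) := by
              rw [h, Subgroup.card_top]; exact ht'd
            exact hnd T.1 1 (by rw [hTcard, pow_one]) hdv
          rcases hkey ⟨T, hTb, hTt⟩ (hnd T.1 1 (by rw [hTcard, pow_one])) with h | h
          · left
            apply Sylow.ext
            rw [Sylow.coe_ofCard]
            exact congrArg Subtype.val h
          · right
            apply Sylow.ext
            rw [Sylow.coe_ofCard]
            exact congrArg Subtype.val h
      have hmod := card_sylow_modEq_one t G
      rw [htwo] at hmod
      have hdvd1 : (t : ℤ) ∣ ((1 : ℕ) : ℤ) - ((2 : ℕ) : ℤ) := hmod.dvd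
      have hdvd2 : (t : ℤ) ∣ ((1 : ℕ) : ℤ) := by
        have : ((1 : ℕ) : ℤ) - ((2 : ℕ) : ℤ) = -1 := by norm_num
        rw [this] at hdvd1
        exact (dvd_neg.mp hdvd1)
      have : t ∣ 1 := Int.ofNat_dvd.mp hdvd2
      exact ht.one_lt.ne' (Nat.eq_one_of_dvd_one this)
    have uq_p : ∀ W : Subgroup G, Nat.card W = p → W = Xp.1 :=
      side p q hp hq hpq hpd hqd Xp Xq cXp cXq
    have uq_q : ∀ W : Subgroup G, Nat.card W = q → W = Xq.1 :=
      side q p hq hp (Ne.symm hpq) hqd hpd Xq Xp cXq cXp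
    have np : Xp.1.Normal := normal_of_uniq Xp.1 p cXp uq_p
    have nq : Xq.1.Normal := normal_of_uniq Xq.1 q cXq uq_q
    have hdisj : Disjoint Xp.1 Xq.1 := by
      rw [disjoint_iff]
      have hd1 : Nat.card (Xp.1 ⊓ Xq.1 : Subgroup G) ∣ p :=
        cXp ▸ Subgroup.card_dvd_of_le inf_le_left
      have hd2 : Nat.card (Xp.1 ⊓ Xq.1 : Subgroup G) ∣ q :=
        cXq ▸ Subgroup.card_dvd_of_le inf_le_right
      have hd : Nat.card (Xp.1 ⊓ Xq.1 : Subgroup G) ∣ Nat.gcd p q := Nat.dvd_gcd hd1 hd2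
      rw [(Nat.coprime_primes hp hq).mpr hpq] at hd
      exact Subgroup.card_eq_one.mp (Nat.eq_one_of_dvd_one hd)
    have hcomm : Commute xp xq :=
      Subgroup.commute_of_normal_of_disjoint _ _ np nq hdisj xp xq
        (Subgroup.mem_zpowers xp) (Subgroup.mem_zpowers xq)
    have hord : orderOf (xp * xq) = p * q := by
      rw [hcomm.orderOf_mul_eq_mul_orderOf_of_coprime
        (by rw [hxp, hxq]; exact (Nat.coprime_primes hp hq).mpr hpq), hxp, hxq]
    have hZcard : Nat.card (Subgroup.zpowers (xp * xq)) = p * q := by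
      rw [Nat.card_zpowers, hord]
    have hZb : Subgroup.zpowers (xp * xq) ≠ ⊥ := by
      intro h; rw [h, Subgroup.card_bot] at hZcard
      have := hp.one_lt; have := hq.one_lt; nlinarith [hZcard.symm]
    by_cases hZtop : Subgroup.zpowers (xp * xq) = ⊤
    · -- |G| = p * q, so there are at most two vertices; contradiction with n ≥ 3
      have hcardG : Nat.card G = p * q := by
        rw [← Subgroup.card_top (G := G), ← hZtop, hZcard]
      have hverts : ∀ v : V, v = Xp ∨ v = Xq := by
        intro v
        have h1 : Nat.card v.1 ∣ p * q := hcardG ▸ card_dvd v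
        have h2 : Nat.card v.1 ≠ 1 := (card_pos v).ne'
        have h3 : Nat.card v.1 ≠ p * q := hcardG ▸ card_ne_top v
        rcases aux_dvd_pq hp hq h1 h2 h3 with h | h
        · exact Or.inl (Subtype.ext (uq_p v.1 h))
        · exact Or.inr (Subtype.ext (uq_q v.1 h))
      have hcardV : Nat.card V = m + 3 := by
        rw [Nat.card_congr f.toEquiv, Nat.card_eq_fintype_card, Fintype.card_fin]
      have hle : Nat.card V ≤ 2 := by
        have hsub : (Set.univ : Set V) ⊆ {Xp, Xq} := by
          intro v _
          rcases hverts v with rfl | rfl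
          · exact Set.mem_insert _ _
          · exact Set.mem_insert_of_mem _ rfl
        calc Nat.card V = (Set.univ : Set V).ncard := (Set.ncard_univ V).symm
          _ ≤ ({Xp, Xq} : Set V).ncard := Set.ncard_le_ncard hsub (Set.toFinite _)
          _ ≤ 2 := (Set.ncard_insert_le _ _).trans (by rw [Set.ncard_singleton])
      omega
    · -- the subgroup of order p*q is a vertex, contradiction
      obtain ⟨s, hs, hsd, hnd⟩ := avoid ⟨Subgroup.zpowers (xp * xq), hZb, hZtop⟩
      apply hnd
      show s ∣ Nat.card (Subgroup.zpowers (xp * xq))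
      rw [hZcard]
      rcases hall s hs hsd with rfl | rfl
      · exact dvd_mul_right s q
      · exact dvd_mul_left s p
end

section
/- Let G be a finite group whose order is neither 1 nor a prime, and suppose G has no proper subgroup H with π(H) = π(G). Then 𝒫(G) is connected and its diameter is at most 3 (the extended diameter of 𝒫(G) is ≤ 3). -/
open SimpleGraph

theorem coprimeGraph_connected_ediam_le_three {G : Type*} [Group G] [Finite G]
    (h1 : Nat.card G ≠ 1) (hp : ¬ (Nat.card G).Prime)
    (h : ¬ ∃ H : Subgroup G, H ≠ ⊤ ∧
        (Nat.card H).primeFactors = (Nat.card G).primeFactors) :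
    (coprimeGraph G).Connected ∧ (coprimeGraph G).ediam ≤ 3 := by
  push_neg at h
  have hG0 : Nat.card G ≠ 0 := Nat.card_pos.ne'
  -- for every prime of G there is a vertex whose prime set is exactly {p}
  have key : ∀ p ∈ (Nat.card G).primeFactors,
      ∃ V : {H : Subgroup G // H ≠ ⊥ ∧ H ≠ ⊤}, (Nat.card V.1).primeFactors = {p} := by
    intro p hpmem
    obtain ⟨hpp, hpdvd, -⟩ := Nat.mem_primeFactors.mp hpmem
    haveI : Fact p.Prime := ⟨hpp⟩
    obtain ⟨P⟩ : Nonempty (Sylow p G) := inferInstance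
    have hcard : Nat.card P = p ^ (Nat.card G).factorization p := P.card_eq_multiplicity
    have hk0 : (Nat.card G).factorization p ≠ 0 :=
      (hpp.factorization_pos_of_dvd hG0 hpdvd).ne'
    have hπ : (Nat.card (P : Subgroup G)).primeFactors = {p} := by
      rw [show Nat.card (P : Subgroup G) = Nat.card P from rfl, hcard,
        Nat.primeFactors_prime_pow hk0 hpp]
    have hbot : (P : Subgroup G) ≠ ⊥ := P.ne_bot_of_dvd_card hpdvd
    have htop : (P : Subgroup G) ≠ ⊤ := by
      intro htop
      have hGcard : (Nat.card G).primeFactors = {p} := by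
        rw [← Subgroup.card_top (G := G), ← htop, hπ]
      obtain ⟨K, hK⟩ := Sylow.exists_subgroup_card_pow_prime p
        (n := 1) (by rwa [pow_one])
      have hKtop : K ≠ ⊤ := by
        intro hKt
        rw [hKt, Subgroup.card_top, pow_one] at hK
        exact hp (hK ▸ hpp)
      exact h K hKtop (by rw [hK, pow_one, Nat.Prime.primeFactors hpp, hGcard])
    exact ⟨⟨(P : Subgroup G), hbot, htop⟩, hπ⟩
  -- every vertex misses some prime of G
  have miss : ∀ u : {H : Subgroup G // H ≠ ⊥ ∧ H ≠ ⊤},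
      ∃ p ∈ (Nat.card G).primeFactors, p ∉ (Nat.card u.1).primeFactors := by
    intro u
    have hsub : (Nat.card u.1).primeFactors ⊆ (Nat.card G).primeFactors :=
      Nat.primeFactors_mono u.1.card_subgroup_dvd_card hG0
    have hne : (Nat.card u.1).primeFactors ≠ (Nat.card G).primeFactors := h u.1 u.2.2
    obtain ⟨p, hp1, hp2⟩ := Finset.exists_of_ssubset (hsub.ssubset_of_ne hne)
    exact ⟨p, hp1, hp2⟩
  -- vertices are nontrivial subgroups: card ≠ 0 and prime factors nonempty? we need card ≠ 0
  have cne : ∀ u : {H : Subgroup G // H ≠ ⊥ ∧ H ≠ ⊤}, Nat.card u.1 ≠ 0 :=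
    fun u => Nat.card_pos.ne'
  -- adjacency criterion
  have adj : ∀ (u v : {H : Subgroup G // H ≠ ⊥ ∧ H ≠ ⊤}) (p : ℕ),
      (Nat.card v.1).primeFactors = {p} → p ∉ (Nat.card u.1).primeFactors →
      (coprimeGraph G).Adj u v := by
    intro u v p hv hu
    have hcop : Nat.Coprime (Nat.card u.1) (Nat.card v.1) := by
      rw [← Nat.disjoint_primeFactors (cne u) (cne v), hv]
      simpa using hu
    refine ⟨?_, hcop⟩
    intro huv
    apply hu
    rw [huv, hv]; exact Finset.mem_singleton_self p
  -- distance at most 3 between any two vertices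
  have walk : ∀ u v : {H : Subgroup G // H ≠ ⊥ ∧ H ≠ ⊤},
      ∃ w : (coprimeGraph G).Walk u v, w.length ≤ 3 := by
    intro u v
    obtain ⟨p, hpG, hpu⟩ := miss u
    obtain ⟨q, hqG, hqv⟩ := miss v
    obtain ⟨P, hP⟩ := key p hpG
    obtain ⟨Q, hQ⟩ := key q hqG
    have auP : (coprimeGraph G).Adj u P := adj u P p hP hpu
    have aQv : (coprimeGraph G).Adj Q v := ((coprimeGraph G).adj_symm (adj v Q q hQ hqv))
    by_cases hpq : p = q
    · -- u - Q - v (since p = q, Q misses u too)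
      have auQ : (coprimeGraph G).Adj u Q := adj u Q q hQ (hpq ▸ hpu)
      exact ⟨Walk.cons auQ (Walk.cons aQv Walk.nil), by simp⟩
    · have aPQ : (coprimeGraph G).Adj P Q := by
        refine ⟨?_, ?_⟩
        · intro hPQ; apply hpq
          have := hPQ ▸ hP
          rw [hQ] at this
          exact (Finset.singleton_inj.mp this.symm)
        · rw [← Nat.disjoint_primeFactors (cne P) (cne Q), hP, hQ]
          exact Finset.disjoint_singleton.mpr (fun h => hpq h)
      exact ⟨Walk.cons auP (Walk.cons aPQ (Walk.cons aQv Walk.nil)), by simp⟩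
  have hnonempty : Nonempty {H : Subgroup G // H ≠ ⊥ ∧ H ≠ ⊤} := by
    obtain ⟨p, hpp, hpdvd⟩ := Nat.exists_prime_and_dvd h1
    obtain ⟨V, -⟩ := key p (Nat.mem_primeFactors.mpr ⟨hpp, hpdvd, hG0⟩)
    exact ⟨V⟩
  constructor
  · refine SimpleGraph.Connected.mk ?_
    intro u v
    obtain ⟨w, -⟩ := walk u v
    exact ⟨w⟩
  · apply SimpleGraph.ediam_le_of_edist_le
    intro u v
    obtain ⟨w, hw⟩ := walk u v
    calc (coprimeGraph G).edist u v ≤ w.length := SimpleGraph.Walk.edist_le w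
      _ ≤ 3 := by exact_mod_cast hw
end

section
/- For every finite group G, the girth of the coprime graph 𝒫(G) is 3, 4 or ∞ (i.e. SimpleGraph.girth 𝒫(G) ∈ {3, 4, ⊤} as an element of ℕ∞). -/
open SimpleGraph

section Aux

variable {α : Type*} {G : SimpleGraph α}

lemma aux_egirth_le_length {a : α} {w : G.Walk a a} (hw : w.IsCycle) :
    G.egirth ≤ w.length := by
  rw [SimpleGraph.egirth]
  exact iInf_le_of_le a (iInf_le_of_le w (iInf_le _ hw))

lemma aux_getVert_eq_getElem {u v : α} (w : G.Walk u v) (i : ℕ)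
    (h : i < w.support.length) : w.getVert i = w.support[i] := by
  induction w generalizing i with
  | nil =>
    simp only [SimpleGraph.Walk.support_nil, List.length_singleton, Nat.lt_one_iff] at h
    subst h; rfl
  | cons ha p ih =>
    cases i with
    | zero => simp [SimpleGraph.Walk.getVert_zero]
    | succ n =>
      simp only [SimpleGraph.Walk.support_cons, List.length_cons] at h
      rw [SimpleGraph.Walk.getVert_cons_succ, ih n (by omega)]
      simp

lemma aux_cycle_getVert_ne {a : α} {w : G.Walk a a} (hw : w.IsCycle) {i j : ℕ}
    (hi : i < w.length) (hj : j < w.length) (hij : i ≠ j) :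
    w.getVert i ≠ w.getVert j := by
  have hnd : w.support.tail.Nodup := hw.2
  have hlen : w.support.length = w.length + 1 := SimpleGraph.Walk.length_support w
  have htlen : w.support.tail.length = w.length := by simp [hlen]
  have hval : ∀ k (hk1 : 1 ≤ k) (hk : k < w.length),
      w.getVert k = w.support.tail[k-1]'(by omega) := by
    intro k hk1 hk
    rw [aux_getVert_eq_getElem w k (by omega), List.getElem_tail]
    congr 1
    omega
  have hval0 : w.getVert 0 = w.support.tail[w.length - 1]'(by omega) := by
    have h1 : w.getVert 0 = w.getVert w.length := by
      rw [SimpleGraph.Walk.getVert_zero, SimpleGraph.Walk.getVert_length]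
    rw [h1, aux_getVert_eq_getElem w w.length (by omega), List.getElem_tail]
    congr 1
    omega
  intro heq
  by_cases hi0 : i = 0 <;> by_cases hj0 : j = 0
  · exact hij (hi0.trans hj0.symm)
  · subst hi0
    rw [hval0, hval j (by omega) hj] at heq
    have := hnd.getElem_inj_iff.mp heq
    omega
  · subst hj0
    rw [hval0, hval i (by omega) hi] at heq
    have := hnd.getElem_inj_iff.mp heq
    omega
  · rw [hval i (by omega) hi, hval j (by omega) hj] at heq
    have := hnd.getElem_inj_iff.mp heq
    omega

lemma aux_triangle_isCycle {x y z : α} (hxy : G.Adj x y) (hyz : G.Adj y z)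
    (hzx : G.Adj z x) (hxz : x ≠ z) :
    (SimpleGraph.Walk.cons hxy (SimpleGraph.Walk.cons hyz (SimpleGraph.Walk.cons hzx
      SimpleGraph.Walk.nil))).IsCycle := by
  have n1 := hxy.ne; have n2 := hyz.ne; have n3 := hzx.ne
  have n1' := n1.symm; have n2' := n2.symm; have n3' := n3.symm
  have n4' := hxz.symm
  rw [SimpleGraph.Walk.isCycle_def, SimpleGraph.Walk.isTrail_def]
  refine ⟨?_, by simp, ?_⟩ <;>
    simp [Sym2.eq_iff] <;> tauto

lemma aux_square_isCycle {x y z t : α} (hxy : G.Adj x y) (hyz : G.Adj y z)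
    (hzt : G.Adj z t) (htx : G.Adj t x) (hxz : x ≠ z) (hyt : y ≠ t) :
    (SimpleGraph.Walk.cons hxy (SimpleGraph.Walk.cons hyz (SimpleGraph.Walk.cons hzt
      (SimpleGraph.Walk.cons htx SimpleGraph.Walk.nil)))).IsCycle := by
  have n1 := hxy.ne; have n2 := hyz.ne; have n3 := hzt.ne; have n4 := htx.ne
  have n1' := n1.symm; have n2' := n2.symm; have n3' := n3.symm; have n4' := n4.symm
  have n5' := hxz.symm; have n6' := hyt.symm
  rw [SimpleGraph.Walk.isCycle_def, SimpleGraph.Walk.isTrail_def]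
  refine ⟨?_, by simp, ?_⟩ <;>
    simp [Sym2.eq_iff] <;> tauto

end Aux

section Vertex

variable {G : Type*} [Group G] [Finite G]

/-- Given two distinct primes dividing the order of `G`, there is a vertex of the coprime
graph whose order is the first prime. -/
lemma aux_exists_vertex (p q : ℕ) (hp : p.Prime) (hq : q.Prime) (hpq : p ≠ q)
    (hpd : p ∣ Nat.card G) (hqd : q ∣ Nat.card G) :
    ∃ V : {H : Subgroup G // H ≠ ⊥ ∧ H ≠ ⊤}, Nat.card V.1 = p := by
  haveI : Fact p.Prime := ⟨hp⟩
  obtain ⟨x, hx⟩ := exists_prime_orderOf_dvd_card' (G := G) p hpd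
  have hcard : Nat.card (Subgroup.zpowers x) = p := by
    rw [Nat.card_zpowers, hx]
  refine ⟨⟨Subgroup.zpowers x, ?_, ?_⟩, hcard⟩
  · intro h
    rw [h, Subgroup.card_bot] at hcard
    exact hp.one_lt.ne' hcard.symm
  · intro h
    rw [h, Subgroup.card_top] at hcard
    rw [hcard] at hqd
    exact hpq ((Nat.prime_dvd_prime_iff_eq hq hp).mp hqd).symm

end Vertex

theorem coprimeGraph_egirth {G : Type*} [Group G] [Finite G] :
    (coprimeGraph G).egirth = 3 ∨ (coprimeGraph G).egirth = 4 ∨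
      (coprimeGraph G).egirth = ⊤ := by
  by_cases htop : (coprimeGraph G).egirth = ⊤
  · exact Or.inr (Or.inr htop)
  -- there is a cycle realizing the girth
  have hnac : ¬ (coprimeGraph G).IsAcyclic := fun h => htop (egirth_eq_top.mpr h)
  obtain ⟨a, w, hw, hlen⟩ := exists_egirth_eq_length.mpr hnac
  by_cases h3 : (coprimeGraph G).egirth = 3
  · exact Or.inl h3
  by_cases h4 : (coprimeGraph G).egirth = 4
  · exact Or.inr (Or.inl h4)
  exfalso
  -- so the girth is at least 5
  have h3le : 3 ≤ w.length := hw.three_le_length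
  have h5 : 5 ≤ w.length := by
    rcases Nat.lt_or_ge w.length 5 with h | h
    · interval_cases hl : w.length
      · exact absurd (by rw [hlen]; rfl) h3
      · exact absurd (by rw [hlen]; rfl) h4
    · exact h
  set v0 := w.getVert 0 with hv0
  set v1 := w.getVert 1 with hv1
  set v2 := w.getVert 2 with hv2
  set v3 := w.getVert 3 with hv3
  have a01 : (coprimeGraph G).Adj v0 v1 := w.adj_getVert_succ (by omega)
  have a12 : (coprimeGraph G).Adj v1 v2 := w.adj_getVert_succ (by omega)
  have a23 : (coprimeGraph G).Adj v2 v3 := w.adj_getVert_succ (by omega)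
  have ne02 : v0 ≠ v2 := aux_cycle_getVert_ne hw (by omega) (by omega) (by omega)
  have ne13 : v1 ≠ v3 := aux_cycle_getVert_ne hw (by omega) (by omega) (by omega)
  have ne03 : v0 ≠ v3 := aux_cycle_getVert_ne hw (by omega) (by omega) (by omega)
  -- a cycle of length ≤ 4 would contradict girth ≥ 5
  have hshort : ∀ {x : {H : Subgroup G // H ≠ ⊥ ∧ H ≠ ⊤}} {c : (coprimeGraph G).Walk x x},
      c.IsCycle → c.length < w.length → False := by
    intro x c hc hcl
    have := aux_egirth_le_length hc
    rw [hlen] at this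
    have := (Nat.cast_le (α := ℕ∞)).mp this
    omega
  -- helper to build 3-cycles
  have tri : ∀ {x y z : {H : Subgroup G // H ≠ ⊥ ∧ H ≠ ⊤}},
      (coprimeGraph G).Adj x y → (coprimeGraph G).Adj y z → (coprimeGraph G).Adj z x →
      False := by
    intro x y z hxy hyz hzx
    exact hshort (aux_triangle_isCycle hxy hyz hzx hzx.ne') (by simp; omega)
  -- v0 and v2 are not adjacent (else a triangle exists)
  have na02 : ¬ (coprimeGraph G).Adj v0 v2 := fun h => tri a01 a12 h.symm
  -- v0 and v3 are not adjacent (else a 4-cycle exists)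
  have na03 : ¬ (coprimeGraph G).Adj v0 v3 := by
    intro h
    exact hshort (aux_square_isCycle a01 a12 a23 h.symm ne02 ne13) (by simp; omega)
  -- extract common primes
  have cardpos : ∀ V : {H : Subgroup G // H ≠ ⊥ ∧ H ≠ ⊤}, 0 < Nat.card V.1 :=
    fun V => Nat.card_pos
  have getprime : ∀ {x y : {H : Subgroup G // H ≠ ⊥ ∧ H ≠ ⊤}}, x ≠ y →
      ¬ (coprimeGraph G).Adj x y →
      ∃ p, p.Prime ∧ p ∣ Nat.card x.1 ∧ p ∣ Nat.card y.1 := by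
    intro x y hne hna
    have hnc : ¬ Nat.Coprime (Nat.card x.1) (Nat.card y.1) := fun h => hna ⟨hne, h⟩
    obtain ⟨p, hp, hpd⟩ := Nat.exists_prime_and_dvd hnc
    exact ⟨p, hp, (Nat.dvd_gcd_iff.mp hpd).1, (Nat.dvd_gcd_iff.mp hpd).2⟩
  have na13 : ¬ (coprimeGraph G).Adj v1 v3 := fun h => tri a12 a23 h.symm
  obtain ⟨p, hp, hp0, hp2⟩ := getprime ne02 na02
  obtain ⟨q, hq, hq1, hq3⟩ := getprime ne13 na13
  obtain ⟨s, hs, hs0, hs3⟩ := getprime ne03 na03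
  -- the three primes are pairwise distinct
  have nodup2 : ∀ {m n u : ℕ}, Nat.Coprime m n → u.Prime → u ∣ m → u ∣ n → False := by
    intro m n u hco hu h1 h2
    have : u ∣ 1 := hco ▸ Nat.dvd_gcd h1 h2
    exact hu.one_lt.ne' (Nat.dvd_one.mp this)
  have hpq : p ≠ q := fun h => nodup2 a12.2 hq (h ▸ hq1) (h ▸ hp2)
  have hqs : q ≠ s := fun h => nodup2 a01.2 hs (h ▸ hs0) (h ▸ hq1)
  have hps : p ≠ s := fun h => nodup2 a23.2 hp hp2 (h ▸ hs3)
  -- the primes divide the order of G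
  have hpG : p ∣ Nat.card G := hp2.trans (Subgroup.card_subgroup_dvd_card v2.1)
  have hqG : q ∣ Nat.card G := hq1.trans (Subgroup.card_subgroup_dvd_card v1.1)
  have hsG : s ∣ Nat.card G := hs0.trans (Subgroup.card_subgroup_dvd_card v0.1)
  -- build a triangle of subgroups of prime orders p, q, s
  obtain ⟨P, hP⟩ := aux_exists_vertex p q hp hq hpq hpG hqG
  obtain ⟨Q, hQ⟩ := aux_exists_vertex q s hq hs hqs hqG hsG
  obtain ⟨R, hR⟩ := aux_exists_vertex s p hs hp (Ne.symm hps) hsG hpG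
  have adj : ∀ {X Y : {H : Subgroup G // H ≠ ⊥ ∧ H ≠ ⊤}} {u v : ℕ}, u.Prime → v.Prime →
      u ≠ v → Nat.card X.1 = u → Nat.card Y.1 = v → (coprimeGraph G).Adj X Y := by
    intro X Y u v hu hv huv hX hY
    refine ⟨fun h => huv ?_, ?_⟩
    · rw [← hX, ← hY, h]
    · rw [hX, hY]
      exact (Nat.coprime_primes hu hv).mpr huv
  exact tri (adj hp hq hpq hP hQ) (adj hq hs hqs hQ hR) (adj hs hp (Ne.symm hps) hR hP)
end

section
/- Let n > 1 be a natural number and let H be a nontrivial proper additive subgroup of ℤ/nℤ. Then the degree of H as a vertex of the coprime graph 𝒫(ℤ/nℤ) equals the number of divisors m of n with gcd(m, |H|) = 1, minus 1. Equivalently, writing n = p₁^{α₁}·p₂^{α₂}⋯p_k^{α_k} with distinct primes p_i, the degree of H equals (∏_{p_j ∤ |H|} (α_j + 1)) − 1. -/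
open SimpleGraph

/-- The coprime graph of subgroups of an additive group `G`: vertices are the proper
nontrivial additive subgroups of `G`, and two distinct vertices are adjacent iff their
orders are coprime. -/
def coprimeGraphAdd (G : Type*) [AddGroup G] :
    SimpleGraph {H : AddSubgroup G // H ≠ ⊥ ∧ H ≠ ⊤} where
  Adj H K := H ≠ K ∧ Nat.Coprime (Nat.card H.1) (Nat.card K.1)
  symm := ⟨fun _ _ h => ⟨h.1.symm, h.2.symm⟩⟩
  loopless := ⟨fun _ h => h.1 rfl⟩

private lemma card_zmult (n m : ℕ) (hn : n ≠ 0) (hm : m ∣ n) :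
    Nat.card (AddSubgroup.zmultiples ((n / m : ℕ) : ZMod n)) = m := by
  rw [Nat.card_zmultiples, ZMod.addOrderOf_coe _ hn,
    Nat.gcd_eq_right (Nat.div_dvd_of_dvd hm), Nat.div_div_self hm hn]

private lemma subgroup_eq_zmult (n : ℕ) (hn : n ≠ 0) (H : AddSubgroup (ZMod n)) :
    H = AddSubgroup.zmultiples ((n / Nat.card H : ℕ) : ZMod n) := by
  haveI : NeZero n := ⟨hn⟩
  set m := Nat.card H with hm
  have hmdvd : m ∣ n := by
    simpa [Nat.card_zmod] using AddSubgroup.card_addSubgroup_dvd_card H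
  have hm0 : m ≠ 0 := Nat.card_pos.ne'
  have hle : H ≤ AddSubgroup.zmultiples ((n / m : ℕ) : ZMod n) := by
    intro x hx
    have hord : addOrderOf x ∣ m := H.addOrderOf_dvd_natCard hx
    have hsmul : m • x = 0 := addOrderOf_dvd_iff_nsmul_eq_zero.mp hord
    have hxval : ((x.val : ℕ) : ZMod n) = x := ZMod.natCast_rightInverse x
    have : ((m * x.val : ℕ) : ZMod n) = 0 := by
      push_cast
      rw [hxval, ← nsmul_eq_mul, hsmul]
    have hdvd : n ∣ m * x.val := (ZMod.natCast_eq_zero_iff _ _).mp this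
    obtain ⟨k, hk⟩ := hdvd
    have hval : x.val = (n / m) * k := by
      have hn' : n = m * (n / m) := (Nat.mul_div_cancel' hmdvd).symm
      refine Nat.eq_of_mul_eq_mul_left (Nat.pos_of_ne_zero hm0) ?_
      calc m * x.val = n * k := hk
        _ = m * ((n / m) * k) := by conv_lhs => rw [hn', mul_assoc]
    have : x = k • ((n / m : ℕ) : ZMod n) := by
      rw [← hxval, hval]
      push_cast
      rw [nsmul_eq_mul]
      ring
    rw [this]
    exact AddSubgroup.nsmul_mem _ (AddSubgroup.mem_zmultiples _) k
  exact AddSubgroup.eq_of_le_of_card_ge hle (by rw [card_zmult n m hn hmdvd])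

theorem coprimeGraph_zmod_degree (n : ℕ) (hn : 1 < n) (H : AddSubgroup (ZMod n))
    (hbot : H ≠ ⊥) (htop : H ≠ ⊤) :
    ((coprimeGraphAdd (ZMod n)).neighborSet ⟨H, hbot, htop⟩).ncard =
      (n.divisors.filter fun m => Nat.gcd m (Nat.card H) = 1).card - 1 := by
  have hn0 : n ≠ 0 := by omega
  haveI : NeZero n := ⟨hn0⟩
  set c := Nat.card H with hc
  have hcard_zmod : Nat.card (ZMod n) = n := Nat.card_zmod n
  have hcdvd : c ∣ n := by
    simpa [Nat.card_zmod] using AddSubgroup.card_addSubgroup_dvd_card H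
  have hc1 : c ≠ 1 := fun h => hbot ((AddSubgroup.eq_bot_iff_card H).mpr h)
  set T := (n.divisors.filter fun m => Nat.gcd m c = 1) with hT
  have h1T : 1 ∈ T := by
    simp [hT, Nat.mem_divisors, hn0]
  set s := (coprimeGraphAdd (ZMod n)).neighborSet ⟨H, hbot, htop⟩ with hs
  have hmem : ∀ K, K ∈ s ↔ (⟨H, hbot, htop⟩ : {K : AddSubgroup (ZMod n) // K ≠ ⊥ ∧ K ≠ ⊤}) ≠ K
      ∧ Nat.Coprime c (Nat.card K.1) := fun K => Iff.rfl
  have hinj : Set.InjOn (fun K : {K : AddSubgroup (ZMod n) // K ≠ ⊥ ∧ K ≠ ⊤} =>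
      Nat.card K.1) s := by
    intro K1 _ K2 _ h
    have h' : Nat.card K1.1 = Nat.card K2.1 := h
    apply Subtype.ext
    rw [subgroup_eq_zmult n hn0 K1.1, subgroup_eq_zmult n hn0 K2.1, h']
  have key : (fun K : {K : AddSubgroup (ZMod n) // K ≠ ⊥ ∧ K ≠ ⊤} => Nat.card K.1) '' s
      = ↑(T.erase 1) := by
    ext m
    simp only [Set.mem_image, Finset.coe_erase, Set.mem_diff, Finset.mem_coe, hT,
      Finset.mem_filter, Nat.mem_divisors, Set.mem_singleton_iff]
    constructor
    · rintro ⟨K, hK, rfl⟩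
      obtain ⟨hne, hcop⟩ := (hmem K).mp hK
      have hKdvd : Nat.card K.1 ∣ n := by
        simpa [Nat.card_zmod] using AddSubgroup.card_addSubgroup_dvd_card K.1
      refine ⟨⟨⟨hKdvd, hn0⟩, hcop.symm⟩, ?_⟩
      exact fun h => K.2.1 ((AddSubgroup.eq_bot_iff_card K.1).mpr h)
    · rintro ⟨⟨⟨hmdvd, -⟩, hgcd⟩, hm1⟩
      have hcardK := card_zmult n m hn0 hmdvd
      refine ⟨⟨AddSubgroup.zmultiples ((n / m : ℕ) : ZMod n), ?_, ?_⟩, ?_, hcardK⟩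
      · exact fun h => hm1 (by rw [← hcardK, h, ← AddSubgroup.eq_bot_iff_card])
      · intro h
        rw [h, AddSubgroup.card_top, hcard_zmod] at hcardK
        have hcdm : c ∣ Nat.gcd m c := Nat.dvd_gcd (hcardK ▸ hcdvd) dvd_rfl
        rw [hgcd] at hcdm
        exact hc1 (Nat.dvd_one.mp hcdm)
      · apply (hmem _).mpr
        refine ⟨?_, ?_⟩
        · intro h
          have hH : H = AddSubgroup.zmultiples ((n / m : ℕ) : ZMod n) :=
            congrArg Subtype.val h
          have hcm : c = m := by rw [hc, hH, hcardK]
          rw [← hcm, Nat.gcd_self] at hgcd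
          exact hc1 hgcd
        · show Nat.Coprime c (Nat.card (AddSubgroup.zmultiples ((n / m : ℕ) : ZMod n)))
          rw [hcardK]
          exact Nat.coprime_comm.mp hgcd
  rw [← Set.ncard_image_of_injOn hinj, key, Set.ncard_coe_finset,
    Finset.card_erase_of_mem h1T]
end

section
/- For every finite simple graph Γ (on a finite vertex type), there exists a natural number m such that Γ is isomorphic to an induced subgraph of 𝒫(ℤ/mℤ); that is, there is a graph embedding (an injective map preserving both adjacency and non-adjacency) of Γ into the coprime graph of subgroups of the cyclic group ℤ/mℤ. -/
open SimpleGraph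

lemma card_zmultiples_div {m n : ℕ} (hm : m ≠ 0) (hn : n ∣ m) :
    Nat.card (AddSubgroup.zmultiples ((m / n : ℕ) : ZMod m)) = n := by
  rw [Nat.card_zmultiples, ZMod.addOrderOf_coe _ hm,
    Nat.gcd_eq_right (Nat.div_dvd_of_dvd hn), Nat.div_div_self hn hm]

theorem exists_embedding_coprimeGraph_zmod {V : Type*} [Fintype V]
    (Γ : SimpleGraph V) :
    ∃ m : ℕ, Nonempty (Γ ↪g coprimeGraphAdd (ZMod m)) := by
  classical
  set k := Fintype.card V with hk
  set P : ℕ → ℕ := Nat.nth Nat.Prime with hPdef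
  have hPprime : ∀ i, Nat.Prime (P i) := fun i => Nat.prime_nth_prime i
  have hPinj : Function.Injective P := Nat.nth_injective Nat.infinite_setOf_prime
  set ι : V → ℕ := fun v => (Fintype.equivFin V v : ℕ) with hι
  have hιlt : ∀ v, ι v < k := fun v => (Fintype.equivFin V v).isLt
  have hιinj : Function.Injective ι := fun u v h =>
    (Fintype.equivFin V).injective (Fin.ext h)
  set κ : Sym2 V → ℕ := fun s => k + (Fintype.equivFin (Sym2 V) s : ℕ) with hκ
  have hκinj : Function.Injective κ := fun s t h =>
    (Fintype.equivFin (Sym2 V)).injective (Fin.ext (by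
      simp only [hκ] at h; omega))
  have hικ : ∀ v s, ι v ≠ κ s := fun v s h => by
    have := hιlt v; simp only [hκ] at h; omega
  set S : V → Finset V := fun v => Finset.univ.filter (fun w => w ≠ v ∧ ¬Γ.Adj v w)
    with hS
  set F : V → Finset ℕ := fun v => insert (ι v) ((S v).image (fun w => κ s(v, w)))
    with hF
  have hmemF : ∀ i v, i ∈ F v ↔ i = ι v ∨ ∃ w, (w ≠ v ∧ ¬Γ.Adj v w) ∧ i = κ s(v, w) := by
    intro i v
    simp [hF, hS, eq_comm]
  set n : V → ℕ := fun v => ∏ i ∈ F v, P i with hn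
  have hnpos : ∀ v, 0 < n v := fun v =>
    Finset.prod_pos fun i _ => (hPprime i).pos
  have hdvd_iff : ∀ i v, P i ∣ n v ↔ i ∈ F v := by
    intro i v
    constructor
    · intro h
      obtain ⟨j, hj, hd⟩ := ((hPprime i).prime.dvd_finset_prod_iff _).mp h
      rwa [hPinj ((Nat.prime_dvd_prime_iff_eq (hPprime i) (hPprime j)).mp hd)]
    · intro h; exact Finset.dvd_prod_of_mem _ h
  have hn1 : ∀ v, 1 < n v := by
    intro v
    have h : P (ι v) ∣ n v := (hdvd_iff _ _).mpr (by simp [hF])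
    calc 1 < P (ι v) := (hPprime _).one_lt
    _ ≤ n v := Nat.le_of_dvd (hnpos v) h
  -- key coprimality facts
  have hcop : ∀ u v, Γ.Adj u v → Nat.Coprime (n u) (n v) := by
    intro u v huv
    apply Nat.Coprime.prod_left
    intro i hi
    apply Nat.Coprime.prod_right
    intro j hj
    rw [Nat.coprime_primes (hPprime i) (hPprime j)]
    intro hPij
    obtain rfl : i = j := hPinj hPij
    -- i ∈ F u and i ∈ F v, derive contradiction
    rw [hmemF] at hi hj
    have hne : u ≠ v := huv.ne
    rcases hi with hi | ⟨w, ⟨hw1, hw2⟩, hi⟩ <;> rcases hj with hj | ⟨w', ⟨hw1', hw2'⟩, hj⟩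
    · exact hne (hιinj (hi ▸ hj))
    · exact hικ u _ (hi ▸ hj)
    · exact hικ v _ (hj ▸ hi)
    · have : s(u, w) = s(v, w') := hκinj (hi ▸ hj)
      rw [Sym2.eq_iff] at this
      rcases this with ⟨h1, h2⟩ | ⟨h1, h2⟩
      · exact hne h1
      · exact hw2 (h2 ▸ huv)
  have hncop : ∀ u v, u ≠ v → ¬Γ.Adj u v → ¬Nat.Coprime (n u) (n v) := by
    intro u v hne hnadj hc
    have h1 : P (κ s(u, v)) ∣ n u := by
      rw [hdvd_iff, hmemF]
      exact Or.inr ⟨v, ⟨hne.symm, hnadj⟩, rfl⟩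
    have h2 : P (κ s(u, v)) ∣ n v := by
      rw [hdvd_iff, hmemF]
      refine Or.inr ⟨u, ⟨hne, fun h => hnadj h.symm⟩, ?_⟩
      rw [Sym2.eq_swap]
    have := Nat.dvd_one.mp (hc ▸ Nat.dvd_gcd h1 h2)
    exact (hPprime _).one_lt.ne' this
  have hninj : Function.Injective n := by
    intro u v h
    by_contra hne
    have h1 : P (ι u) ∣ n v := h ▸ (hdvd_iff _ _).mpr (by simp [hF])
    rw [hdvd_iff, hmemF] at h1
    rcases h1 with h1 | ⟨w, _, h1⟩
    · exact hne (hιinj h1)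
    · exact hικ u _ h1
  -- the modulus
  set m : ℕ := 2 * ∏ v, n v with hm
  have hm0 : m ≠ 0 := by
    have : 0 < ∏ v, n v := Finset.prod_pos fun v _ => hnpos v
    positivity
  have hndvd : ∀ v, n v ∣ m := fun v =>
    Dvd.dvd.mul_left (Finset.dvd_prod_of_mem _ (Finset.mem_univ v)) 2
  have hnlt : ∀ v, n v < m := by
    intro v
    have h1 : n v ≤ ∏ w, n w := Nat.le_of_dvd (Finset.prod_pos fun w _ => hnpos w)
      (Finset.dvd_prod_of_mem _ (Finset.mem_univ v))
    have := hnpos v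
    omega
  haveI : NeZero m := ⟨hm0⟩
  -- the subgroups
  set H : V → AddSubgroup (ZMod m) :=
    fun v => AddSubgroup.zmultiples ((m / n v : ℕ) : ZMod m) with hH
  have hcard : ∀ v, Nat.card (H v) = n v := fun v =>
    card_zmultiples_div hm0 (hndvd v)
  have hbot : ∀ v, H v ≠ ⊥ := by
    intro v hv
    have h := hcard v
    rw [hv, AddSubgroup.card_bot] at h
    have := hn1 v
    omega
  have htop : ∀ v, H v ≠ ⊤ := by
    intro v hv
    have h := hcard v
    rw [hv, AddSubgroup.card_top, Nat.card_zmod] at h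
    have := hnlt v
    omega
  set f : V → {K : AddSubgroup (ZMod m) // K ≠ ⊥ ∧ K ≠ ⊤} :=
    fun v => ⟨H v, hbot v, htop v⟩ with hf
  have hfinj : Function.Injective f := by
    intro u v h
    apply hninj
    rw [← hcard u, ← hcard v]
    simp only [hf, Subtype.mk.injEq] at h
    rw [h]
  refine ⟨m, ⟨⟨⟨f, hfinj⟩, ?_⟩⟩⟩
  intro u v
  show (f u ≠ f v ∧ Nat.Coprime (Nat.card (f u).1) (Nat.card (f v).1)) ↔ Γ.Adj u v
  simp only [hf]
  rw [hcard, hcard]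
  constructor
  · rintro ⟨hne, hc⟩
    have hne' : u ≠ v := fun h => hne (by rw [h])
    by_contra hadj
    exact hncop u v hne' hadj hc
  · intro hadj
    refine ⟨?_, hcop u v hadj⟩
    intro h
    exact hadj.ne (hfinj h)
end

section
/- If G is a finite group whose order has at least five distinct prime divisors, then the coprime graph 𝒫(G) contains the complete graph K₅: there exist five distinct vertices of 𝒫(G) that are pairwise adjacent (a clique of size 5). -/
open SimpleGraph

theorem coprimeGraph_contains_K5 {G : Type*} [Group G] [Finite G]
    (h : 5 ≤ (Nat.card G).primeFactors.card) :
    ∃ s : Finset {H : Subgroup G // H ≠ ⊥ ∧ H ≠ ⊤}, (coprimeGraph G).IsNClique 5 s := by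
  classical
  have key : ∀ p ∈ (Nat.card G).primeFactors,
      ∃ H : {H : Subgroup G // H ≠ ⊥ ∧ H ≠ ⊤}, Nat.card H.1 = p := by
    intro p hp
    have hp' := Nat.prime_of_mem_primeFactors hp
    have hdvd := Nat.dvd_of_mem_primeFactors hp
    haveI := Fact.mk hp'
    obtain ⟨g, hg⟩ := exists_prime_orderOf_dvd_card' p hdvd
    have hcard : Nat.card (Subgroup.zpowers g) = p := by
      rw [Nat.card_zpowers, hg]
    refine ⟨⟨Subgroup.zpowers g, ?_, ?_⟩, hcard⟩
    · intro hbot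
      rw [hbot] at hcard
      simp at hcard
      exact hp'.ne_one hcard.symm
    · intro htop
      rw [htop] at hcard
      rw [Subgroup.card_top] at hcard
      rw [hcard] at h
      rw [hp'.primeFactors] at h
      simp at h
  obtain ⟨t, hts, htc⟩ := Finset.exists_subset_card_eq h
  let f : {p // p ∈ t} → {H : Subgroup G // H ≠ ⊥ ∧ H ≠ ⊤} :=
    fun p => (key p.1 (hts p.2)).choose
  have hf : ∀ p : {p // p ∈ t}, Nat.card (f p).1 = p.1 :=
    fun p => (key p.1 (hts p.2)).choose_spec
  have hfinj : Function.Injective f := by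
    intro a b hab
    have : (a : ℕ) = b := by rw [← hf a, ← hf b, hab]
    exact Subtype.ext this
  refine ⟨t.attach.image f, ?_, ?_⟩
  · intro a ha b hb hab
    simp only [Finset.coe_image, Set.mem_image, Finset.mem_coe] at ha hb
    obtain ⟨p, _, rfl⟩ := ha
    obtain ⟨q, _, rfl⟩ := hb
    refine ⟨hab, ?_⟩
    rw [hf p, hf q]
    have hpq : p.1 ≠ q.1 := by
      intro hh
      exact hab (congrArg f (Subtype.ext hh))
    exact (Nat.coprime_primes (Nat.prime_of_mem_primeFactors (hts p.2))
      (Nat.prime_of_mem_primeFactors (hts q.2))).mpr hpq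
  · rw [Finset.card_image_of_injective _ hfinj, Finset.card_attach, htc]
end
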